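/- arXiv:2301.10031 — 8 statements merged into one kernel-verified Lean document; each statement's English description precedes it below -/
import Mathlib

section
/- Let G be a finite simple graph, (T, β) a tree decomposition of G, and W ⊆ V(G). Then there exists a node x of T such that every connected component of the graph obtained from G by deleting the vertices of β(x) (and all incident edges) contains at most |W|/2 vertices of W. -/
open SimpleGraph

/-- `(T, β)` is a tree decomposition of the graph `G`: `T` is a tree, every vertex of `G`
is in some bag, both endpoints of every edge of `G` lie in a common bag, and for every
vertex of `G` the set of nodes of `T` whose bag contains it induces a connected subtree. -/
def IsTreeDecomposition {V ι : Type} (G : SimpleGraph V) (T : SimpleGraph ι)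
    (β : ι → Set V) : Prop :=
  T.IsTree ∧
  (∀ v : V, ∃ x : ι, v ∈ β x) ∧
  (∀ ⦃u v : V⦄, G.Adj u v → ∃ x : ι, u ∈ β x ∧ v ∈ β x) ∧
  (∀ v : V, (T.induce {x : ι | v ∈ β x}).Connected)

section Aux

variable {ι : Type}

/-- `t` is on the `y`-side of the edge `xy` of `T` (after deleting that edge). -/
def sideR (T : SimpleGraph ι) (x y t : ι) : Prop :=
  (T.deleteEdges {s(x,y)}).Reachable y t

variable {T : SimpleGraph ι}

lemma del_comm (T : SimpleGraph ι) (x y : ι) :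
    T.deleteEdges {s(x,y)} = T.deleteEdges {s(y,x)} := by
  rw [Sym2.eq_swap]

lemma bridge (ht : T.IsTree) {x y : ι} (hxy : T.Adj x y) :
    ¬ (T.deleteEdges {s(x,y)}).Reachable x y := by
  have h := (isAcyclic_iff_forall_adj_isBridge.mp ht.2) hxy
  exact isBridge_iff.mp h

lemma side_cover_aux {x y : ι} (hxy : T.Adj x y) :
    ∀ {t u : ι} (_ : T.Walk t u), (sideR T x y u ∨ sideR T y x u) →
      sideR T x y t ∨ sideR T y x t := by
  intro t u p
  induction p with
  | nil => exact id
  | @cons a b c h q ih =>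
    intro hu
    have hb := ih hu
    by_cases he : s(a, b) = s(x, y)
    · rcases Sym2.eq_iff.mp he with ⟨rfl, rfl⟩ | ⟨rfl, rfl⟩
      · exact Or.inr (Reachable.refl _)
      · exact Or.inl (Reachable.refl _)
    · have hadj : (T.deleteEdges {s(x,y)}).Adj a b := by
        rw [deleteEdges_adj]
        exact ⟨h, by simpa using he⟩
      have hadj' : (T.deleteEdges {s(y,x)}).Adj a b := by
        rw [← del_comm]; exact hadj
      rcases hb with hb | hb
      · exact Or.inl (hb.trans hadj.symm.reachable)
      · exact Or.inr (hb.trans hadj'.symm.reachable)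

lemma side_cover (hc : T.Connected) {x y : ι} (hxy : T.Adj x y) (t : ι) :
    sideR T x y t ∨ sideR T y x t := by
  obtain ⟨p⟩ := hc.preconnected t x
  exact side_cover_aux hxy p (Or.inr (Reachable.refl _))

lemma side_disj (ht : T.IsTree) {x y : ι} (hxy : T.Adj x y) {t : ι} :
    ¬ (sideR T x y t ∧ sideR T y x t) := by
  rintro ⟨h1, h2⟩
  rw [sideR, ← del_comm] at h2
  exact bridge ht hxy (h2.trans h1.symm)

lemma crossing (ht : T.IsTree) {x y : ι} (hxy : T.Adj x y) {S : Set ι}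
    (hS : (T.induce S).Connected) {t1 t2 : ι} (ht1S : t1 ∈ S) (ht2S : t2 ∈ S)
    (h1 : sideR T x y t1) (h2 : sideR T y x t2) : x ∈ S ∧ y ∈ S := by
  obtain ⟨p⟩ := hS.preconnected ⟨t1, ht1S⟩ ⟨t2, ht2S⟩
  let f : T.induce S →g T := ⟨Subtype.val, fun {a b} h => h⟩
  let q := p.map f
  have hsupp : ∀ a ∈ q.support, a ∈ S := by
    intro a ha
    rw [Walk.support_map] at ha
    obtain ⟨b, _, rfl⟩ := List.mem_map.mp ha
    exact b.2
  by_cases he : s(x,y) ∈ q.edges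
  · exact ⟨hsupp _ (q.fst_mem_support_of_mem_edges he),
      hsupp _ (q.snd_mem_support_of_mem_edges he)⟩
  · exfalso
    have hq : ∀ e ∈ q.edges, e ∉ ({s(x,y)} : Set (Sym2 ι)) := by
      intro e hee h'
      rw [Set.mem_singleton_iff] at h'
      exact he (h' ▸ hee)
    have hr : (T.deleteEdges {s(x,y)}).Reachable t1 t2 := ⟨q.toDeleteEdges _ hq⟩
    rw [sideR, ← del_comm] at h2
    exact bridge ht hxy (h2.trans (hr.symm.trans h1.symm))

end Aux

section Aux2

variable {V ι : Type} {G : SimpleGraph V} {T : SimpleGraph ι} {β : ι → Set V}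


variable {V ι : Type}

variable {G : SimpleGraph V} {T : SimpleGraph ι} {β : ι → Set V}

lemma bag_side (htd : IsTreeDecomposition G T β) {x y : ι} {v : V}
    (hv : v ∉ β x) (hxy : T.Adj x y) :
    (∀ t, v ∈ β t → sideR T x y t) ∨ (∀ t, v ∈ β t → sideR T y x t) := by
  by_contra hcon
  push_neg at hcon
  obtain ⟨⟨t1, hvt1, ht1⟩, ⟨t2, hvt2, ht2⟩⟩ := hcon
  have h1 : sideR T y x t1 :=
    (side_cover htd.1.isConnected hxy t1).resolve_left ht1
  have h2 : sideR T x y t2 :=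
    (side_cover htd.1.isConnected hxy t2).resolve_right ht2
  have := crossing htd.1 hxy (htd.2.2.2 v) (t1 := t2) (t2 := t1) hvt2 hvt1 h2 h1
  exact hv this.1

def Vside (T : SimpleGraph ι) (β : ι → Set V) (x y : ι) : Set V :=
  {v | ∃ t, sideR T x y t ∧ v ∈ β t}

def Aset (T : SimpleGraph ι) (β : ι → Set V) (W : Set V) (x y : ι) : Set V :=
  W ∩ (Vside T β x y \ Vside T β y x)

lemma comp_side (htd : IsTreeDecomposition G T β) (x : ι)
    (C : (G.induce ((β x)ᶜ)).ConnectedComponent) (v0 : ↥((β x)ᶜ)) (hv0 : v0 ∈ C.supp) :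
    ∃ y, T.Adj x y ∧ ∀ v : ↥((β x)ᶜ), v ∈ C.supp →
      (v : V) ∈ Vside T β x y ∧ (v : V) ∉ Vside T β y x := by
  have htree := htd.1
  obtain ⟨t0, ht0⟩ := htd.2.1 (v0 : V)
  have hv0x : (v0 : V) ∉ β x := v0.2
  have ht0x : t0 ≠ x := fun h => hv0x (h ▸ ht0)
  haveI := Classical.decEq ι
  obtain ⟨w0⟩ := htree.isConnected.preconnected x t0
  obtain ⟨pw, hpath⟩ := w0.toPath
  cases pw with
  | nil => exact absurd rfl ht0x.symm
  | @cons _ y _ h q =>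
    have hxy : T.Adj x y := h
    have hxq : x ∉ q.support := (Walk.cons_isPath_iff h q |>.mp hpath).2
    have ht0side : sideR T x y t0 := by
      refine ⟨q.toDeleteEdges _ ?_⟩
      intro e hee h'
      rw [Set.mem_singleton_iff] at h'
      subst h'
      exact hxq (q.fst_mem_support_of_mem_edges hee)
    -- v0's bags are all on the y-side
    have hP0 : ∀ t, (v0 : V) ∈ β t → sideR T x y t := by
      rcases bag_side htd hv0x hxy with h | h
      · exact h
      · exact absurd ⟨ht0side, h t0 ht0⟩ (side_disj htree hxy)
    -- propagation along walks in the component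
    have prop : ∀ {a b : ↥((β x)ᶜ)} (_ : (G.induce ((β x)ᶜ)).Walk a b),
        (∀ t, (a : V) ∈ β t → sideR T x y t) → (∀ t, (b : V) ∈ β t → sideR T x y t) := by
      intro a b p
      induction p with
      | nil => exact id
      | @cons a c b h q ih =>
        intro ha
        apply ih
        obtain ⟨t1, hat1, hct1⟩ := htd.2.2.1 h
        have ht1side : sideR T x y t1 := ha t1 hat1
        rcases bag_side htd c.2 hxy with h' | h'
        · exact h'
        · exact absurd ⟨ht1side, h' t1 hct1⟩ (side_disj htree hxy)
    refine ⟨y, hxy, ?_⟩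
    intro v hv
    have hreach : (G.induce ((β x)ᶜ)).Reachable v0 v := by
      rw [ConnectedComponent.mem_supp_iff] at hv0 hv
      exact ConnectedComponent.exact (hv0.trans hv.symm)
    obtain ⟨p⟩ := hreach
    have hPv := prop p hP0
    obtain ⟨t, htv⟩ := htd.2.1 (v : V)
    refine ⟨⟨t, hPv t htv, htv⟩, ?_⟩
    rintro ⟨t', ht', hvt'⟩
    exact side_disj htree hxy ⟨hPv t' hvt', ht'⟩

lemma Aset_mono (ht : T.IsTree) {x y z : ι} (hxy : T.Adj x y) (hyz : T.Adj y z)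
    (hzx : z ≠ x) {W : Set V} : Aset T β W y z ⊆ Aset T β W x y := by
  haveI := Classical.decEq ι
  have hee' : s(y,z) ≠ s(x,y) := by
    intro h
    rcases Sym2.eq_iff.mp h with ⟨h1, h2⟩ | ⟨h1, h2⟩
    · exact hxy.ne h1.symm
    · exact hzx h2
  -- side inclusion (a): y-z far side ⊆ x-y far side
  have hyzT : (T.deleteEdges {s(x,y)}).Adj y z := by
    rw [deleteEdges_adj]
    exact ⟨hyz, by simpa using hee'⟩
  have ha : ∀ t, sideR T y z t → sideR T x y t := by
    intro t hr
    obtain ⟨p⟩ := hr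
    by_cases hy : y ∈ p.support
    · exfalso
      exact bridge ht hyz (Reachable.symm ⟨p.takeUntil y hy⟩)
    · have hpe : ∀ e ∈ p.edges, e ∈ (T.deleteEdges {s(x,y)}).edgeSet := by
        intro e hee
        have h1 : e ∈ T.edgeSet := (edgeSet_deleteEdges _ ▸ p.edges_subset_edgeSet hee).1
        rw [edgeSet_deleteEdges]
        refine ⟨h1, ?_⟩
        intro h'
        rw [Set.mem_singleton_iff] at h'
        subst h'
        exact hy (p.snd_mem_support_of_mem_edges hee)
      exact (hyzT.reachable).trans ⟨p.transfer _ hpe⟩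
  -- side inclusion (b): x-y near side ⊆ y-z near side
  have hyxT : (T.deleteEdges {s(y,z)}).Adj y x := by
    rw [deleteEdges_adj]
    refine ⟨hxy.symm, ?_⟩
    intro h'
    rw [Set.mem_singleton_iff, Sym2.eq_swap] at h'
    exact hee' h'.symm
  have hb : ∀ t, sideR T y x t → sideR T z y t := by
    intro t hr
    rw [sideR, ← del_comm] at hr ⊢
    obtain ⟨p⟩ := hr
    by_cases hy : y ∈ p.support
    · exact absurd ⟨p.takeUntil y hy⟩ (bridge ht hxy)
    · have hpe : ∀ e ∈ p.edges, e ∈ (T.deleteEdges {s(y,z)}).edgeSet := by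
        intro e hee
        have h1 : e ∈ T.edgeSet := (edgeSet_deleteEdges _ ▸ p.edges_subset_edgeSet hee).1
        rw [edgeSet_deleteEdges]
        refine ⟨h1, ?_⟩
        intro h'
        rw [Set.mem_singleton_iff] at h'
        subst h'
        exact hy (p.fst_mem_support_of_mem_edges hee)
      exact (hyxT.reachable).trans ⟨p.transfer _ hpe⟩
  rintro v ⟨hvW, ⟨t, hts, hvt⟩, hnv⟩
  refine ⟨hvW, ⟨t, ha t hts, hvt⟩, ?_⟩
  rintro ⟨t', ht's, hvt'⟩
  exact hnv ⟨t', hb t' ht's, hvt'⟩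


lemma dist_step (ht : T.IsTree) {y z t : ι} (hyz : T.Adj y z)
    (hts : sideR T y z t) : T.dist z t < T.dist y t := by
  haveI := Classical.decEq ι
  obtain ⟨p, hp⟩ := ht.isConnected.exists_walk_length_eq_dist y t
  have hz : z ∈ p.support := by
    by_contra hzs
    have hq : ∀ e ∈ p.edges, e ∉ ({s(y,z)} : Set (Sym2 ι)) := by
      intro e hee h'
      rw [Set.mem_singleton_iff] at h'
      subst h'
      exact hzs (p.snd_mem_support_of_mem_edges hee)
    have hr : (T.deleteEdges {s(y,z)}).Reachable y t := ⟨p.toDeleteEdges _ hq⟩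
    exact bridge ht hyz (hr.trans hts.symm)
  have hsplit := congrArg Walk.length (p.take_spec hz)
  rw [Walk.length_append] at hsplit
  have h1 : 1 ≤ (p.takeUntil z hz).length := by
    rcases Nat.eq_zero_or_pos (p.takeUntil z hz).length with h | h
    · exact absurd (Walk.eq_of_length_eq_zero h) hyz.ne
    · exact h
  have h2 : T.dist z t ≤ (p.dropUntil z hz).length := SimpleGraph.dist_le _
  omega


end Aux2

/-- For every tree decomposition `(T, β)` of `G` and every set of vertices `W`, there is a
node `x` such that each connected component of `G` minus the bag `β x` contains at most
`|W| / 2` vertices of `W`. -/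

theorem exists_balanced_bag {V ι : Type} [Fintype V] (G : SimpleGraph V)
    (T : SimpleGraph ι) (β : ι → Set V)
    (htd : IsTreeDecomposition G T β) (W : Set V) :
    ∃ x : ι, ∀ C : (G.induce ((β x)ᶜ)).ConnectedComponent,
      2 * {w : ↥((β x)ᶜ) | w ∈ C.supp ∧ (w : V) ∈ W}.ncard ≤ W.ncard := by
  classical
  by_contra hno
  push_neg at hno
  set A := fun x y => Aset T β W x y with hA
  have step : ∀ x : ι, ∃ y, T.Adj x y ∧ W.ncard < 2 * (A x y).ncard := by
    intro x
    obtain ⟨C, hC⟩ := hno x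
    have hMne : {w : ↥((β x)ᶜ) | w ∈ C.supp ∧ (w : V) ∈ W}.Nonempty := by
      rcases Set.eq_empty_or_nonempty {w : ↥((β x)ᶜ) | w ∈ C.supp ∧ (w : V) ∈ W} with h | h
      · rw [h] at hC; simp at hC
      · exact h
    obtain ⟨v0, hv0C, hv0W⟩ := hMne
    obtain ⟨y, hxy, hside⟩ := comp_side htd x C v0 hv0C
    refine ⟨y, hxy, ?_⟩
    have hsub : Subtype.val '' {w : ↥((β x)ᶜ) | w ∈ C.supp ∧ (w : V) ∈ W} ⊆ A x y := by
      rintro v ⟨w', ⟨hwC, hwW⟩, rfl⟩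
      obtain ⟨h1, h2⟩ := hside w' hwC
      exact ⟨hwW, h1, h2⟩
    have hle := Set.ncard_le_ncard hsub (Set.toFinite _)
    rw [Set.ncard_image_of_injective _ Subtype.val_injective] at hle
    omega
  have opp : ∀ x y : ι, T.Adj x y → W.ncard < 2 * (A x y).ncard →
      W.ncard < 2 * (A y x).ncard → False := by
    intro x y hxy h1 h2
    have hdisj : Disjoint (A x y) (A y x) := by
      rw [Set.disjoint_left]
      rintro v ⟨_, _, hnv⟩ ⟨_, hv', _⟩
      exact hnv hv'
    have hsub : A x y ∪ A y x ⊆ W := by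
      rintro v (⟨h, _⟩ | ⟨h, _⟩) <;> exact h
    have hcard := Set.ncard_le_ncard hsub (Set.toFinite _)
    rw [Set.ncard_union_eq hdisj (Set.toFinite _) (Set.toFinite _)] at hcard
    omega
  obtain ⟨x0⟩ := htd.1.isConnected.nonempty
  have hN : {n | ∃ x y, T.Adj x y ∧ W.ncard < 2 * (A x y).ncard ∧
      (A x y).ncard = n}.Nonempty := by
    obtain ⟨y0, h1, h2⟩ := step x0
    exact ⟨_, x0, y0, h1, h2, rfl⟩
  obtain ⟨x1, y1, hadj1, hheavy1, hcard1⟩ := Nat.sInf_mem hN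
  have hAne : (A x1 y1).Nonempty := by
    rcases Set.eq_empty_or_nonempty (A x1 y1) with h | h
    · rw [h] at hheavy1; simp at hheavy1
    · exact h
  obtain ⟨w, hw⟩ := hAne
  obtain ⟨ts, hts⟩ := htd.2.1 w
  have hD : {n | ∃ x y, T.Adj x y ∧ W.ncard < 2 * (A x y).ncard ∧
      (A x y).ncard = sInf {n | ∃ x y, T.Adj x y ∧ W.ncard < 2 * (A x y).ncard ∧
        (A x y).ncard = n} ∧
      w ∈ A x y ∧ T.dist y ts = n}.Nonempty := ⟨_, x1, y1, hadj1, hheavy1, hcard1, hw, rfl⟩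
  obtain ⟨x, y, hadj, hheavy, hcard, hwA, hdist⟩ := Nat.sInf_mem hD
  obtain ⟨z, hyz, hheavy'⟩ := step y
  by_cases hzx : z = x
  · subst hzx
    exact opp z y hadj hheavy hheavy'
  · have hsub := Aset_mono (β := β) htd.1 hadj hyz hzx (W := W)
    have hmemN : (A y z).ncard ∈
        {n | ∃ x y, T.Adj x y ∧ W.ncard < 2 * (A x y).ncard ∧ (A x y).ncard = n} :=
      ⟨y, z, hyz, hheavy', rfl⟩
    have hge := Nat.sInf_le hmemN
    have hle : (A y z).ncard ≤ (A x y).ncard := Set.ncard_le_ncard hsub (Set.toFinite _)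
    have heq : (A y z).ncard = sInf {n | ∃ x y, T.Adj x y ∧ W.ncard < 2 * (A x y).ncard ∧
        (A x y).ncard = n} := le_antisymm (hcard ▸ hle) hge
    have hAeq : A y z = A x y :=
      Set.eq_of_subset_of_ncard_le hsub (by rw [hcard, heq]) (Set.toFinite _)
    have hwA' : w ∈ A y z := hAeq ▸ hwA
    have hnot : ¬ sideR T z y ts := fun hs => hwA'.2.2 ⟨ts, hs, hts⟩
    have hside : sideR T y z ts := (side_cover htd.1.isConnected hyz ts).resolve_right hnot
    have hlt := dist_step htd.1 hyz hside
    have hmemD : T.dist z ts ∈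
        {n | ∃ x y, T.Adj x y ∧ W.ncard < 2 * (A x y).ncard ∧
          (A x y).ncard = sInf {n | ∃ x y, T.Adj x y ∧ W.ncard < 2 * (A x y).ncard ∧
            (A x y).ncard = n} ∧ w ∈ A x y ∧ T.dist y ts = n} :=
      ⟨y, z, hyz, hheavy', heq, hwA', rfl⟩
    have hmem := Nat.sInf_le hmemD
    omega
end

section
/- Let G be a finite co-bipartite graph, with V(G) = A ∪ B where A and B are cliques. Then tw(G) = pw(G). -/
open SimpleGraph

/-- The width of a decomposition with bags `β`: the maximum of `|β x| - 1` over all nodes. -/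
noncomputable def decompWidth {V ι : Type} (β : ι → Set V) : ℕ :=
  ⨆ x : ι, ((β x).ncard - 1)

/-- The treewidth of `G`: the minimum width of a tree decomposition of `G`. -/
noncomputable def treewidth {V : Type} (G : SimpleGraph V) : ℕ :=
  sInf { k : ℕ | ∃ (ι : Type) (T : SimpleGraph ι) (β : ι → Set V),
    IsTreeDecomposition G T β ∧ decompWidth β = k }

/-- A path decomposition of `G` with bags `β p_1, …, β p_r`: every vertex is in some bag,
both endpoints of every edge lie in a common bag, and the bags containing a fixed vertex
form a contiguous interval. -/
def IsPathDecomposition {V : Type} (G : SimpleGraph V) (r : ℕ) (β : Fin r → Set V) : Prop :=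
  (∀ v : V, ∃ x : Fin r, v ∈ β x) ∧
  (∀ ⦃u v : V⦄, G.Adj u v → ∃ x : Fin r, u ∈ β x ∧ v ∈ β x) ∧
  (∀ (v : V) (i j k : Fin r), i ≤ j → j ≤ k → v ∈ β i → v ∈ β k → v ∈ β j)

/-- The pathwidth of `G`: the minimum width of a path decomposition of `G`. -/
noncomputable def pathwidth {V : Type} (G : SimpleGraph V) : ℕ :=
  sInf { k : ℕ | ∃ (r : ℕ) (β : Fin (r + 1) → Set V),
    IsPathDecomposition G (r + 1) β ∧ decompWidth β = k }


namespace CoBip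

variable {ι : Type} {T : SimpleGraph ι}

lemma seg : ∀ {a b : ι} (P : T.Walk a b) (k : ℕ), k ≤ P.length →
    ∃ Q : T.Walk a (P.getVert k), Q.length = k ∧ (∀ m, m ≤ k → Q.getVert m = P.getVert m) ∧
      (∀ x ∈ Q.support, x ∈ P.support) ∧ (P.IsPath → Q.IsPath) := by
  intro a b P k
  induction k generalizing a b P with
  | zero =>
    intro _
    refine ⟨(Walk.nil : T.Walk a a).copy rfl (P.getVert_zero).symm, by simp, ?_, ?_, ?_⟩
    · intro m hm; interval_cases m; simp
    · intro x hx; simp only [Walk.support_copy, Walk.support_nil, List.mem_singleton] at hx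
      subst hx; exact P.start_mem_support
    · intro _; simp [Walk.isPath_copy]
  | succ k ih =>
    intro hk
    cases P with
    | nil => simp at hk
    | @cons _ c _ h R =>
      have hk' : k ≤ R.length := by simpa [Walk.length_cons] using hk
      obtain ⟨Q', hlen, hgv, hsupp, hpath⟩ := ih R hk'
      refine ⟨Walk.cons h (Q'.copy rfl (by rw [Walk.getVert_cons_succ])), by simp [hlen], ?_, ?_, ?_⟩
      · intro m hm
        cases m with
        | zero => simp
        | succ m =>
          simp only [Walk.getVert_cons_succ, Walk.getVert_copy]
          exact hgv m (Nat.le_of_succ_le_succ hm)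
      · intro x hx
        simp only [Walk.support_cons, Walk.support_copy, List.mem_cons] at hx
        rcases hx with rfl | hx
        · exact Walk.start_mem_support _
        · simp only [Walk.support_cons, List.mem_cons]; exact Or.inr (hsupp x hx)
      · intro hP
        rw [Walk.cons_isPath_iff] at hP ⊢
        refine ⟨by simp [Walk.isPath_copy]; exact hpath hP.1, ?_⟩
        simp only [Walk.support_copy]
        exact fun hx => hP.2 (hsupp a hx)

lemma reachable_induce_of_walk {S : Set ι} : ∀ {x y : ι} (W : T.Walk x y)
    (hW : ∀ z ∈ W.support, z ∈ S),
    (T.induce S).Reachable ⟨x, hW x W.start_mem_support⟩ ⟨y, hW y W.end_mem_support⟩ := by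
  intro x y W
  induction W with
  | nil => intro _; rfl
  | @cons x c y h R ih =>
    intro hW
    have hx : x ∈ S := hW x (by simp)
    have hc : c ∈ S := hW c (by simp [Walk.support_cons])
    have hR : ∀ z ∈ R.support, z ∈ S := fun z hz => hW z (by simp [Walk.support_cons, hz])
    have h1 : (T.induce S).Adj ⟨x, hx⟩ ⟨c, hc⟩ := h
    exact h1.reachable.trans (ih hR)

lemma walk_subset_of_induce_connected {S : Set ι} (hS : (T.induce S).Connected)
    {x y : ι} (hx : x ∈ S) (hy : y ∈ S) :
    ∃ W : T.Walk x y, ∀ z ∈ W.support, z ∈ S := by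
  obtain ⟨W0⟩ := hS.preconnected ⟨x, hx⟩ ⟨y, hy⟩
  let f : T.induce S →g T := ⟨Subtype.val, fun {u v} h => h⟩
  refine ⟨(W0.map f).copy rfl rfl, ?_⟩
  intro z hz
  simp only [Walk.support_copy, Walk.support_map, List.mem_map] at hz
  obtain ⟨⟨z', hz'⟩, _, rfl⟩ := hz
  exact hz'

/-- In a tree, any path between two points of a connected induced set stays in the set. -/

lemma path_subset_of_connected (hT : T.IsTree) {S : Set ι} (hS : (T.induce S).Connected)
    {x y : ι} (hx : x ∈ S) (hy : y ∈ S) {Q : T.Walk x y} (hQ : Q.IsPath) :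
    ∀ z ∈ Q.support, z ∈ S := by
  classical
  obtain ⟨W, hW⟩ := walk_subset_of_induce_connected hS hx hy
  have huniq := hT.existsUnique_path x y
  obtain ⟨p, _, hup⟩ := huniq
  have h1 : Q = (W.toPath : T.Walk x y) := by
    rw [hup Q hQ, hup (W.toPath : T.Walk x y) W.toPath.isPath]
  intro z hz
  rw [h1] at hz
  exact hW z (W.support_toPath_subset hz)

lemma convex (hT : T.IsTree) {S : Set ι} (hS : (T.induce S).Connected)
    {a b : ι} {P : T.Walk a b} (hP : P.IsPath) {i j k : ℕ} (hij : i ≤ j) (hjk : j ≤ k)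
    (hk : k ≤ P.length) (hiS : P.getVert i ∈ S) (hkS : P.getVert k ∈ S) :
    P.getVert j ∈ S := by
  obtain ⟨Q1, hQ1len, hQ1gv, _, hQ1path⟩ := seg P k hk
  have hQ1p := hQ1path hP
  have hQ2p : Q1.reverse.IsPath := hQ1p.reverse
  have hQ2len : Q1.reverse.length = k := by rw [Walk.length_reverse, hQ1len]
  have hki : k - i ≤ Q1.reverse.length := by omega
  obtain ⟨Q3, hQ3len, hQ3gv, _, hQ3path⟩ := seg Q1.reverse (k - i) hki
  have hend : Q1.reverse.getVert (k - i) = P.getVert i := by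
    rw [Walk.getVert_reverse, hQ1len, hQ1gv (k - (k - i)) (by omega)]
    congr 1; omega
  have hyS : Q1.reverse.getVert (k - i) ∈ S := by rw [hend]; exact hiS
  have hsub := path_subset_of_connected hT hS hkS hyS (hQ3path hQ2p)
  have hj : Q3.getVert (k - j) = P.getVert j := by
    rw [hQ3gv (k - j) (by omega), Walk.getVert_reverse, hQ1len, hQ1gv (k - (k - j)) (by omega)]
    congr 1; omega
  have hmem : P.getVert j ∈ Q3.support := by
    rw [Walk.mem_support_iff_exists_getVert]
    exact ⟨k - j, hj, by omega⟩
  exact hsub _ hmem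

lemma meet (hT : T.IsTree) {S1 S2 : Set ι} (h1 : (T.induce S1).Connected)
    (h2 : (T.induce S2).Connected) {a b : ι} {P : T.Walk a b} (hP : P.IsPath)
    (ha : a ∈ S1) (hb : b ∈ S2) {t : ι} (ht1 : t ∈ S1) (ht2 : t ∈ S2) :
    ∃ n, n ≤ P.length ∧ P.getVert n ∈ S1 ∧ P.getVert n ∈ S2 := by
  classical
  obtain ⟨W1, hW1⟩ := walk_subset_of_induce_connected h1 ha ht1
  obtain ⟨W2, hW2⟩ := walk_subset_of_induce_connected h2 ht2 hb
  have hunion : ∀ n, n ≤ P.length → P.getVert n ∈ S1 ∪ S2 := by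
    intro n hn
    obtain ⟨p, _, hup⟩ := hT.existsUnique_path a b
    have hPW : P = ((W1.append W2).toPath : T.Walk a b) := by
      rw [hup P hP, hup _ (W1.append W2).toPath.isPath]
    have hmem : P.getVert n ∈ ((W1.append W2).toPath : T.Walk a b).support := by
      rw [← hPW]; exact Walk.mem_support_iff_exists_getVert.mpr ⟨n, rfl, hn⟩
    have := (W1.append W2).support_toPath_subset hmem
    rw [Walk.mem_support_append_iff] at this
    rcases this with h | h
    · exact Or.inl (hW1 _ h)
    · exact Or.inr (hW2 _ h)
  set e := Nat.findGreatest (fun n => P.getVert n ∈ S1) P.length with he_def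
  have he1 : P.getVert e ∈ S1 :=
    Nat.findGreatest_spec (P := fun n => P.getVert n ∈ S1) (Nat.zero_le _)
      (by simpa [P.getVert_zero] using ha)
  have heL : e ≤ P.length := Nat.findGreatest_le _
  rcases eq_or_lt_of_le heL with heq | hlt
  · refine ⟨e, heL, he1, ?_⟩
    rw [heq, P.getVert_length]; exact hb
  · have hnot : P.getVert (e + 1) ∉ S1 :=
      Nat.findGreatest_is_greatest (Nat.lt_succ_self e) hlt
    have hy2 : P.getVert (e + 1) ∈ S2 := by
      rcases hunion (e + 1) hlt with h | h
      · exact absurd h hnot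
      · exact h
    refine ⟨e, heL, he1, ?_⟩
    by_contra hxe2
    have hadj : T.Adj (P.getVert e) (P.getVert (e + 1)) := P.adj_getVert_succ hlt
    have hbridge := (isAcyclic_iff_forall_adj_isBridge.mp hT.IsAcyclic) hadj
    rw [isBridge_iff_adj_and_forall_walk_mem_edges] at hbridge
    obtain ⟨W1', hW1'⟩ := walk_subset_of_induce_connected h1 he1 ht1
    obtain ⟨W2', hW2'⟩ := walk_subset_of_induce_connected h2 ht2 hy2
    have hmem := hbridge (W1'.append W2')
    rw [Walk.edges_append, List.mem_append] at hmem
    rcases hmem with h | h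
    · exact hnot (hW1' _ (W1'.snd_mem_support_of_mem_edges h))
    · exact hxe2 (hW2' _ (W2'.fst_mem_support_of_mem_edges h))

lemma inter_connected (hT : T.IsTree) {S1 S2 : Set ι} (h1 : (T.induce S1).Connected)
    (h2 : (T.induce S2).Connected) (hne : (S1 ∩ S2).Nonempty) :
    (T.induce (S1 ∩ S2)).Connected := by
  classical
  obtain ⟨p, hp⟩ := hne
  rw [SimpleGraph.connected_iff]
  refine ⟨?_, ⟨⟨p, hp⟩⟩⟩
  rintro ⟨x, hx1, hx2⟩ ⟨y, hy1, hy2⟩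
  obtain ⟨W⟩ := hT.isConnected.preconnected x y
  have hQ : (W.toPath : T.Walk x y).IsPath := W.toPath.isPath
  have hs1 := path_subset_of_connected hT h1 hx1 hy1 hQ
  have hs2 := path_subset_of_connected hT h2 hx2 hy2 hQ
  exact reachable_induce_of_walk (S := S1 ∩ S2) (W.toPath : T.Walk x y) (fun z hz => ⟨hs1 z hz, hs2 z hz⟩)

lemma helly3 (hT : T.IsTree) {S0 S1 S2 : Set ι} (h0 : (T.induce S0).Connected)
    (h1 : (T.induce S1).Connected) (h2 : (T.induce S2).Connected)
    (h01 : (S0 ∩ S1).Nonempty) (h02 : (S0 ∩ S2).Nonempty) (h12 : (S1 ∩ S2).Nonempty) :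
    (S0 ∩ S1 ∩ S2).Nonempty := by
  classical
  obtain ⟨p, hp0, hp1⟩ := h01
  obtain ⟨q, hq0, hq2⟩ := h02
  obtain ⟨r, hr1, hr2⟩ := h12
  obtain ⟨W⟩ := hT.isConnected.preconnected p q
  set P : T.Walk p q := (W.toPath : T.Walk p q) with hP_def
  have hPp : P.IsPath := W.toPath.isPath
  have hs0 := path_subset_of_connected hT h0 hp0 hq0 hPp
  obtain ⟨n, hn, hn1, hn2⟩ := meet hT h1 h2 hPp hp1 hq2 hr1 hr2
  refine ⟨P.getVert n, ⟨?_, hn1⟩, hn2⟩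
  exact hs0 _ (Walk.mem_support_iff_exists_getVert.mpr ⟨n, rfl, hn⟩)

lemma hellyList (hT : T.IsTree) : ∀ (n : ℕ) (l : List (Set ι)), l.length ≤ n →
    (∀ S ∈ l, (T.induce S).Connected) →
    (∀ S1 ∈ l, ∀ S2 ∈ l, (S1 ∩ S2).Nonempty) → l ≠ [] → ∃ x, ∀ S ∈ l, x ∈ S := by
  intro n
  induction n with
  | zero => intro l hl _ _ hne; interval_cases hll : l.length <;> simp_all
  | succ n ih =>
    intro l hl hconn hpair hne
    match l with
    | [] => exact absurd rfl hne
    | [S] =>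
      obtain ⟨x, hx, _⟩ := hpair S (by simp) S (by simp)
      exact ⟨x, by simpa using hx⟩
    | S0 :: S1 :: rest =>
      have h0 : (T.induce S0).Connected := hconn S0 (by simp)
      have h1 : (T.induce S1).Connected := hconn S1 (by simp)
      have h01 : (S0 ∩ S1).Nonempty := hpair S0 (by simp) S1 (by simp)
      have hcon' : (T.induce (S0 ∩ S1)).Connected := inter_connected hT h0 h1 h01
      have key := ih ((S0 ∩ S1) :: rest) (by simp at hl ⊢; omega) ?_ ?_ (by simp)
      · obtain ⟨x, hx⟩ := key
        have hx01 := hx (S0 ∩ S1) (by simp)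
        refine ⟨x, ?_⟩
        intro S hS
        rcases hS with _ | ⟨_, hS⟩
        · exact hx01.1
        · rcases hS with _ | ⟨_, hS⟩
          · exact hx01.2
          · exact hx S (by simp only [List.mem_cons]; exact Or.inr hS)
      · intro S hS
        rcases List.mem_cons.mp hS with rfl | hS
        · exact hcon'
        · exact hconn S (by simp [hS])
      · intro A hA B hB
        rcases List.mem_cons.mp hA with rfl | hA <;> rcases List.mem_cons.mp hB with rfl | hB
        · exact h01.mono (by intro z hz; exact ⟨hz, hz⟩)
        · have := helly3 hT h0 h1 (hconn B (by simp [hB])) h01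
            (hpair S0 (by simp) B (by simp [hB])) (hpair S1 (by simp) B (by simp [hB]))
          exact this.mono (by intro z hz; exact ⟨hz.1, hz.2⟩)
        · have := helly3 hT h0 h1 (hconn A (by simp [hA])) h01
            (hpair S0 (by simp) A (by simp [hA])) (hpair S1 (by simp) A (by simp [hA]))
          exact this.mono (by intro z ⟨hz01, hzA⟩; exact ⟨hzA, hz01⟩)
        · exact hpair A (by simp [hA]) B (by simp [hB])

lemma clique_subset_bag {V : Type} [Fintype V] {G : SimpleGraph V} (hT : T.IsTree)
    (β : ι → Set V) (hcov : ∀ v, ∃ x, v ∈ β x)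
    (hedge : ∀ ⦃u v : V⦄, G.Adj u v → ∃ x, u ∈ β x ∧ v ∈ β x)
    (hconn : ∀ v, (T.induce {x | v ∈ β x}).Connected)
    {C : Set V} (hC : G.IsClique C) : ∃ x, ∀ v ∈ C, v ∈ β x := by
  classical
  have hne : Nonempty ι := hT.isConnected.nonempty
  rcases C.eq_empty_or_nonempty with rfl | ⟨v0, hv0⟩
  · exact ⟨Classical.arbitrary ι, by simp⟩
  · have hfin : C.Finite := C.toFinite
    set l : List (Set ι) := hfin.toFinset.toList.map (fun v => {x | v ∈ β x}) with hl_def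
    have hmeml : ∀ v ∈ C, {x | v ∈ β x} ∈ l := by
      intro v hv
      simp only [hl_def, List.mem_map]
      exact ⟨v, by rw [Finset.mem_toList, hfin.mem_toFinset]; exact hv, rfl⟩
    have key := hellyList hT l.length l le_rfl ?_ ?_ ?_
    · obtain ⟨x, hx⟩ := key
      exact ⟨x, fun v hv => hx _ (hmeml v hv)⟩
    · intro S hS
      simp only [hl_def, List.mem_map] at hS
      obtain ⟨v, _, rfl⟩ := hS
      exact hconn v
    · intro S1 hS1 S2 hS2
      simp only [hl_def, List.mem_map] at hS1 hS2
      obtain ⟨u, hu, rfl⟩ := hS1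
      obtain ⟨v, hv, rfl⟩ := hS2
      rw [Finset.mem_toList, hfin.mem_toFinset] at hu hv
      rcases eq_or_ne u v with rfl | huv
      · obtain ⟨x, hx⟩ := hcov u
        exact ⟨x, hx, hx⟩
      · obtain ⟨x, hx1, hx2⟩ := hedge (hC hu hv huv)
        exact ⟨x, hx1, hx2⟩
    · simp only [hl_def, ne_eq, List.map_eq_nil_iff]
      intro h
      have : v0 ∈ hfin.toFinset.toList := by
        rw [Finset.mem_toList, hfin.mem_toFinset]; exact hv0
      rw [h] at this
      exact (List.not_mem_nil this)

lemma pathGraph_walk_edge {r : ℕ} {u v : Fin (r + 1)} (huv : u.val + 1 = v.val) :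
    ∀ {x y : Fin (r + 1)} (W : (pathGraph (r + 1)).Walk x y),
      s(u, v) ∉ W.edges → (x.val ≤ u.val ↔ y.val ≤ u.val) := by
  intro x y W
  induction W with
  | nil => intro _; rfl
  | @cons x c y h R ih =>
    intro hne
    rw [Walk.edges_cons, List.mem_cons] at hne
    push_neg at hne
    have hstep : x.val ≤ u.val ↔ c.val ≤ u.val := by
      rw [pathGraph_adj] at h
      by_cases hx : x.val ≤ u.val <;> by_cases hc : c.val ≤ u.val
      · simp [hx, hc]
      · exfalso; rw [not_le] at hc; apply hne.1
        rcases h with h | h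
        · have hxu : x = u := Fin.ext (by omega)
          have hcv : c = v := Fin.ext (by omega)
          rw [hxu, hcv]
        · omega
      · exfalso; rw [not_le] at hx; apply hne.1
        rcases h with h | h
        · omega
        · have hcu : c = u := Fin.ext (by omega)
          have hxv : x = v := Fin.ext (by omega)
          rw [hcu, hxv, Sym2.eq_swap]
      · simp [hx, hc]
    exact hstep.trans (ih hne.2)

lemma pathGraph_isTree (r : ℕ) : (pathGraph (r + 1)).IsTree := by
  refine ⟨pathGraph_connected r, ?_⟩
  rw [isAcyclic_iff_forall_adj_isBridge]
  intro u v h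
  rw [isBridge_iff_adj_and_forall_walk_mem_edges]
  refine ?_
  intro W
  by_contra hne
  rcases pathGraph_adj.mp h with huv | hvu
  · have := pathGraph_walk_edge huv W hne
    omega
  · have hne' : s(v, u) ∉ W.edges := by rwa [Sym2.eq_swap]
    have := pathGraph_walk_edge hvu W hne'
    omega

lemma pathGraph_induce_connected {r : ℕ} {S : Set (Fin (r + 1))}
    (hconv : ∀ i j k : Fin (r + 1), i ≤ j → j ≤ k → i ∈ S → k ∈ S → j ∈ S)
    (hne : S.Nonempty) : ((pathGraph (r + 1)).induce S).Connected := by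
  have aux : ∀ (d : ℕ) (p q : Fin (r + 1)) (hp : p ∈ S) (hq : q ∈ S), p.val + d = q.val →
      ((pathGraph (r + 1)).induce S).Reachable ⟨p, hp⟩ ⟨q, hq⟩ := by
    intro d
    induction d with
    | zero =>
      intro p q hp hq hd
      have : p = q := Fin.ext (by omega)
      subst this
      rfl
    | succ d ih =>
      intro p q hp hq hd
      have hlt : p.val + 1 < r + 1 := by omega
      set p' : Fin (r + 1) := ⟨p.val + 1, hlt⟩ with hp'_def
      have hp' : p' ∈ S := hconv p p' q (by simp [hp'_def, Fin.le_def]) (by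
        simp [hp'_def, Fin.le_def]; omega) hp hq
      have hadj : ((pathGraph (r + 1)).induce S).Adj ⟨p, hp⟩ ⟨p', hp'⟩ := by
        show (pathGraph (r + 1)).Adj p p'
        rw [pathGraph_adj]
        exact Or.inl rfl
      exact hadj.reachable.trans (ih p' q hp' hq (by simp only [hp'_def]; omega))
  obtain ⟨x0, hx0⟩ := hne
  rw [SimpleGraph.connected_iff]
  refine ⟨?_, ⟨⟨x0, hx0⟩⟩⟩
  rintro ⟨p, hp⟩ ⟨q, hq⟩
  rcases le_total p q with hle | hle
  · exact aux (q.val - p.val) p q hp hq (by rw [Fin.le_def] at hle; omega)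
  · exact (aux (p.val - q.val) q p hq hp (by rw [Fin.le_def] at hle; omega)).symm

lemma decompWidth_le {V : Type} [Fintype V] {κ : Type} [Nonempty κ]
    (β : ι → Set V) (f : κ → ι) : decompWidth (fun i => β (f i)) ≤ decompWidth β := by
  apply ciSup_le
  intro i
  apply le_ciSup (f := fun x : ι => (β x).ncard - 1)
  refine ⟨Fintype.card V, ?_⟩
  rintro _ ⟨x, rfl⟩
  calc (β x).ncard - 1 ≤ (β x).ncard := Nat.sub_le _ _
    _ ≤ (Set.univ : Set V).ncard := Set.ncard_le_ncard (Set.subset_univ _) Set.finite_univ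
    _ = Fintype.card V := by rw [Set.ncard_univ, Nat.card_eq_fintype_card]

lemma exists_pathDecomp {V : Type} [Fintype V] {G : SimpleGraph V}
    {A B : Set V} (hUnion : A ∪ B = Set.univ) (hA : G.IsClique A) (hB : G.IsClique B)
    {β : ι → Set V} (hTD : IsTreeDecomposition G T β) :
    ∃ (r : ℕ) (γ : Fin (r + 1) → Set V),
      IsPathDecomposition G (r + 1) γ ∧ decompWidth γ ≤ decompWidth β := by
  classical
  obtain ⟨hT, hcov, hedge, hconn⟩ := hTD
  obtain ⟨a, ha⟩ := clique_subset_bag hT β hcov hedge hconn hA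
  obtain ⟨b, hb⟩ := clique_subset_bag hT β hcov hedge hconn hB
  obtain ⟨W⟩ := hT.isConnected.preconnected a b
  set P : T.Walk a b := (W.toPath : T.Walk a b) with hP_def
  have hP : P.IsPath := W.toPath.isPath
  set r := P.length with hr_def
  refine ⟨r, fun i => β (P.getVert i.val), ⟨?_, ?_, ?_⟩, decompWidth_le β _⟩
  · intro v
    have hv : v ∈ A ∪ B := hUnion.symm ▸ Set.mem_univ v
    rcases hv with hv | hv
    · exact ⟨0, by simp only [Fin.val_zero, P.getVert_zero]; exact ha v hv⟩
    · refine ⟨Fin.last r, ?_⟩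
      simp only [Fin.val_last, hr_def, P.getVert_length]
      exact hb v hv
  · intro u v huv
    have hu : u ∈ A ∪ B := hUnion.symm ▸ Set.mem_univ u
    have hv : v ∈ A ∪ B := hUnion.symm ▸ Set.mem_univ v
    obtain ⟨t, htu, htv⟩ := hedge huv
    rcases hu with hu | hu <;> rcases hv with hv | hv
    · refine ⟨0, ?_, ?_⟩ <;> simp only [Fin.val_zero, P.getVert_zero]
      · exact ha u hu
      · exact ha v hv
    · obtain ⟨n, hn, h1, h2⟩ := meet hT (hconn u) (hconn v) hP (ha u hu) (hb v hv) htu htv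
      exact ⟨⟨n, by omega⟩, h1, h2⟩
    · obtain ⟨n, hn, h1, h2⟩ := meet hT (hconn v) (hconn u) hP (ha v hv) (hb u hu) htv htu
      exact ⟨⟨n, by omega⟩, h2, h1⟩
    · refine ⟨Fin.last r, ?_, ?_⟩ <;>
        simp only [Fin.val_last, hr_def, P.getVert_length]
      · exact hb u hu
      · exact hb v hv
  · intro v i j k hij hjk hvi hvk
    exact convex hT (hconn v) hP (Fin.le_def.mp hij) (Fin.le_def.mp hjk)
      (by omega) hvi hvk

end CoBip

/-- If the vertex set of the finite graph `G` is the union of two cliques `A` and `B`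
(i.e. `G` is co-bipartite), then the treewidth of `G` equals its pathwidth. -/
theorem treewidth_eq_pathwidth_of_cobipartite {V : Type} [Fintype V] (G : SimpleGraph V)
    (A B : Set V) (hUnion : A ∪ B = Set.univ)
    (hA : G.IsClique A) (hB : G.IsClique B) :
    treewidth G = pathwidth G := by
  classical
  set pwSet := { k : ℕ | ∃ (r : ℕ) (β : Fin (r + 1) → Set V),
    IsPathDecomposition G (r + 1) β ∧ decompWidth β = k } with hpw_def
  set twSet := { k : ℕ | ∃ (ι : Type) (T : SimpleGraph ι) (β : ι → Set V),
    IsTreeDecomposition G T β ∧ decompWidth β = k } with htw_def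
  have hmem0 : decompWidth (fun _ : Fin 1 => (Set.univ : Set V)) ∈ pwSet := by
    refine ⟨0, fun _ => Set.univ, ⟨?_, ?_, ?_⟩, rfl⟩
    · exact fun v => ⟨0, Set.mem_univ v⟩
    · exact fun u v _ => ⟨0, Set.mem_univ u, Set.mem_univ v⟩
    · exact fun v i j k _ _ _ _ => Set.mem_univ v
  have hsub : pwSet ⊆ twSet := by
    rintro k ⟨r, γ, ⟨hcov, hedge, hconv⟩, hw⟩
    refine ⟨Fin (r + 1), pathGraph (r + 1), γ, ⟨CoBip.pathGraph_isTree r, hcov, hedge, ?_⟩, hw⟩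
    intro v
    exact CoBip.pathGraph_induce_connected (fun i j k => hconv v i j k) (hcov v)
  have hpw_ne : pwSet.Nonempty := ⟨_, hmem0⟩
  have htw_ne : twSet.Nonempty := ⟨_, hsub hmem0⟩
  apply le_antisymm
  · exact Nat.sInf_le (hsub (Nat.sInf_mem hpw_ne))
  · have htw := Nat.sInf_mem htw_ne
    obtain ⟨ι, T, β, hTD, hwidth⟩ := htw
    obtain ⟨r, γ, hPD, hle⟩ := CoBip.exists_pathDecomp hUnion hA hB hTD
    calc pathwidth G ≤ decompWidth γ := Nat.sInf_le ⟨r, γ, hPD, rfl⟩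
      _ ≤ decompWidth β := hle
      _ = treewidth G := hwidth
end

section
/- Let G be a finite co-bipartite graph, with V(G) = A ∪ B where A and B are cliques. Then G has a path decomposition (P, β) of width equal to tw(G) such that A ⊆ β(p_1) and B ⊆ β(p_r), where p_1 and p_r are the two endpoints of the path P. -/
open SimpleGraph

open SimpleGraph

section Aux

variable {ι : Type} {T : SimpleGraph ι}

lemma reachable_induce_of_walk {U : Set ι} :
    ∀ {a b : ι} (w : T.Walk a b), (∀ c ∈ w.support, c ∈ U) →
      ∀ (ha : a ∈ U) (hb : b ∈ U), (T.induce U).Reachable ⟨a, ha⟩ ⟨b, hb⟩ := by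
  intro a b w
  induction w with
  | nil => intro _ ha hb; exact Reachable.refl _
  | @cons a c b hadj q ih =>
    intro hsup ha hb
    have hc : c ∈ U := hsup c (by simp)
    have h1 : (T.induce U).Adj ⟨a, ha⟩ ⟨c, hc⟩ := by
      simp only [comap_adj, Function.Embedding.coe_subtype]
      exact hadj
    exact h1.reachable.trans (ih (fun x hx => hsup x (by simp [hx])) hc hb)

lemma support_subset_of_connected (hT : T.IsAcyclic) {S : Set ι}
    (hS : (T.induce S).Connected) {a b : ι} (ha : a ∈ S) (hb : b ∈ S)
    (w : T.Walk a b) (hw : w.IsPath) : ∀ c ∈ w.support, c ∈ S := by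
  classical
  intro c hc
  obtain ⟨w'⟩ := hS.preconnected ⟨a, ha⟩ ⟨b, hb⟩
  let f := (SimpleGraph.Embedding.induce (G := T) S).toHom
  let w2 : T.Walk a b := (w'.map f).copy rfl rfl
  have hup : (⟨w, hw⟩ : T.Path a b) = w2.toPath :=
    (isAcyclic_iff_path_unique.mp hT) _ _
  have hsupp : w.support = (w2.toPath : T.Walk a b).support := by rw [← hup]
  have hc2 : c ∈ w2.support := Walk.support_toPath_subset w2 (hsupp ▸ hc)
  have hc3 : c ∈ ((w'.map f).copy rfl rfl).support := hc2
  rw [Walk.support_copy, Walk.support_map] at hc3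
  obtain ⟨x, _, rfl⟩ := List.mem_map.mp hc3
  exact x.2

lemma diverge (hT : T.IsAcyclic) {x x' x'' y z : ι}
    (hxx' : T.Adj x x') (hxx'' : T.Adj x x'') (hne : x' ≠ x'')
    {p' : T.Walk x' y} {q' : T.Walk x'' z}
    (hp : (Walk.cons hxx' p').IsPath) (hq : (Walk.cons hxx'' q').IsPath)
    {w : ι} (hw1 : w ∈ p'.support) (hw2 : w ∈ q'.support) : False := by
  classical
  rw [Walk.cons_isPath_iff] at hp hq
  have hP1 : (Walk.cons hxx' (p'.takeUntil w hw1)).IsPath := by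
    rw [Walk.cons_isPath_iff]
    exact ⟨hp.1.takeUntil hw1, fun h => hp.2 (Walk.support_takeUntil_subset _ hw1 h)⟩
  have hP2 : (Walk.cons hxx'' (q'.takeUntil w hw2)).IsPath := by
    rw [Walk.cons_isPath_iff]
    exact ⟨hq.1.takeUntil hw2, fun h => hq.2 (Walk.support_takeUntil_subset _ hw2 h)⟩
  have hup : (⟨_, hP1⟩ : T.Path x w) = ⟨_, hP2⟩ :=
    (isAcyclic_iff_path_unique.mp hT) _ _
  rw [Subtype.mk.injEq] at hup
  have := congrArg (fun (r : T.Walk x w) => r.getVert 1) hup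
  simp only [Walk.getVert_cons_succ, Walk.getVert_zero] at this
  exact hne this

lemma median (hT : T.IsAcyclic) :
    ∀ {x y z : ι} (p : T.Walk x y) (q : T.Walk x z) (o : T.Walk y z),
      p.IsPath → q.IsPath → o.IsPath →
      ∃ m, m ∈ p.support ∧ m ∈ q.support ∧ m ∈ o.support := by
  intro x y z p
  induction p generalizing z with
  | nil =>
    intro q o _ _ _
    exact ⟨_, Walk.start_mem_support _, q.start_mem_support, o.start_mem_support⟩
  | @cons x x' y hadj p' ih =>
    intro q
    cases q with
    | nil =>
      intro o _ _ _
      exact ⟨_, Walk.start_mem_support _, Walk.start_mem_support _, o.end_mem_support⟩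
    | @cons _ x'' _ hadj' q' =>
      intro o hp hq ho
      by_cases hxx : x' = x''
      · subst hxx
        obtain ⟨m, hm1, hm2, hm3⟩ := ih q' o hp.of_cons hq.of_cons ho
        exact ⟨m, by simp [hm1], by simp [hm2], hm3⟩
      · refine ⟨x, Walk.start_mem_support _, Walk.start_mem_support _, ?_⟩
        have hq2 := (Walk.cons_isPath_iff hadj' q').mp hq
        have hW : ((Walk.cons hadj p').reverse.append (Walk.cons hadj' q')).IsPath := by
          rw [Walk.isPath_def, Walk.support_append, Walk.support_reverse]
          refine List.Nodup.append (List.nodup_reverse.mpr ((Walk.isPath_def _).mp hp)) ?_ ?_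
          · simp only [Walk.support_cons, List.tail_cons]
            exact (Walk.isPath_def _).mp hq2.1
          · intro a ha hb
            rw [List.mem_reverse, Walk.support_cons] at ha
            simp only [Walk.support_cons, List.tail_cons] at hb
            rcases List.mem_cons.mp ha with rfl | ha'
            · exact hq2.2 hb
            · exact diverge hT hadj hadj' hxx hp hq ha' hb
        have hup : (⟨_, hW⟩ : T.Path y z) = ⟨o, ho⟩ :=
          (isAcyclic_iff_path_unique.mp hT) _ _
        rw [Subtype.mk.injEq] at hup
        rw [← hup, Walk.mem_support_append_iff]
        left
        rw [Walk.support_reverse, List.mem_reverse]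
        exact Walk.start_mem_support _

end Aux

section Aux2

variable {ι : Type} {T : SimpleGraph ι}

lemma induce_inter_connected (hT : T.IsAcyclic) (hc : T.Connected) {S S' : Set ι}
    (hS : (T.induce S).Connected) (hS' : (T.induce S').Connected)
    (hne : (S ∩ S').Nonempty) : (T.induce (S ∩ S')).Connected := by
  classical
  obtain ⟨e, heS, heS'⟩ := hne
  rw [connected_iff]
  refine ⟨?_, ⟨⟨e, heS, heS'⟩⟩⟩
  rintro ⟨a, haS, haS'⟩ ⟨b, hbS, hbS'⟩
  obtain ⟨w0⟩ := hc.preconnected a b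
  have hp := w0.toPath.2
  have h1 := support_subset_of_connected hT hS haS hbS w0.toPath.1 hp
  have h2 := support_subset_of_connected hT hS' haS' hbS' w0.toPath.1 hp
  exact reachable_induce_of_walk w0.toPath.1 (fun c hc' => Set.mem_inter (h1 c hc') (h2 c hc')) _ _

lemma helly3 (hT : T.IsAcyclic) (hc : T.Connected) {S1 S2 S3 : Set ι}
    (h1 : (T.induce S1).Connected) (h2 : (T.induce S2).Connected)
    (h3 : (T.induce S3).Connected) {x y z : ι}
    (hx1 : x ∈ S1) (hx2 : x ∈ S2) (hy1 : y ∈ S1) (hy3 : y ∈ S3)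
    (hz2 : z ∈ S2) (hz3 : z ∈ S3) :
    ∃ m, m ∈ S1 ∧ m ∈ S2 ∧ m ∈ S3 := by
  classical
  obtain ⟨wp⟩ := hc.preconnected x y
  obtain ⟨wq⟩ := hc.preconnected x z
  obtain ⟨wo⟩ := hc.preconnected y z
  obtain ⟨m, hm1, hm2, hm3⟩ :=
    median hT wp.toPath.1 wq.toPath.1 wo.toPath.1 wp.toPath.2 wq.toPath.2 wo.toPath.2
  exact ⟨m,
    support_subset_of_connected hT h1 hx1 hy1 wp.toPath.1 wp.toPath.2 m hm1,
    support_subset_of_connected hT h2 hx2 hz2 wq.toPath.1 wq.toPath.2 m hm2,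
    support_subset_of_connected hT h3 hy3 hz3 wo.toPath.1 wo.toPath.2 m hm3⟩

lemma helly_family {α : Type} (hT : T.IsAcyclic) (hc : T.Connected)
    (A : Finset α) : ∀ (S : α → Set ι),
    (∀ a ∈ A, (T.induce (S a)).Connected) →
    (∀ a ∈ A, ∀ b ∈ A, (S a ∩ S b).Nonempty) →
    A.Nonempty → ∃ m, ∀ a ∈ A, m ∈ S a := by
  classical
  induction A using Finset.induction_on with
  | empty => intro S _ _ h; simp at h
  | @insert a A0 hnot ih =>
    intro S hcon hpair _
    by_cases hA0 : A0.Nonempty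
    · obtain ⟨m, hm⟩ := ih (fun b => S b ∩ S a)
        (fun b hb => induce_inter_connected hT hc
          (hcon b (Finset.mem_insert_of_mem hb)) (hcon a (Finset.mem_insert_self a A0))
          (hpair b (Finset.mem_insert_of_mem hb) a (Finset.mem_insert_self a A0)))
        (fun b hb c hc' => by
          obtain ⟨m, h1, h2, h3⟩ := helly3 hT hc
            (hcon b (Finset.mem_insert_of_mem hb))
            (hcon c (Finset.mem_insert_of_mem hc'))
            (hcon a (Finset.mem_insert_self a A0))
            (hpair b (Finset.mem_insert_of_mem hb) c (Finset.mem_insert_of_mem hc')).choose_spec.1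
            (hpair b (Finset.mem_insert_of_mem hb) c (Finset.mem_insert_of_mem hc')).choose_spec.2
            (hpair b (Finset.mem_insert_of_mem hb) a (Finset.mem_insert_self a A0)).choose_spec.1
            (hpair b (Finset.mem_insert_of_mem hb) a (Finset.mem_insert_self a A0)).choose_spec.2
            (hpair c (Finset.mem_insert_of_mem hc') a (Finset.mem_insert_self a A0)).choose_spec.1
            (hpair c (Finset.mem_insert_of_mem hc') a (Finset.mem_insert_self a A0)).choose_spec.2
          exact ⟨m, ⟨h1, h3⟩, h2, h3⟩)
        hA0
      refine ⟨m, fun b hb => ?_⟩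
      rcases Finset.mem_insert.mp hb with rfl | hb'
      · obtain ⟨b0, hb0⟩ := hA0
        exact (hm b0 hb0).2
      · exact (hm b hb').1
    · obtain ⟨m, hm1, _⟩ := hpair a (Finset.mem_insert_self a A0) a (Finset.mem_insert_self a A0)
      refine ⟨m, fun b hb => ?_⟩
      rcases Finset.mem_insert.mp hb with rfl | hb'
      · exact hm1
      · exact absurd ⟨b, hb'⟩ hA0

/-- Convexity of bag-membership along a path in an acyclic graph. -/
lemma convex_getVert (hT : T.IsAcyclic) :
    ∀ {a b : ι} (p : T.Walk a b), p.IsPath → ∀ (S : Set ι), (T.induce S).Connected →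
    ∀ i j k : ℕ, i ≤ j → j ≤ k → k ≤ p.length →
    p.getVert i ∈ S → p.getVert k ∈ S → p.getVert j ∈ S := by
  classical
  intro a b p
  induction p with
  | nil =>
    intro _ S _ i j k _ _ _ hi _
    exact hi
  | @cons a a' b hadj q ih =>
    intro hp S hS i j k hij hjk hk hiS hkS
    cases j with
    | zero =>
      obtain rfl : i = 0 := Nat.le_zero.mp hij
      exact hiS
    | succ j =>
      obtain ⟨k', rfl⟩ : ∃ k', k = k' + 1 := ⟨k - 1, by omega⟩
      rw [Walk.getVert_cons_succ] at hkS ⊢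
      have hklen : k' ≤ q.length := by
        rw [Walk.length_cons] at hk; omega
      cases i with
      | succ i =>
        rw [Walk.getVert_cons_succ] at hiS
        exact ih hp.of_cons S hS i j k' (by omega) (by omega) hklen hiS hkS
      | zero =>
        rw [Walk.getVert_zero] at hiS
        have hcq : q.getVert k' ∈ q.support :=
          Walk.mem_support_iff_exists_getVert.mpr ⟨k', rfl, hklen⟩
        have hxq : a ∉ q.support := ((Walk.cons_isPath_iff hadj q).mp hp).2
        have hw : (Walk.cons hadj (q.takeUntil _ hcq)).IsPath := by
          rw [Walk.cons_isPath_iff]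
          exact ⟨(hp.of_cons).takeUntil hcq,
            fun h => hxq (Walk.support_takeUntil_subset _ hcq h)⟩
        have ha' : a' ∈ S := by
          refine support_subset_of_connected hT hS hiS hkS _ hw a' ?_
          rw [Walk.support_cons]
          exact List.mem_cons_of_mem _ (Walk.start_mem_support _)
        exact ih hp.of_cons S hS 0 j k' (by omega) (by omega) hklen
          (by rw [Walk.getVert_zero]; exact ha') hkS

end Aux2

section Aux3

lemma pathGraph_no_cross {n : ℕ} {i j : Fin n} (hij : i.val + 1 = j.val) :
    ∀ {a b : Fin n} (_ : ((pathGraph n) \ fromEdgeSet {s(i, j)}).Walk a b),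
      a.val ≤ i.val → i.val < b.val → False := by
  intro a b w
  induction w with
  | nil => intro h1 h2; omega
  | @cons a c b hadj q ih =>
    intro h1 h2
    by_cases hc : c.val ≤ i.val
    · exact ih hc h2
    · rw [sdiff_adj, pathGraph_adj, fromEdgeSet_adj] at hadj
      obtain ⟨hor, hnot⟩ := hadj
      rcases hor with h | h
      · -- a + 1 = c
        have hai : a = i := Fin.ext (by omega)
        have hcj : c = j := Fin.ext (by omega)
        subst hai; subst hcj
        exact hnot ⟨rfl, fun he => by omega⟩
      · omega

lemma pathGraph_isAcyclic (n : ℕ) : (pathGraph n).IsAcyclic := by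
  rw [isAcyclic_iff_forall_adj_isBridge]
  intro u v hadj
  have hor := pathGraph_adj.mp hadj
  rw [isBridge_iff]
  refine fun hreach => ?_
  rcases hor with h | h
  · obtain ⟨w⟩ := hreach
    exact pathGraph_no_cross h w (le_refl _) (by omega)
  · obtain ⟨w⟩ := hreach.symm
    have : s(u, v) = s(v, u) := Sym2.eq_swap
    rw [this] at w
    exact pathGraph_no_cross h w (le_refl _) (by omega)

lemma pathGraph_induce_connected {n : ℕ} (J : Set (Fin (n + 1))) (hne : J.Nonempty)
    (hconv : ∀ i j k : Fin (n + 1), i ≤ j → j ≤ k → i ∈ J → k ∈ J → j ∈ J) :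
    ((pathGraph (n + 1)).induce J).Connected := by
  obtain ⟨e, he⟩ := hne
  rw [connected_iff]
  refine ⟨?_, ⟨⟨e, he⟩⟩⟩
  have key : ∀ (d : ℕ) (a b : Fin (n + 1)) (ha : a ∈ J) (hb : b ∈ J), a ≤ b →
      b.val - a.val = d → ((pathGraph (n + 1)).induce J).Reachable ⟨a, ha⟩ ⟨b, hb⟩ := by
    intro d
    induction d with
    | zero =>
      intro a b ha hb hab h0
      have : a = b := Fin.ext (by omega)
      subst this
      rfl
    | succ d ihd =>
      intro a b ha hb hab hd
      have hlt : a.val < b.val := by omega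
      have hbnd : a.val + 1 < n + 1 := by omega
      set a' : Fin (n + 1) := ⟨a.val + 1, hbnd⟩ with ha'def
      have ha' : a' ∈ J := hconv a a' b (by simp [Fin.le_def, ha'def]) (by simp [Fin.le_def, ha'def]; omega) ha hb
      have hadj : ((pathGraph (n + 1)).induce J).Adj ⟨a, ha⟩ ⟨a', ha'⟩ := by
        simp only [comap_adj, Function.Embedding.coe_subtype]
        exact pathGraph_adj.mpr (Or.inl rfl)
      exact hadj.reachable.trans (ihd a' b ha' hb (by simp [Fin.le_def, ha'def]; omega) (by simp [ha'def]; omega))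
  rintro ⟨a, ha⟩ ⟨b, hb⟩
  rcases le_total a b with h | h
  · exact key _ a b ha hb h rfl
  · exact (key _ b a hb ha h rfl).symm

lemma clique_in_bag {V ι : Type} [Fintype V] {G : SimpleGraph V} {T : SimpleGraph ι}
    {β : ι → Set V} (htd : IsTreeDecomposition G T β) {C : Set V} (hC : G.IsClique C) :
    ∃ x, C ⊆ β x := by
  classical
  obtain ⟨htree, hvert, hedge, hconn⟩ := htd
  have hne : Nonempty ι := htree.isConnected.nonempty
  by_cases hCe : C.Nonempty
  · obtain ⟨m, hm⟩ := helly_family htree.IsAcyclic htree.isConnected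
      (Set.toFinite C).toFinset (fun v => {x | v ∈ β x})
      (fun v _ => hconn v)
      (fun u hu v hv => by
        by_cases huv : u = v
        · subst huv
          obtain ⟨x, hx⟩ := hvert u
          exact ⟨x, hx, hx⟩
        · obtain ⟨x, hx1, hx2⟩ := hedge (hC ((Set.Finite.mem_toFinset _).mp hu)
            ((Set.Finite.mem_toFinset _).mp hv) huv)
          exact ⟨x, hx1, hx2⟩)
      (by rwa [Set.Finite.toFinset_nonempty])
    exact ⟨m, fun v hv => hm v ((Set.Finite.mem_toFinset _).mpr hv)⟩
  · exact ⟨Classical.arbitrary ι, by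
      rw [Set.not_nonempty_iff_eq_empty] at hCe
      simp [hCe]⟩

lemma trivial_treeDecomposition {V : Type} (G : SimpleGraph V) :
    IsTreeDecomposition G (⊥ : SimpleGraph Unit) (fun _ => (Set.univ : Set V)) := by
  have hconn : (⊥ : SimpleGraph Unit).Connected := by
    rw [connected_iff]
    exact ⟨fun a b => by rw [Subsingleton.elim a b], ⟨()⟩⟩
  refine ⟨⟨hconn, ?_⟩, fun v => ⟨(), trivial⟩, fun u v _ => ⟨(), trivial, trivial⟩, fun v => ?_⟩
  · intro v c hcyc
    cases c with
    | nil => exact hcyc.ne_nil rfl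
    | cons h q => exact h.elim
  · rw [connected_iff]
    refine ⟨fun a b => by rw [Subsingleton.elim a b], ⟨⟨(), trivial⟩⟩⟩

end Aux3

/-- If the vertex set of the finite graph `G` is the union of two cliques `A` and `B`
(i.e. `G` is co-bipartite), then `G` has a path decomposition of width equal to its
treewidth whose first bag contains `A` and whose last bag contains `B`. -/
theorem cobipartite_exists_pathDecomposition {V : Type} [Fintype V] (G : SimpleGraph V)
    (A B : Set V) (hUnion : A ∪ B = Set.univ)
    (hA : G.IsClique A) (hB : G.IsClique B) :
    ∃ (r : ℕ) (β : Fin (r + 1) → Set V),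
      IsPathDecomposition G (r + 1) β ∧
      decompWidth β = treewidth G ∧
      A ⊆ β 0 ∧ B ⊆ β (Fin.last r) := by
  classical
  -- an optimal tree decomposition exists
  have hset : { k : ℕ | ∃ (ι : Type) (T : SimpleGraph ι) (β : ι → Set V),
      IsTreeDecomposition G T β ∧ decompWidth β = k }.Nonempty :=
    ⟨decompWidth (fun _ : Unit => (Set.univ : Set V)), Unit, ⊥, _,
      trivial_treeDecomposition G, rfl⟩
  have hmem : treewidth G ∈ { k : ℕ | ∃ (ι : Type) (T : SimpleGraph ι) (β : ι → Set V),
      IsTreeDecomposition G T β ∧ decompWidth β = k } := Nat.sInf_mem hset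
  obtain ⟨ι, T, β₀, htd, hw⟩ := hmem
  have hTc : T.Connected := htd.1.isConnected
  have hTa : T.IsAcyclic := htd.1.IsAcyclic
  obtain ⟨xA, hxA⟩ := clique_in_bag htd hA
  obtain ⟨xB, hxB⟩ := clique_in_bag htd hB
  obtain ⟨w0⟩ := hTc.preconnected xA xB
  set P : T.Walk xA xB := w0.toPath.1 with hPdef
  have hP : P.IsPath := w0.toPath.2
  set r := P.length with hrdef
  set γ : Fin (r + 1) → Set V := fun i => β₀ (P.getVert i.val) with hγdef
  have hvert : ∀ v : V, ∃ x : Fin (r + 1), v ∈ γ x := by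
    intro v
    have hv : v ∈ A ∪ B := hUnion ▸ Set.mem_univ v
    rcases hv with hv | hv
    · exact ⟨0, by simpa [hγdef, Walk.getVert_zero] using hxA hv⟩
    · exact ⟨Fin.last r, by simpa [hγdef, Fin.val_last, hrdef, Walk.getVert_length] using hxB hv⟩
  -- key mixed-edge lemma
  have hmixed : ∀ u v : V, G.Adj u v → u ∈ A → v ∈ B →
      ∃ x : Fin (r + 1), u ∈ γ x ∧ v ∈ γ x := by
    intro u v huv hu hv
    obtain ⟨t, hut, hvt⟩ := htd.2.2.1 huv
    have hSu : (T.induce {x | u ∈ β₀ x}).Connected := htd.2.2.2 u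
    have hSv : (T.induce {x | v ∈ β₀ x}).Connected := htd.2.2.2 v
    obtain ⟨wp⟩ := hTc.preconnected xA t
    obtain ⟨wo⟩ := hTc.preconnected t xB
    obtain ⟨m, hm1, hm2, hm3⟩ := median hTa wp.toPath.1 P wo.toPath.1
      wp.toPath.2 hP wo.toPath.2
    have hmu : u ∈ β₀ m :=
      support_subset_of_connected hTa hSu (hxA hu) hut wp.toPath.1 wp.toPath.2 m hm1
    have hmv : v ∈ β₀ m :=
      support_subset_of_connected hTa hSv hvt (hxB hv) wo.toPath.1 wo.toPath.2 m hm3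
    obtain ⟨n, hn, hnle⟩ := Walk.mem_support_iff_exists_getVert.mp hm2
    refine ⟨⟨n, by omega⟩, ?_, ?_⟩
    · simpa [hγdef, hn] using hmu
    · simpa [hγdef, hn] using hmv
  have hedge : ∀ ⦃u v : V⦄, G.Adj u v → ∃ x : Fin (r + 1), u ∈ γ x ∧ v ∈ γ x := by
    intro u v huv
    have hu : u ∈ A ∪ B := hUnion ▸ Set.mem_univ u
    have hv : v ∈ A ∪ B := hUnion ▸ Set.mem_univ v
    rcases hu with hu | hu <;> rcases hv with hv | hv
    · exact ⟨0, by simpa [hγdef, Walk.getVert_zero] using hxA hu,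
        by simpa [hγdef, Walk.getVert_zero] using hxA hv⟩
    · exact hmixed u v huv hu hv
    · obtain ⟨x, h1, h2⟩ := hmixed v u huv.symm hv hu
      exact ⟨x, h2, h1⟩
    · exact ⟨Fin.last r, by simpa [hγdef, Fin.val_last, hrdef, Walk.getVert_length] using hxB hu,
        by simpa [hγdef, Fin.val_last, hrdef, Walk.getVert_length] using hxB hv⟩
  have hconvex : ∀ (v : V) (i j k : Fin (r + 1)), i ≤ j → j ≤ k →
      v ∈ γ i → v ∈ γ k → v ∈ γ j := by
    intro v i j k hij hjk hi hk
    exact convex_getVert hTa P hP {x | v ∈ β₀ x} (htd.2.2.2 v) i.val j.val k.val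
      hij hjk (by omega) hi hk
  have hpd : IsPathDecomposition G (r + 1) γ := ⟨hvert, hedge, hconvex⟩
  -- width bound
  have hbound : ∀ x : ι, (β₀ x).ncard - 1 ≤ Fintype.card V := by
    intro x
    refine le_trans (Nat.sub_le _ _) ?_
    calc (β₀ x).ncard ≤ (Set.univ : Set V).ncard :=
          Set.ncard_le_ncard (Set.subset_univ _) Set.finite_univ
      _ = Fintype.card V := by rw [Set.ncard_univ, Nat.card_eq_fintype_card]
  have hle1 : decompWidth γ ≤ decompWidth β₀ := by
    refine ciSup_le fun i => ?_
    exact le_ciSup (f := fun x : ι => (β₀ x).ncard - 1)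
      ⟨Fintype.card V, by rintro _ ⟨x, rfl⟩; exact hbound x⟩ (P.getVert i.val)
  have htd2 : IsTreeDecomposition G (pathGraph (r + 1)) γ := by
    refine ⟨⟨pathGraph_connected r, pathGraph_isAcyclic (r + 1)⟩, hvert, hedge, ?_⟩
    intro v
    refine pathGraph_induce_connected _ ?_ ?_
    · obtain ⟨x, hx⟩ := hvert v
      exact ⟨x, hx⟩
    · intro i j k hij hjk hi hk
      exact hconvex v i j k hij hjk hi hk
  have hle2 : treewidth G ≤ decompWidth γ :=
    Nat.sInf_le ⟨Fin (r + 1), pathGraph (r + 1), γ, htd2, rfl⟩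
  have hwidth : decompWidth γ = treewidth G := le_antisymm (hw ▸ hle1) hle2
  refine ⟨r, γ, hpd, hwidth, ?_, ?_⟩
  · intro a ha
    simpa [hγdef, Walk.getVert_zero] using hxA ha
  · intro b hb
    simpa [hγdef, Fin.val_last, hrdef, Walk.getVert_length] using hxB hb
end

section
/- For every finite simple graph G, the pathwidth of G equals the vertex separation number of G: pw(G) = vsn(G). -/
open SimpleGraph

/-- The vertex separation number of `G`: the minimum over linear orderings of the vertices
of the maximum over positions `i` of the number of vertices placed after position `i`
having a neighbour at position at most `i`. -/
noncomputable def vsn {V : Type} [Fintype V] (G : SimpleGraph V) : ℕ :=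
  sInf { k : ℕ | ∃ f : V ≃ Fin (Fintype.card V),
    ∀ i : Fin (Fintype.card V),
      {w : V | i < f w ∧ ∃ u : V, G.Adj u w ∧ f u ≤ i}.ncard ≤ k }

lemma decompWidth_le_of {V ι : Type} [Nonempty ι] {β : ι → Set V} {k : ℕ}
    (h : ∀ x, (β x).ncard - 1 ≤ k) : decompWidth β ≤ k :=
  ciSup_le h

lemma le_decompWidth {V ι : Type} [Finite ι] (β : ι → Set V) (x : ι) :
    (β x).ncard - 1 ≤ decompWidth β := by
  unfold decompWidth
  exact le_ciSup (f := fun x => (β x).ncard - 1) (Set.Finite.bddAbove (Set.finite_range _)) x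

lemma vsn_set_nonempty {V : Type} [Fintype V] (G : SimpleGraph V) :
    { k : ℕ | ∃ f : V ≃ Fin (Fintype.card V),
      ∀ i : Fin (Fintype.card V),
        {w : V | i < f w ∧ ∃ u : V, G.Adj u w ∧ f u ≤ i}.ncard ≤ k }.Nonempty := by
  refine ⟨Fintype.card V, Fintype.equivFin V, fun i => ?_⟩
  calc {w : V | i < (Fintype.equivFin V) w ∧ ∃ u : V, G.Adj u w ∧ (Fintype.equivFin V) u ≤ i}.ncard
      ≤ (Set.univ : Set V).ncard := Set.ncard_le_ncard (Set.subset_univ _) (Set.finite_univ)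
    _ = Fintype.card V := by simp [Set.ncard_univ, Nat.card_eq_fintype_card]

lemma pw_set_nonempty {V : Type} (G : SimpleGraph V) :
    { k : ℕ | ∃ (r : ℕ) (β : Fin (r + 1) → Set V),
      IsPathDecomposition G (r + 1) β ∧ decompWidth β = k }.Nonempty := by
  refine ⟨decompWidth (fun _ : Fin 1 => (Set.univ : Set V)), 0, fun _ => Set.univ, ?_, rfl⟩
  exact ⟨fun v => ⟨0, Set.mem_univ v⟩, fun u v _ => ⟨0, Set.mem_univ u, Set.mem_univ v⟩,
    fun v i j k _ _ _ _ => Set.mem_univ v⟩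

lemma pathwidth_le_vsn {V : Type} [Fintype V] (G : SimpleGraph V) :
    pathwidth G ≤ vsn G := by
  obtain ⟨f, hf⟩ := Nat.sInf_mem (vsn_set_nonempty G)
  set k := vsn G with hk
  rcases Nat.eq_zero_or_pos (Fintype.card V) with h0 | hpos
  · -- V is empty
    have hemptyV : IsEmpty V := by
      rw [← Fintype.card_eq_zero_iff]; exact h0
    have : pathwidth G ≤ 0 := by
      refine Nat.sInf_le ⟨0, fun _ => (∅ : Set V), ⟨fun v => (hemptyV.false v).elim,
        fun u v h => (hemptyV.false u).elim, fun v => (hemptyV.false v).elim⟩, ?_⟩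
      simp [decompWidth]
    omega
  · obtain ⟨r, hr⟩ : ∃ r, Fintype.card V = r + 1 := ⟨Fintype.card V - 1, by omega⟩
    set g : V ≃ Fin (r + 1) := f.trans (finCongr hr) with hg
    set β : Fin (r + 1) → Set V :=
      fun i => {w | g w = i ∨ (i < g w ∧ ∃ u, G.Adj u w ∧ g u ≤ i)} with hβ
    have hdec : IsPathDecomposition G (r + 1) β := by
      refine ⟨fun v => ⟨g v, Or.inl rfl⟩, ?_, ?_⟩
      · intro u v huv
        rcases lt_trichotomy (g u) (g v) with h | h | h
        · exact ⟨g u, Or.inl rfl, Or.inr ⟨h, u, huv, le_refl _⟩⟩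
        · exact absurd (g.injective h) huv.ne
        · exact ⟨g v, Or.inr ⟨h, v, huv.symm, le_refl _⟩, Or.inl rfl⟩
      · intro v i j kk hij hjk hvi hvk
        have hkv : kk ≤ g v := by
          rcases hvk with h | h
          · exact le_of_eq h.symm
          · exact le_of_lt h.1
        by_cases hjv : g v = j
        · exact Or.inl hjv
        · have hjlt : j < g v := lt_of_le_of_ne (le_trans hjk hkv) (Ne.symm hjv)
          rcases hvi with h | h
          · rw [h] at hjlt
            exact absurd hij (not_le_of_gt hjlt)
          · exact Or.inr ⟨hjlt, h.2.choose, h.2.choose_spec.1,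
              le_trans h.2.choose_spec.2 hij⟩
    have hwidth : ∀ i, (β i).ncard - 1 ≤ k := by
      intro i
      have hsub : β i ⊆ insert (g.symm i) {w | i < g w ∧ ∃ u, G.Adj u w ∧ g u ≤ i} := by
        intro w hw
        rcases hw with h | h
        · exact Or.inl (by rw [← h]; exact (g.symm_apply_apply w).symm)
        · exact Or.inr h
      have hS : {w : V | i < g w ∧ ∃ u, G.Adj u w ∧ g u ≤ i}.ncard ≤ k := by
        have hcast : {w : V | i < g w ∧ ∃ u, G.Adj u w ∧ g u ≤ i} =
            {w : V | (Fin.cast hr.symm i) < f w ∧ ∃ u, G.Adj u w ∧ f u ≤ (Fin.cast hr.symm i)} := by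
          ext w
          simp only [Set.mem_setOf_eq, hg, Equiv.trans_apply, finCongr_apply,
            Fin.lt_def, Fin.le_def, Fin.coe_cast]
        rw [hcast]
        exact hf _
      calc (β i).ncard - 1 ≤ (insert (g.symm i) {w | i < g w ∧ ∃ u, G.Adj u w ∧ g u ≤ i}).ncard - 1 :=
            Nat.sub_le_sub_right (Set.ncard_le_ncard hsub (Set.toFinite _)) 1
        _ ≤ ({w | i < g w ∧ ∃ u, G.Adj u w ∧ g u ≤ i}.ncard + 1) - 1 :=
            Nat.sub_le_sub_right (Set.ncard_insert_le _ _) 1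
        _ ≤ k := by omega
    have : pathwidth G ≤ decompWidth β := Nat.sInf_le ⟨r, β, hdec, rfl⟩
    exact le_trans this (decompWidth_le_of hwidth)

lemma vsn_le_pathwidth {V : Type} [Fintype V] (G : SimpleGraph V) :
    vsn G ≤ pathwidth G := by
  classical
  obtain ⟨r, β, hdec, hw⟩ := Nat.sInf_mem (pw_set_nonempty G)
  -- rV v = maximal bag index containing v
  have hne : ∀ v : V, (Finset.univ.filter (fun i => v ∈ β i)).Nonempty := by
    intro v
    obtain ⟨x, hx⟩ := hdec.1 v
    exact ⟨x, by simp [hx]⟩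
  set rV : V → Fin (r + 1) := fun v => (Finset.univ.filter (fun i => v ∈ β i)).max' (hne v)
    with hrV
  have hmem : ∀ v, v ∈ β (rV v) := by
    intro v
    have := Finset.max'_mem _ (hne v)
    simpa using this
  have hle : ∀ v i, v ∈ β i → i ≤ rV v := by
    intro v i hi
    exact Finset.le_max' _ i (by simp [hi])
  -- sort vertices by rV
  set n := Fintype.card V with hn
  set e : V ≃ Fin n := Fintype.equivFin V with he
  set σ : Equiv.Perm (Fin n) := Tuple.sort (rV ∘ e.symm) with hσ
  set f : V ≃ Fin n := e.trans σ.symm with hfdef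
  have hsort : ∀ u w : V, f u ≤ f w → rV u ≤ rV w := by
    intro u w h
    have := Tuple.monotone_sort (rV ∘ e.symm) h
    simpa [hfdef, Function.comp, ← hσ] using this
  refine Nat.sInf_le ⟨f, fun i => ?_⟩
  set x : V := f.symm i with hx
  set t : Fin (r + 1) := rV x with ht
  have hsubset : {w : V | i < f w ∧ ∃ u : V, G.Adj u w ∧ f u ≤ i} ⊆ β t \ {x} := by
    intro w ⟨hiw, u, hadj, hui⟩
    have hfx : f x = i := f.apply_symm_apply i
    have hwx : w ≠ x := by
      intro h; rw [h, hfx] at hiw; exact lt_irrefl _ hiw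
    have h1 : t ≤ rV w := hsort x w (by rw [hfx]; exact le_of_lt hiw)
    have h2 : rV u ≤ t := hsort u x (by rw [hfx]; exact hui)
    obtain ⟨s, hus, hws⟩ := hdec.2.1 hadj
    have hs : s ≤ t := le_trans (hle u s hus) h2
    exact ⟨hdec.2.2 w s t (rV w) hs h1 hws (hmem w), hwx⟩
  calc {w : V | i < f w ∧ ∃ u : V, G.Adj u w ∧ f u ≤ i}.ncard
      ≤ (β t \ {x}).ncard := Set.ncard_le_ncard hsubset (Set.toFinite _)
    _ = (β t).ncard - 1 := Set.ncard_diff_singleton_of_mem (hmem x)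
    _ ≤ decompWidth β := le_decompWidth β t
    _ = pathwidth G := hw

/-- Kinnersley's theorem: the pathwidth of every finite graph equals its vertex
separation number. -/
theorem pathwidth_eq_vsn {V : Type} [Fintype V] (G : SimpleGraph V) :
    pathwidth G = vsn G :=
  le_antisymm (pathwidth_le_vsn G) (vsn_le_pathwidth G)
end

section
/- Let G be a finite simple graph on n vertices. Then tw(F(G)) = pw(F(G)) = n + pw(G). -/
open SimpleGraph

/-- The graph `F(G)`: its vertices are two copies of `V(G)` (the left copy `Sum.inl v`
playing the role of `v` and the right copy `Sum.inr v` playing the role of `v'`).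
Both copies are cliques, `v` is adjacent to `v'` for every vertex `v` of `G`, and for
every edge `{u, v}` of `G` the edges `{u, v'}` and `{v, u'}` are present. -/
def FGraph {V : Type} (G : SimpleGraph V) : SimpleGraph (V ⊕ V) :=
  SimpleGraph.fromRel (fun a b =>
    match a, b with
    | Sum.inl u, Sum.inl v => u ≠ v
    | Sum.inr u, Sum.inr v => u ≠ v
    | Sum.inl u, Sum.inr v => u = v ∨ G.Adj u v
    | Sum.inr u, Sum.inl v => u = v ∨ G.Adj u v)

set_option linter.unusedSectionVars false

namespace TPW

variable {ι : Type} {T : SimpleGraph ι}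

lemma getVert_copy {u v u' v' : ι} (p : T.Walk u v) (hu : u = u') (hv : v = v') (i : ℕ) :
    (p.copy hu hv).getVert i = p.getVert i := by
  subst hu; subst hv; rfl

lemma getVert_drop (p : T.Walk u v) (n i : ℕ) :
    (p.drop n).getVert i = p.getVert (n + i) := by
  induction p generalizing n with
  | nil => cases n <;> simp [Walk.drop, Walk.getVert]
  | cons h q ih =>
    cases n with
    | zero => simp [Walk.drop, getVert_copy]
    | succ n =>
      show (q.drop n).getVert i = _
      rw [ih]
      rw [show n + 1 + i = (n + i) + 1 by omega, Walk.getVert_cons_succ]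

lemma getVert_inj {u v : ι} {p : T.Walk u v} (hp : p.IsPath) {i k : ℕ}
    (hi : i ≤ p.length) (hk : k ≤ p.length) (h : p.getVert i = p.getVert k) : i = k := by
  induction p generalizing i k with
  | nil => simp at hi hk; omega
  | cons ha q ih =>
    rw [Walk.cons_isPath_iff] at hp
    match i, k with
    | 0, 0 => rfl
    | 0, (k+1) =>
      exfalso
      apply hp.2
      rw [Walk.mem_support_iff_exists_getVert]
      rw [Walk.getVert_zero, Walk.getVert_cons_succ] at h
      refine ⟨k, h.symm, ?_⟩
      · simpa using hk
    | (i+1), 0 =>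
      exfalso
      apply hp.2
      rw [Walk.mem_support_iff_exists_getVert]
      rw [Walk.getVert_zero, Walk.getVert_cons_succ] at h
      refine ⟨i, h, ?_⟩
      · simpa using hi
    | (i+1), (k+1) =>
      have := ih hp.1 (by simpa using hi) (by simpa using hk)
        (by rwa [Walk.getVert_cons_succ, Walk.getVert_cons_succ] at h)
      omega

/-- In an acyclic graph, every walk between the endpoints of a path uses every edge
of the path. -/
lemma edge_mem_walk (hT : T.IsAcyclic) {u v : ι} (p : T.Walk u v) (hp : p.IsPath)
    (j : ℕ) (hj : j < p.length) (W : T.Walk u v) :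
    s(p.getVert j, p.getVert (j + 1)) ∈ W.edges := by
  induction p generalizing j with
  | nil => simp at hj
  | @cons u x w h q ih =>
    rw [Walk.cons_isPath_iff] at hp
    cases j with
    | zero =>
      have hbr : T.IsBridge s(u, x) := isAcyclic_iff_forall_adj_isBridge.mp hT h
      rw [isBridge_iff_adj_and_forall_walk_mem_edges] at hbr
      have hmem := hbr (W.append q.reverse)
      rw [Walk.edges_append, List.mem_append] at hmem
      have hx : ((Walk.cons h q).getVert 0) = u := Walk.getVert_zero _
      have hx1 : ((Walk.cons h q).getVert 1) = x := by
        rw [show (1:ℕ) = 0 + 1 from rfl, Walk.getVert_cons_succ, Walk.getVert_zero]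
      rw [hx, hx1]
      rcases hmem with hmem | hmem
      · exact hmem
      · exfalso
        rw [Walk.edges_reverse, List.mem_reverse] at hmem
        exact hp.2 (Walk.fst_mem_support_of_mem_edges q hmem)
    | succ j =>
      have hj' : j < q.length := by simpa using hj
      have hmem := ih hp.1 j hj' (Walk.cons h.symm W)
      rw [Walk.edges_cons, List.mem_cons] at hmem
      rw [Walk.getVert_cons_succ, Walk.getVert_cons_succ]
      rcases hmem with hmem | hmem
      · exfalso
        have h1 : q.getVert j ∈ q.support := by
          rw [Walk.mem_support_iff_exists_getVert]; exact ⟨j, rfl, by omega⟩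
        have h2 : q.getVert (j+1) ∈ q.support := by
          rw [Walk.mem_support_iff_exists_getVert]; exact ⟨j+1, rfl, by omega⟩
        rw [Sym2.eq_iff] at hmem
        rcases hmem with ⟨hm1, hm2⟩ | ⟨hm1, hm2⟩
        · exact hp.2 (hm2 ▸ h2)
        · exact hp.2 (hm1 ▸ h1)
      · exact hmem

/-- Length of `Walk.drop`. -/
lemma length_drop (p : T.Walk u v) (n : ℕ) : (p.drop n).length = p.length - n := by
  induction p generalizing n with
  | nil => cases n <;> simp [Walk.drop]
  | cons h q ih =>
    cases n with
    | zero => simp [Walk.drop]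
    | succ n =>
      show (q.drop n).length = _
      rw [ih]
      simp [Nat.succ_sub_succ]

/-- A generalization: every walk between two vertices of a path uses every edge of the
path strictly between them. -/
lemma edge_mem_walk' (hT : T.IsAcyclic) {u v : ι} (p : T.Walk u v) (hp : p.IsPath)
    {i j k : ℕ} (hij : i ≤ j) (hjk : j + 1 ≤ k) (hk : k ≤ p.length)
    (W : T.Walk (p.getVert i) (p.getVert k)) :
    s(p.getVert j, p.getVert (j + 1)) ∈ W.edges := by
  induction p generalizing i j k with
  | nil => simp at hk; omega
  | @cons u x w h q ih =>
    cases i with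
    | succ i =>
      cases j with
      | zero => omega
      | succ j =>
        cases k with
        | zero => omega
        | succ k =>
          revert W
          simp only [Walk.getVert_cons_succ]
          intro W
          exact ih ((Walk.cons_isPath_iff _ _).mp hp).1 (i := i) (j := j) (k := k)
            (by omega) (by omega) (by simpa using hk) W
    | zero =>
      have hW2 : s((Walk.cons h q).getVert j, (Walk.cons h q).getVert (j+1)) ∈
          ((W.copy (Walk.getVert_zero _) rfl).append ((Walk.cons h q).drop k)).edges :=
        edge_mem_walk hT (Walk.cons h q) hp j (lt_of_lt_of_le (by omega : j < k) hk) _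
      rw [Walk.edges_append, List.mem_append] at hW2
      rcases hW2 with hW2 | hW2
      · simpa using hW2
      · exfalso
        have hsup := Walk.fst_mem_support_of_mem_edges _ hW2
        rw [Walk.mem_support_iff_exists_getVert] at hsup
        obtain ⟨t, ht, htle⟩ := hsup
        rw [getVert_drop] at ht
        rw [length_drop] at htle
        have : k + t = j := getVert_inj hp (by omega) (by omega) ht
        omega

lemma exists_walk_in_set {C : Set ι} (hC : (T.induce C).Connected) {x y : ι}
    (hx : x ∈ C) (hy : y ∈ C) : ∃ w : T.Walk x y, ∀ z ∈ w.support, z ∈ C := by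
  obtain ⟨w⟩ := hC ⟨x, hx⟩ ⟨y, hy⟩
  refine ⟨w.map (Embedding.induce C).toHom, ?_⟩
  intro z hz
  have hz' : z ∈ (w.map (Embedding.induce C).toHom).support := hz
  rw [Walk.support_map, List.mem_map] at hz'
  obtain ⟨a, _, rfl⟩ := hz'
  exact a.2

/-- Interval property: if a connected set contains two vertices of a path, it contains
all vertices in between. -/
lemma mem_of_between (hT : T.IsAcyclic) {u v : ι} {p : T.Walk u v} (hp : p.IsPath)
    {C : Set ι} (hC : (T.induce C).Connected) {i j k : ℕ} (hij : i ≤ j) (hjk : j ≤ k)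
    (hk : k ≤ p.length) (hiC : p.getVert i ∈ C) (hkC : p.getVert k ∈ C) :
    p.getVert j ∈ C := by
  by_contra hj
  have hjk' : j < k := lt_of_le_of_ne hjk (by rintro rfl; exact hj hkC)
  obtain ⟨W, hW⟩ := exists_walk_in_set hC hiC hkC
  have := edge_mem_walk' hT p hp hij hjk' hk W
  exact hj (hW _ (Walk.fst_mem_support_of_mem_edges W this))

section TwoSets

variable {u v y : ι} {p : T.Walk u v} {C D : Set ι}

/-- Covering: if `C` and `D` are connected sets meeting at `y`, with `u ∈ C`, `v ∈ D`,
then every vertex of the path from `u` to `v` is in `C ∪ D`. -/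
lemma cover_of_meet (hT : T.IsAcyclic) (hp : p.IsPath)
    (hC : (T.induce C).Connected) (hD : (T.induce D).Connected)
    (hu : u ∈ C) (hv : v ∈ D) (hyC : y ∈ C) (hyD : y ∈ D) :
    ∀ i ≤ p.length, p.getVert i ∈ C ∨ p.getVert i ∈ D := by
  obtain ⟨q1, hq1⟩ := exists_walk_in_set hC hu hyC
  obtain ⟨q2, hq2⟩ := exists_walk_in_set hD hyD hv
  intro i hi
  rcases eq_or_lt_of_le hi with rfl | hi
  · right; rw [Walk.getVert_length]; exact hv
  · have hmem := edge_mem_walk hT p hp i hi (q1.append q2)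
    rw [Walk.edges_append, List.mem_append] at hmem
    rcases hmem with hmem | hmem
    · exact Or.inl (hq1 _ (Walk.fst_mem_support_of_mem_edges _ hmem))
    · exact Or.inr (hq2 _ (Walk.fst_mem_support_of_mem_edges _ hmem))

/-- Crossing: if `C` and `D` are connected sets meeting at `y`, with `u ∈ C`, `v ∈ D`,
then some vertex of the path from `u` to `v` is in `C ∩ D`. -/
lemma meet_on_path (hT : T.IsAcyclic) (hp : p.IsPath)
    (hC : (T.induce C).Connected) (hD : (T.induce D).Connected)
    (hu : u ∈ C) (hv : v ∈ D) (hyC : y ∈ C) (hyD : y ∈ D) :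
    ∃ i ≤ p.length, p.getVert i ∈ C ∧ p.getVert i ∈ D := by
  by_contra hcon
  push_neg at hcon
  obtain ⟨q1, hq1⟩ := exists_walk_in_set hC hu hyC
  obtain ⟨q2, hq2⟩ := exists_walk_in_set hD hyD hv
  set S : Set ℕ := {i | i ≤ p.length ∧ p.getVert i ∈ D} with hS
  have hSne : S.Nonempty := ⟨p.length, le_refl _, by rw [Walk.getVert_length]; exact hv⟩
  set s := sInf S with hs
  have hsS : s ∈ S := Nat.sInf_mem hSne
  obtain ⟨hslen, hsD⟩ := hsS
  have hs0 : 0 < s := by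
    rcases Nat.eq_zero_or_pos s with h | h
    · exfalso
      rw [h] at hsD
      exact hcon 0 (Nat.zero_le _) (by rw [Walk.getVert_zero]; exact hu) hsD
    · exact h
  have hs1 : s - 1 ∉ S := fun hmem => by
    have := Nat.sInf_le hmem; omega
  have hs1D : p.getVert (s - 1) ∉ D := fun hmem => hs1 ⟨by omega, hmem⟩
  have hsC : p.getVert s ∉ C := fun hmem => hcon s hslen hmem hsD
  have hmem := edge_mem_walk hT p hp (s - 1) (by omega) (q1.append q2)
  rw [show s - 1 + 1 = s by omega] at hmem
  rw [Walk.edges_append, List.mem_append] at hmem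
  rcases hmem with hmem | hmem
  · exact hsC (hq1 _ (Walk.snd_mem_support_of_mem_edges _ hmem))
  · exact hs1D (hq2 _ (Walk.fst_mem_support_of_mem_edges _ hmem))

end TwoSets

/-- Gate property: for a nonempty connected set `C` and a vertex `x`, there is a gate
`g ∈ C` lying on every path from `x` to any vertex of `C`. -/
lemma exists_gate (hT : T.IsAcyclic) {C : Set ι} (hC : (T.induce C).Connected)
    {x c0 : ι} (hc0 : c0 ∈ C) (p : T.Walk x c0) (hp : p.IsPath) :
    ∃ g ∈ C, ∀ c ∈ C, ∀ (W : T.Walk x c), W.IsPath → g ∈ W.support := by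
  set S : Set ℕ := {i | i ≤ p.length ∧ p.getVert i ∈ C} with hS
  have hSne : S.Nonempty := ⟨p.length, le_refl _, by rw [Walk.getVert_length]; exact hc0⟩
  set t := sInf S with ht
  have htS : t ∈ S := Nat.sInf_mem hSne
  obtain ⟨htlen, htC⟩ := htS
  refine ⟨p.getVert t, htC, ?_⟩
  intro c hc W hW
  rcases Nat.eq_zero_or_pos t with h0 | h0
  · rw [h0, Walk.getVert_zero]
    exact W.start_mem_support
  · obtain ⟨q, hq⟩ := exists_walk_in_set hC hc htC
    obtain ⟨q2, hq2⟩ := exists_walk_in_set hC htC hc0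
    have hmem := edge_mem_walk hT p hp (t - 1) (by omega) (W.append (q.append q2))
    rw [show t - 1 + 1 = t by omega] at hmem
    rw [Walk.edges_append, Walk.edges_append, List.mem_append, List.mem_append] at hmem
    rcases hmem with hmem | hmem | hmem
    · exact Walk.snd_mem_support_of_mem_edges _ hmem
    · exfalso
      have h1 : p.getVert (t - 1) ∈ C := hq _ (Walk.fst_mem_support_of_mem_edges _ hmem)
      have : t - 1 ∈ S := ⟨by omega, h1⟩
      have := Nat.sInf_le this
      omega
    · exfalso
      have h1 : p.getVert (t - 1) ∈ C := hq2 _ (Walk.fst_mem_support_of_mem_edges _ hmem)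
      have : t - 1 ∈ S := ⟨by omega, h1⟩
      have := Nat.sInf_le this
      omega

end TPW

open TPW
namespace TPW2

/-- Every finite clique of `G` is contained in some bag of a tree decomposition. -/
lemma clique_in_bag {V ι : Type} {G : SimpleGraph V} {T : SimpleGraph ι} {β : ι → Set V}
    (hd : IsTreeDecomposition G T β) {S : Set V} (hS : S.Finite)
    (hclique : S.Pairwise G.Adj) : ∃ x : ι, S ⊆ β x := by
  classical
  refine Set.Finite.induction_on (motive := fun S _ => S.Pairwise G.Adj → ∃ x : ι, S ⊆ β x)
    S hS (fun _ => ?_) ?_ hclique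
  · obtain ⟨x⟩ := hd.1.isConnected.nonempty
    exact ⟨x, by simp⟩
  · intro a S haS hSfin ih hclique
    obtain ⟨x, hx⟩ := ih (hclique.mono (Set.subset_insert a S))
    have hadj : ∀ s ∈ S, G.Adj a s := fun s hs =>
      hclique (Set.mem_insert a S) (Set.mem_insert_of_mem _ hs) (fun h => haS (h ▸ hs))
    obtain ⟨c0, hc0⟩ := hd.2.1 a
    obtain ⟨w⟩ := hd.1.isConnected.preconnected x c0
    obtain ⟨g, hgC, hgate⟩ := exists_gate hd.1.IsAcyclic (hd.2.2.2 a) hc0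
      w.bypass w.bypass_isPath
    refine ⟨g, ?_⟩
    intro b hb
    rcases Set.mem_insert_iff.mp hb with rfl | hb
    · exact hgC
    · obtain ⟨y, hya, hyb⟩ := hd.2.2.1 (hadj b hb)
      obtain ⟨W0, hW0⟩ := exists_walk_in_set (hd.2.2.2 b) (hx hb) hyb
      have hg : g ∈ W0.bypass.support := hgate y hya W0.bypass W0.bypass_isPath
      exact hW0 _ (W0.support_bypass_subset hg)

section FGAdj
variable {V : Type} {G : SimpleGraph V}

lemma FGraph_adj_ll {u v : V} : (FGraph G).Adj (Sum.inl u) (Sum.inl v) ↔ u ≠ v := by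
  simp only [FGraph, SimpleGraph.fromRel_adj]
  constructor
  · rintro ⟨h, _⟩ rfl; exact h rfl
  · intro h; exact ⟨by simpa using h, Or.inl h⟩

lemma FGraph_adj_rr {u v : V} : (FGraph G).Adj (Sum.inr u) (Sum.inr v) ↔ u ≠ v := by
  simp only [FGraph, SimpleGraph.fromRel_adj]
  constructor
  · rintro ⟨h, _⟩ rfl; exact h rfl
  · intro h; exact ⟨by simpa using h, Or.inl h⟩

lemma FGraph_adj_lr {u v : V} :
    (FGraph G).Adj (Sum.inl u) (Sum.inr v) ↔ u = v ∨ G.Adj u v := by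
  simp only [FGraph, SimpleGraph.fromRel_adj]
  constructor
  · rintro ⟨_, h | h⟩
    · exact h
    · rcases h with h | h
      · exact Or.inl h.symm
      · exact Or.inr h.symm
  · intro h; exact ⟨by simp, Or.inl h⟩

end FGAdj

section Width
variable {V ι : Type} [Finite V] (β : ι → Set V)

lemma bag_pred_le_decompWidth (x : ι) : (β x).ncard - 1 ≤ decompWidth β := by
  apply le_ciSup (f := fun x => (β x).ncard - 1)
  refine ⟨Nat.card V, ?_⟩
  rintro n ⟨y, rfl⟩
  exact le_trans (Nat.sub_le _ _)
    (le_trans (Set.ncard_le_ncard (Set.subset_univ _) Set.finite_univ)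
      (le_of_eq (Set.ncard_univ V)))

lemma decompWidth_le {k : ℕ} (h : ∀ x, (β x).ncard - 1 ≤ k) : decompWidth β ≤ k :=
  ciSup_le' h

end Width

/-- The key lower bound: any tree decomposition of `F(G)` has width at least
`|V| + pw(G)`. -/
lemma lower_bound {V ι : Type} [Fintype V] [Nonempty V] (G : SimpleGraph V)
    {T : SimpleGraph ι} {β : ι → Set (V ⊕ V)}
    (hd : IsTreeDecomposition (FGraph G) T β) :
    Fintype.card V + pathwidth G ≤ decompWidth β := by
  classical
  set k := decompWidth β with hk
  set n := Fintype.card V with hn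
  have hac : T.IsAcyclic := hd.1.IsAcyclic
  -- bags containing all of the left copy resp. right copy
  obtain ⟨x0, hx0⟩ : ∃ x : ι, Set.range (Sum.inl : V → V ⊕ V) ⊆ β x := by
    apply clique_in_bag hd (Set.finite_range _)
    rintro _ ⟨u, rfl⟩ _ ⟨v, rfl⟩ hne
    exact FGraph_adj_ll.mpr (fun h => hne (by rw [h]))
  obtain ⟨x1, hx1⟩ : ∃ x : ι, Set.range (Sum.inr : V → V ⊕ V) ⊆ β x := by
    apply clique_in_bag hd (Set.finite_range _)
    rintro _ ⟨u, rfl⟩ _ ⟨v, rfl⟩ hne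
    exact FGraph_adj_rr.mpr (fun h => hne (by rw [h]))
  obtain ⟨w⟩ := hd.1.isConnected.preconnected x0 x1
  set p := w.bypass with hpdef
  have hp : p.IsPath := w.bypass_isPath
  set m := p.length with hm
  have hgv0 : p.getVert 0 = x0 := p.getVert_zero
  have hgvm : p.getVert m = x1 := p.getVert_length
  -- connectivity of the vertex subtrees
  have hconn : ∀ a : V ⊕ V, (T.induce {z : ι | a ∈ β z}).Connected := hd.2.2.2
  -- membership at endpoints
  have hL0 : ∀ v : V, Sum.inl v ∈ β (p.getVert 0) := fun v => by
    rw [hgv0]; exact hx0 ⟨v, rfl⟩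
  have hRm : ∀ v : V, Sum.inr v ∈ β (p.getVert m) := fun v => by
    rw [hgvm]; exact hx1 ⟨v, rfl⟩
  -- covering
  have hcover : ∀ (v : V) (i : ℕ), i ≤ m →
      Sum.inl v ∈ β (p.getVert i) ∨ Sum.inr v ∈ β (p.getVert i) := by
    intro v i hi
    obtain ⟨y, hy1, hy2⟩ := hd.2.2.1 (FGraph_adj_lr.mpr (Or.inl rfl) : (FGraph G).Adj (Sum.inl v) (Sum.inr v))
    exact cover_of_meet hac hp (hconn (Sum.inl v)) (hconn (Sum.inr v))
      (by rw [← hgv0]; exact hL0 v) (by rw [← hgvm]; exact hRm v) hy1 hy2 i hi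
  -- meeting
  have hmeet : ∀ (u v : V), (u = v ∨ G.Adj u v) → ∃ i ≤ m,
      Sum.inl u ∈ β (p.getVert i) ∧ Sum.inr v ∈ β (p.getVert i) := by
    intro u v huv
    obtain ⟨y, hy1, hy2⟩ := hd.2.2.1 (FGraph_adj_lr.mpr huv)
    exact meet_on_path hac hp (hconn (Sum.inl u)) (hconn (Sum.inr v))
      (by rw [← hgv0]; exact hL0 u) (by rw [← hgvm]; exact hRm v) hy1 hy2
  -- left and right index sets
  set a : V → ℕ := fun u => sSup {i | i ≤ m ∧ Sum.inl u ∈ β (p.getVert i)} with ha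
  set b : V → ℕ := fun u => sInf {i | i ≤ m ∧ Sum.inr u ∈ β (p.getVert i)} with hb
  have haSpec : ∀ u, a u ≤ m ∧ Sum.inl u ∈ β (p.getVert (a u)) := by
    intro u
    have : a u ∈ {i | i ≤ m ∧ Sum.inl u ∈ β (p.getVert i)} :=
      Nat.sSup_mem ⟨0, Nat.zero_le _, hL0 u⟩ ⟨m, fun i hi => hi.1⟩
    exact this
  have hbSpec : ∀ u, b u ≤ m ∧ Sum.inr u ∈ β (p.getVert (b u)) := by
    intro u
    have : b u ∈ {i | i ≤ m ∧ Sum.inr u ∈ β (p.getVert i)} :=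
      Nat.sInf_mem ⟨m, le_refl _, hRm u⟩
    exact this
  have hmonoL : ∀ (u : V) (i : ℕ), i ≤ a u → Sum.inl u ∈ β (p.getVert i) := by
    intro u i hi
    exact mem_of_between hac hp (hconn (Sum.inl u)) (Nat.zero_le i) hi (haSpec u).1
      (hL0 u) (haSpec u).2
  have hmonoR : ∀ (u : V) (i : ℕ), b u ≤ i → i ≤ m → Sum.inr u ∈ β (p.getVert i) := by
    intro u i hbi him
    exact mem_of_between hac hp (hconn (Sum.inr u)) hbi him (le_refl m)
      (hbSpec u).2 (hRm u)
  have hba : ∀ u v : V, (u = v ∨ G.Adj u v) → b v ≤ a u := by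
    intro u v huv
    obtain ⟨i, him, hiu, hiv⟩ := hmeet u v huv
    have h1 : b v ≤ i := Nat.sInf_le ⟨him, hiv⟩
    have h2 : i ≤ a u := le_csSup ⟨m, fun j hj => hj.1⟩ ⟨him, hiu⟩
    omega
  -- the path decomposition of G
  set D : Fin (m + 1) → Set V := fun i =>
    {v | Sum.inl v ∈ β (p.getVert i) ∧ Sum.inr v ∈ β (p.getVert i)} with hD
  have hmemD : ∀ (v : V) (i : Fin (m+1)), v ∈ D i ↔
      (Sum.inl v ∈ β (p.getVert i) ∧ Sum.inr v ∈ β (p.getVert i)) := fun v i => Iff.rfl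
  have hDcover : ∀ v : V, v ∈ D ⟨b v, by have := (hbSpec v).1; omega⟩ := by
    intro v
    have h1 : b v ≤ a v := hba v v (Or.inl rfl)
    exact ⟨hmonoL v (b v) h1, hmonoR v (b v) (le_refl _) (hbSpec v).1⟩
  have hPD : IsPathDecomposition G (m + 1) D := by
    refine ⟨?_, ?_, ?_⟩
    · intro v
      have hbm : b v ≤ m := (hbSpec v).1
      exact ⟨⟨b v, by omega⟩, hDcover v⟩
    · intro u v huv
      have h1 : b u ≤ a u := hba u u (Or.inl rfl)
      have h2 : b v ≤ a v := hba v v (Or.inl rfl)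
      have h3 : b v ≤ a u := hba u v (Or.inr huv)
      have h4 : b u ≤ a v := hba v u (Or.inr huv.symm)
      have ham : a u ≤ m := (haSpec u).1
      have hbm : b u ≤ m := (hbSpec u).1
      have ham' : a v ≤ m := (haSpec v).1
      have hbm' : b v ≤ m := (hbSpec v).1
      refine ⟨⟨max (b u) (b v), by omega⟩, ?_, ?_⟩
      · exact ⟨hmonoL u (max (b u) (b v)) (by omega),
          hmonoR u (max (b u) (b v)) (le_max_left _ _) (by omega)⟩
      · exact ⟨hmonoL v (max (b u) (b v)) (by omega),
          hmonoR v (max (b u) (b v)) (le_max_right _ _) (by omega)⟩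
    · intro v i j k hij hjk hvi hvk
      have hkm : (k : ℕ) ≤ m := by omega
      refine ⟨?_, ?_⟩
      · exact mem_of_between hac hp (hconn (Sum.inl v)) (hij : (i:ℕ) ≤ j) hjk hkm hvi.1 hvk.1
      · exact mem_of_between hac hp (hconn (Sum.inr v)) (hij : (i:ℕ) ≤ j) hjk hkm hvi.2 hvk.2
  -- the counting argument
  have hcount : ∀ i : Fin (m + 1), n + (D i).ncard ≤ (β (p.getVert i)).ncard := by
    intro i
    have him : (i : ℕ) ≤ m := by omega
    set L : Set V := {v | Sum.inl v ∈ β (p.getVert i)} with hLdef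
    set R : Set V := {v | Sum.inr v ∈ β (p.getVert i)} with hRdef
    have hunion : L ∪ R = Set.univ := by
      ext v; simp only [Set.mem_union, Set.mem_univ, iff_true]
      exact hcover v i him
    have hinter : L ∩ R = D i := rfl
    have hsum : L.ncard + R.ncard = n + (D i).ncard := by
      have := Set.ncard_union_add_ncard_inter L R (Set.toFinite L) (Set.toFinite R)
      rw [hunion, hinter, Set.ncard_univ, Nat.card_eq_fintype_card] at this
      omega
    have himg : (Sum.inl '' L ∪ Sum.inr '' R : Set (V ⊕ V)) ⊆ β (p.getVert i) := by
      rintro z (⟨v, hv, rfl⟩ | ⟨v, hv, rfl⟩)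
      · exact hv
      · exact hv
    have hdisj : Disjoint (Sum.inl '' L : Set (V ⊕ V)) (Sum.inr '' R) := by
      rw [Set.disjoint_iff_forall_ne]
      rintro _ ⟨v, _, rfl⟩ _ ⟨u, _, rfl⟩
      simp
    have hcard : (Sum.inl '' L ∪ Sum.inr '' R : Set (V ⊕ V)).ncard
        = L.ncard + R.ncard := by
      rw [Set.ncard_union_eq hdisj (Set.toFinite _) (Set.toFinite _),
        Set.ncard_image_of_injective _ Sum.inl_injective,
        Set.ncard_image_of_injective _ Sum.inr_injective]
    calc n + (D i).ncard = (Sum.inl '' L ∪ Sum.inr '' R : Set (V ⊕ V)).ncard := by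
          rw [hcard, hsum]
      _ ≤ (β (p.getVert i)).ncard := Set.ncard_le_ncard himg (Set.toFinite _)
  have hbag : ∀ i : Fin (m + 1), (β (p.getVert i)).ncard ≤ k + 1 := by
    intro i
    have h1 := bag_pred_le_decompWidth β (p.getVert i)
    omega
  -- n ≤ k
  have hnk : n ≤ k := by
    obtain ⟨v0⟩ := ‹Nonempty V›
    have h1 : v0 ∈ D ⟨b v0, by have := (hbSpec v0).1; omega⟩ := hDcover v0
    have h2 : 1 ≤ (D ⟨b v0, by have := (hbSpec v0).1; omega⟩).ncard := by
      rw [Nat.one_le_iff_ne_zero]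
      intro hzero
      rw [Set.ncard_eq_zero (Set.toFinite _)] at hzero
      rw [hzero] at h1
      exact h1
    have h3 := hcount ⟨b v0, by have := (hbSpec v0).1; omega⟩
    have h4 := hbag ⟨b v0, by have := (hbSpec v0).1; omega⟩
    omega
  -- conclude
  have hwidth : decompWidth D ≤ k - n := by
    apply decompWidth_le
    intro i
    have h1 := hcount i
    have h2 := hbag i
    omega
  have hpw : pathwidth G ≤ k - n := by
    have hmem : decompWidth D ∈ { j : ℕ | ∃ (r : ℕ) (β' : Fin (r + 1) → Set V),
        IsPathDecomposition G (r + 1) β' ∧ decompWidth β' = j } := ⟨m, D, hPD, rfl⟩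
    exact le_trans (Nat.sInf_le hmem) hwidth
  omega

section PathGraphTree

lemma walk_pred_iff {α : Type} {H : SimpleGraph α} {P : α → Prop}
    (h : ∀ x y, H.Adj x y → (P x ↔ P y)) {u v : α} (w : H.Walk u v) : P u ↔ P v := by
  induction w with
  | nil => exact Iff.rfl
  | cons ha _ ih => exact (h _ _ ha).trans ih

lemma pathGraph_not_reachable_aux {n : ℕ} {u v : Fin (n + 1)}
    (huv : (u : ℕ) + 1 = (v : ℕ)) :
    ¬((pathGraph (n + 1)) \ fromEdgeSet {s(u, v)}).Reachable u v := by
  rintro ⟨w⟩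
  have key : ∀ x y : Fin (n + 1),
      ((pathGraph (n + 1)) \ fromEdgeSet {s(u, v)}).Adj x y →
      (((x : ℕ) ≤ u) ↔ ((y : ℕ) ≤ u)) := by
    intro x y hxy
    rw [sdiff_adj, pathGraph_adj, fromEdgeSet_adj] at hxy
    obtain ⟨hadj, hne⟩ := hxy
    push_neg at hne
    constructor <;> intro h <;> by_contra hc
    · have hx : (x : ℕ) = (u : ℕ) := by omega
      have hy : (y : ℕ) = (v : ℕ) := by omega
      have hxu : x = u := Fin.ext hx
      have hyv : y = v := Fin.ext hy
      subst hxu; subst hyv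
      have := hne (Set.mem_singleton _)
      rw [this] at huv; omega
    · have hx : (x : ℕ) = (v : ℕ) := by omega
      have hy : (y : ℕ) = (u : ℕ) := by omega
      have hxu : x = v := Fin.ext hx
      have hyv : y = u := Fin.ext hy
      subst hxu; subst hyv
      have := hne (by rw [Sym2.eq_swap]; exact Set.mem_singleton _)
      rw [this] at huv; omega
  have := walk_pred_iff key w
  omega

lemma pathGraph_isTree (n : ℕ) : (pathGraph (n + 1)).IsTree := by
  constructor
  · exact pathGraph_connected n
  · rw [isAcyclic_iff_forall_adj_isBridge]
    intro u v huv
    rw [isBridge_iff]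
    rw [pathGraph_adj] at huv
    rcases huv with h | h
    · exact pathGraph_not_reachable_aux h
    · intro hr
      apply pathGraph_not_reachable_aux h
      rw [Sym2.eq_swap]
      exact hr.symm

lemma pathGraph_induce_connected {n : ℕ} {S : Set (Fin (n + 1))} (hne : S.Nonempty)
    (hint : ∀ i j k : Fin (n + 1), i ≤ j → j ≤ k → i ∈ S → k ∈ S → j ∈ S) :
    ((pathGraph (n + 1)).induce S).Connected := by
  have reach : ∀ (d : ℕ) (x y : Fin (n + 1)) (hx : x ∈ S) (hy : y ∈ S),
      (y : ℕ) = (x : ℕ) + d →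
      ((pathGraph (n + 1)).induce S).Reachable ⟨x, hx⟩ ⟨y, hy⟩ := by
    intro d
    induction d with
    | zero =>
      intro x y hx hy h
      have : x = y := Fin.ext (by omega)
      subst this
      exact Reachable.refl _
    | succ d ih =>
      intro x y hx hy h
      have hxn : (x : ℕ) + 1 < n + 1 := by have := y.isLt; omega
      have hx1S : (⟨(x : ℕ) + 1, hxn⟩ : Fin (n + 1)) ∈ S := by
        apply hint x ⟨(x : ℕ) + 1, hxn⟩ y
        · rw [Fin.le_def]; simp
        · rw [Fin.le_def]; simp; omega
        · exact hx
        · exact hy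
      have hadj : ((pathGraph (n + 1)).induce S).Adj ⟨x, hx⟩ ⟨⟨(x : ℕ) + 1, hxn⟩, hx1S⟩ := by
        show (pathGraph (n + 1)).Adj x ⟨(x : ℕ) + 1, hxn⟩
        rw [pathGraph_adj]
        left; rfl
      exact (hadj.reachable).trans (ih ⟨(x : ℕ) + 1, hxn⟩ y hx1S hy (by simp; omega))
  obtain ⟨x0, hx0⟩ := hne
  rw [connected_iff]
  refine ⟨?_, ⟨⟨x0, hx0⟩⟩⟩
  rintro ⟨x, hx⟩ ⟨y, hy⟩
  rcases le_total x y with h | h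
  · exact reach ((y : ℕ) - (x : ℕ)) x y hx hy (by rw [Fin.le_def] at h; omega)
  · exact (reach ((x : ℕ) - (y : ℕ)) y x hy hx (by rw [Fin.le_def] at h; omega)).symm

end PathGraphTree

section General
variable {V : Type} (G : SimpleGraph V)

lemma trivial_pd : IsPathDecomposition G (0 + 1) (fun _ => (Set.univ : Set V)) :=
  ⟨fun v => ⟨0, Set.mem_univ v⟩, fun u v _ => ⟨0, Set.mem_univ u, Set.mem_univ v⟩,
    fun v _ _ _ _ _ _ _ => Set.mem_univ v⟩

lemma pw_set_nonempty : { k : ℕ | ∃ (r : ℕ) (β : Fin (r + 1) → Set V),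
    IsPathDecomposition G (r + 1) β ∧ decompWidth β = k }.Nonempty :=
  ⟨_, 0, fun _ => Set.univ, trivial_pd G, rfl⟩

lemma bot_unit_isTree : (⊥ : SimpleGraph Unit).IsTree := by
  constructor
  · rw [connected_iff]
    refine ⟨fun a b => ?_, ⟨()⟩⟩
    have : a = b := rfl
    subst this
    exact Reachable.refl _
  · intro v c hc
    cases c with
    | nil => simp [Walk.IsCycle, Walk.IsCircuit] at hc
    | cons h q => simp at h

lemma trivial_td : IsTreeDecomposition G (⊥ : SimpleGraph Unit) (fun _ => (Set.univ : Set V)) := by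
  refine ⟨bot_unit_isTree, fun v => ⟨(), Set.mem_univ v⟩,
    fun u v _ => ⟨(), Set.mem_univ u, Set.mem_univ v⟩, fun v => ?_⟩
  rw [connected_iff]
  constructor
  · rintro ⟨a, _⟩ ⟨b, _⟩
    have : a = b := rfl
    subst this
    exact Reachable.refl _
  · exact ⟨⟨(), Set.mem_univ v⟩⟩

lemma tw_set_nonempty : { k : ℕ | ∃ (ι : Type) (T : SimpleGraph ι) (β : ι → Set V),
    IsTreeDecomposition G T β ∧ decompWidth β = k }.Nonempty :=
  ⟨_, Unit, ⊥, fun _ => Set.univ, trivial_td G, rfl⟩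

lemma tw_le_pw : treewidth G ≤ pathwidth G := by
  obtain ⟨r, β, hPD, hw⟩ := Nat.sInf_mem (pw_set_nonempty G)
  rw [pathwidth, ← hw]
  apply Nat.sInf_le
  refine ⟨Fin (r + 1), pathGraph (r + 1), β, ⟨pathGraph_isTree r, hPD.1, hPD.2.1, ?_⟩, rfl⟩
  intro v
  apply pathGraph_induce_connected
  · obtain ⟨x, hx⟩ := hPD.1 v
    exact ⟨x, hx⟩
  · intro i j k hij hjk hi hk
    exact hPD.2.2 v i j k hij hjk hi hk

end General

/-- Upper bound: `pw(F(G)) ≤ n + pw(G)`. -/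
lemma upper_bound {V : Type} [Fintype V] (G : SimpleGraph V) :
    pathwidth (FGraph G) ≤ Fintype.card V + pathwidth G := by
  classical
  set n := Fintype.card V with hn
  obtain ⟨r, B, hB, hwB⟩ := Nat.sInf_mem (pw_set_nonempty G)
  rw [show sInf _ = pathwidth G from rfl] at hwB
  -- hwB : decompWidth B = pathwidth G
  set Sv : V → Finset (Fin (r + 1)) := fun v => Finset.univ.filter (fun i => v ∈ B i) with hSv
  have hSvne : ∀ v, (Sv v).Nonempty := by
    intro v
    obtain ⟨i, hi⟩ := hB.1 v
    exact ⟨i, by simp [hSv, hi]⟩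
  set l : V → Fin (r + 1) := fun v => (Sv v).min' (hSvne v) with hl
  set t : V → Fin (r + 1) := fun v => (Sv v).max' (hSvne v) with ht
  have hmemSv : ∀ v i, i ∈ Sv v ↔ v ∈ B i := by intro v i; simp [hSv]
  have hmemB : ∀ v i, v ∈ B i ↔ l v ≤ i ∧ i ≤ t v := by
    intro v i
    constructor
    · intro h
      exact ⟨Finset.min'_le _ _ ((hmemSv v i).mpr h), Finset.le_max' _ _ ((hmemSv v i).mpr h)⟩
    · rintro ⟨h1, h2⟩
      exact hB.2.2 v (l v) i (t v) h1 h2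
        ((hmemSv v _).mp (Finset.min'_mem _ _)) ((hmemSv v _).mp (Finset.max'_mem _ _))
  have hlt : ∀ v, l v ≤ t v := fun v => Finset.min'_le _ _ (Finset.max'_mem _ _)
  -- the bags for F(G)
  set C : Fin (r + 1) → Set (V ⊕ V) := fun i =>
    Sum.inl '' {v | i ≤ t v} ∪ Sum.inr '' {v | l v ≤ i} with hC
  have hmemCl : ∀ (v : V) (i : Fin (r + 1)), Sum.inl v ∈ C i ↔ i ≤ t v := by
    intro v i
    simp only [hC, Set.mem_union, Set.mem_image, Set.mem_setOf_eq]
    constructor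
    · rintro (⟨w, hw, hwe⟩ | ⟨w, hw, hwe⟩)
      · rw [Sum.inl.injEq] at hwe; rwa [← hwe]
      · simp at hwe
    · intro h; exact Or.inl ⟨v, h, rfl⟩
  have hmemCr : ∀ (v : V) (i : Fin (r + 1)), Sum.inr v ∈ C i ↔ l v ≤ i := by
    intro v i
    simp only [hC, Set.mem_union, Set.mem_image, Set.mem_setOf_eq]
    constructor
    · rintro (⟨w, hw, hwe⟩ | ⟨w, hw, hwe⟩)
      · simp at hwe
      · rw [Sum.inr.injEq] at hwe; rwa [← hwe]
    · intro h; exact Or.inr ⟨v, h, rfl⟩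
  have hCPD : IsPathDecomposition (FGraph G) (r + 1) C := by
    refine ⟨?_, ?_, ?_⟩
    · rintro (v | v)
      · exact ⟨t v, (hmemCl v _).mpr (le_refl _)⟩
      · exact ⟨l v, (hmemCr v _).mpr (le_refl _)⟩
    · rintro (u | u) (v | v) huv
      · exact ⟨min (t u) (t v), (hmemCl u _).mpr (min_le_left _ _),
          (hmemCl v _).mpr (min_le_right _ _)⟩
      · -- inl u, inr v : u = v or adj
        rw [FGraph_adj_lr] at huv
        rcases huv with rfl | huv
        · exact ⟨l u, (hmemCl u _).mpr (hlt u), (hmemCr u _).mpr (le_refl _)⟩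
        · obtain ⟨j, hju, hjv⟩ := hB.2.1 huv
          exact ⟨j, (hmemCl u _).mpr ((hmemB u j).mp hju).2,
            (hmemCr v _).mpr ((hmemB v j).mp hjv).1⟩
      · -- inr u, inl v
        have huv' : (FGraph G).Adj (Sum.inl v) (Sum.inr u) := huv.symm
        rw [FGraph_adj_lr] at huv'
        rcases huv' with rfl | huv'
        · exact ⟨l v, (hmemCr v _).mpr (le_refl _), (hmemCl v _).mpr (hlt v)⟩
        · obtain ⟨j, hjv, hju⟩ := hB.2.1 huv'
          exact ⟨j, (hmemCr u _).mpr ((hmemB u j).mp hju).1,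
            (hmemCl v _).mpr ((hmemB v j).mp hjv).2⟩
      · exact ⟨max (l u) (l v), (hmemCr u _).mpr (le_max_left _ _),
          (hmemCr v _).mpr (le_max_right _ _)⟩
    · rintro (v | v) i j k hij hjk hi hk
      · rw [hmemCl] at hi hk ⊢
        exact le_trans hjk hk
      · rw [hmemCr] at hi hk ⊢
        exact le_trans hi hij
  -- width bound
  have hwidth : decompWidth C ≤ n + pathwidth G := by
    apply decompWidth_le
    intro i
    have hcount : (C i).ncard = {v | i ≤ t v}.ncard + {v | l v ≤ i}.ncard := by
      rw [hC]
      rw [Set.ncard_union_eq ?disj (Set.toFinite _) (Set.toFinite _),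
        Set.ncard_image_of_injective _ Sum.inl_injective,
        Set.ncard_image_of_injective _ Sum.inr_injective]
      case disj =>
        rw [Set.disjoint_iff_forall_ne]
        rintro _ ⟨a, _, rfl⟩ _ ⟨c, _, rfl⟩
        simp
    have hsum : {v | i ≤ t v}.ncard + {v | l v ≤ i}.ncard = n + (B i).ncard := by
      have hu : ({v | i ≤ t v} ∪ {v | l v ≤ i}) = Set.univ := by
        ext v
        simp only [Set.mem_union, Set.mem_setOf_eq, Set.mem_univ, iff_true]
        rcases le_total i (t v) with h | h
        · exact Or.inl h
        · exact Or.inr (le_trans (hlt v) h)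
      have hi : ({v | i ≤ t v} ∩ {v | l v ≤ i}) = B i := by
        ext v
        simp only [Set.mem_inter_iff, Set.mem_setOf_eq, hmemB v i]
        tauto
      have := Set.ncard_union_add_ncard_inter {v | i ≤ t v} {v | l v ≤ i}
        (Set.toFinite _) (Set.toFinite _)
      rw [hu, hi, Set.ncard_univ, Nat.card_eq_fintype_card] at this
      omega
    have hBw : (B i).ncard - 1 ≤ pathwidth G := by
      rw [← hwB]
      exact bag_pred_le_decompWidth B i
    omega
  refine le_trans (Nat.sInf_le ⟨r, C, hCPD, rfl⟩) hwidth

end TPW2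

open TPW2

/-- For every finite graph `G` on `n` vertices,
`tw(F(G)) = pw(F(G)) = n + pw(G)`. -/
theorem treewidth_pathwidth_FGraph {V : Type} [Fintype V] (G : SimpleGraph V) :
    treewidth (FGraph G) = pathwidth (FGraph G) ∧
    pathwidth (FGraph G) = Fintype.card V + pathwidth G := by
  classical
  rcases isEmpty_or_nonempty V with hV | hV
  · have hcard : Fintype.card V = 0 := Fintype.card_eq_zero
    have hwG : decompWidth (fun _ : Fin 1 => (Set.univ : Set V)) = 0 := by
      apply Nat.le_antisymm _ (Nat.zero_le _)
      apply decompWidth_le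
      intro x
      simp [Set.ncard_univ, Nat.card_eq_fintype_card, hcard]
    have hwF : decompWidth (fun _ : Fin 1 => (Set.univ : Set (V ⊕ V))) = 0 := by
      apply Nat.le_antisymm _ (Nat.zero_le _)
      apply decompWidth_le
      intro x
      simp [Set.ncard_univ, Nat.card_eq_fintype_card, hcard]
    have hwFu : decompWidth (fun _ : Unit => (Set.univ : Set (V ⊕ V))) = 0 := by
      apply Nat.le_antisymm _ (Nat.zero_le _)
      apply decompWidth_le
      intro x
      simp [Set.ncard_univ, Nat.card_eq_fintype_card, hcard]
    have hpwG : pathwidth G = 0 :=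
      Nat.eq_zero_of_le_zero (Nat.sInf_le ⟨0, fun _ => Set.univ, trivial_pd G, hwG⟩)
    have hpwF : pathwidth (FGraph G) = 0 :=
      Nat.eq_zero_of_le_zero (Nat.sInf_le ⟨0, fun _ => Set.univ, trivial_pd (FGraph G), hwF⟩)
    have htwF : treewidth (FGraph G) = 0 :=
      Nat.eq_zero_of_le_zero (Nat.sInf_le
        ⟨Unit, ⊥, fun _ => Set.univ, trivial_td (FGraph G), hwFu⟩)
    rw [htwF, hpwF, hpwG, hcard]
    exact ⟨rfl, rfl⟩
  · have h1 := tw_le_pw (FGraph G)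
    have h2 := upper_bound G
    have h3 : Fintype.card V + pathwidth G ≤ treewidth (FGraph G) := by
      obtain ⟨ι, T, β, hd, hw⟩ := Nat.sInf_mem (tw_set_nonempty (FGraph G))
      have hw' : decompWidth β = treewidth (FGraph G) := hw
      rw [← hw']
      exact lower_bound G hd
    omega
end

section
/- Let G be a finite simple graph containing at least one edge, and let H be the graph obtained from G by subdividing one edge {u, v}, i.e., removing the edge {u, v} and adding a new vertex w together with the edges {u, w} and {w, v}. Then cw(H) = cw(G). -/
open SimpleGraph

/-- The cutwidth of `G`: the minimum over linear orderings `f` of the vertices of the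
maximum over positions `i` of the number of edges `{v, w}` with `f v ≤ i < f w`. -/
noncomputable def cutwidth {V : Type} [Fintype V] (G : SimpleGraph V) : ℕ :=
  sInf { k : ℕ | ∃ f : V ≃ Fin (Fintype.card V),
    ∀ i : Fin (Fintype.card V),
      {e : Sym2 V | e ∈ G.edgeSet ∧ ∃ u v : V, e = s(u, v) ∧ f u ≤ i ∧ i < f v}.ncard ≤ k }

/-- The graph obtained from `G` by subdividing the edge `{u, v}`: the edge `{u, v}` is
removed and a new vertex `none` is added, adjacent exactly to `u` and `v`. -/
def subdivideEdge {V : Type} (G : SimpleGraph V) (u v : V) : SimpleGraph (Option V) :=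
  SimpleGraph.fromRel (fun a b =>
    match a, b with
    | some x, some y => G.Adj x y ∧ s(x, y) ≠ s(u, v)
    | none, some x => x = u ∨ x = v
    | _, _ => False)

section Aux

variable {V : Type} {G : SimpleGraph V} {u v : V}

private lemma succAbove_val {n : ℕ} (p : Fin (n+1)) (j : Fin n) :
    (p.succAbove j).val = if j.val < p.val then j.val else j.val + 1 := by
  rcases lt_or_ge j.castSucc p with hlt | hle
  · rw [Fin.succAbove_of_castSucc_lt _ _ hlt, Fin.coe_castSucc,
      if_pos (by simpa [Fin.lt_def] using hlt)]
  · rw [Fin.succAbove_of_le_castSucc _ _ hle, Fin.val_succ,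
      if_neg (by simpa [Fin.le_def, Nat.not_lt] using hle)]

private lemma adj_ss {x y : V} :
    (subdivideEdge G u v).Adj (some x) (some y) ↔ G.Adj x y ∧ s(x,y) ≠ s(u,v) := by
  rw [subdivideEdge, SimpleGraph.fromRel_adj]
  constructor
  · rintro ⟨hne, hr | hr⟩
    · exact hr
    · exact ⟨hr.1.symm, by rw [Sym2.eq_swap]; exact hr.2⟩
  · rintro ⟨ha, hne⟩
    exact ⟨by simpa using ha.ne, Or.inl ⟨ha, hne⟩⟩

private lemma adj_ns {x : V} :
    (subdivideEdge G u v).Adj none (some x) ↔ (x = u ∨ x = v) := by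
  rw [subdivideEdge, SimpleGraph.fromRel_adj]
  constructor
  · rintro ⟨-, hr | hr⟩
    · exact hr
    · exact hr.elim
  · intro hx
    exact ⟨by simp, Or.inl hx⟩

private lemma mem_nu : s(none, some u) ∈ (subdivideEdge G u v).edgeSet :=
  (SimpleGraph.mem_edgeSet _).2 (adj_ns.2 (Or.inl rfl))

private lemma mem_nv : s(none, some v) ∈ (subdivideEdge G u v).edgeSet :=
  (SimpleGraph.mem_edgeSet _).2 (adj_ns.2 (Or.inr rfl))

private lemma edge_forms {e : Sym2 (Option V)} (he : e ∈ (subdivideEdge G u v).edgeSet) :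
    (∃ x y : V, e = s(some x, some y) ∧ G.Adj x y ∧ s(x,y) ≠ s(u,v)) ∨
      e = s(none, some u) ∨ e = s(none, some v) := by
  induction e using Sym2.ind with
  | _ a b =>
    rw [SimpleGraph.mem_edgeSet] at he
    cases a with
    | none =>
      cases b with
      | none => exact absurd rfl he.ne
      | some x =>
        rcases adj_ns.mp he with rfl | rfl
        · exact Or.inr (Or.inl rfl)
        · exact Or.inr (Or.inr rfl)
    | some x =>
      cases b with
      | none =>
        rcases adj_ns.mp he.symm with rfl | rfl
        · exact Or.inr (Or.inl Sym2.eq_swap)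
        · exact Or.inr (Or.inr Sym2.eq_swap)
      | some y =>
        rcases adj_ss.mp he with ⟨ha, hne⟩
        exact Or.inl ⟨x, y, rfl, ha, hne⟩

private lemma subdivideEdge_comm : subdivideEdge G u v = subdivideEdge G v u := by
  have hs : s(u, v) = s(v, u) := Sym2.eq_swap
  ext a b
  rw [subdivideEdge, subdivideEdge, SimpleGraph.fromRel_adj, SimpleGraph.fromRel_adj]
  cases a <;> cases b <;> simp only [hs] <;> tauto

private lemma none_notin_map_some (e : Sym2 V) : (none : Option V) ∉ Sym2.map some e := by
  induction e using Sym2.ind with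
  | _ x y => simp [Sym2.map_pair_eq, Sym2.mem_iff]

private lemma map_some_inj {e1 e2 : Sym2 V} (h : Sym2.map some e1 = Sym2.map some e2) :
    e1 = e2 := by
  induction e1 using Sym2.ind with
  | _ x y =>
    induction e2 using Sym2.ind with
    | _ x' y' =>
      simp only [Sym2.map_pair_eq, Sym2.eq_iff, Option.some.injEq] at h ⊢
      tauto

end Aux

section Main

variable {V : Type} [Fintype V] {G : SimpleGraph V} {u v : V}

private def crossSet (G : SimpleGraph V) (f : V ≃ Fin (Fintype.card V))
    (i : Fin (Fintype.card V)) : Set (Sym2 V) :=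
  {e : Sym2 V | e ∈ G.edgeSet ∧ ∃ a b : V, e = s(a, b) ∧ f a ≤ i ∧ i < f b}

private lemma forward_aux (h : G.Adj u v) (k : ℕ) (f : V ≃ Fin (Fintype.card V))
    (huv : f u < f v) (hf : ∀ i, (crossSet G f i).ncard ≤ k) :
    ∃ g : Option V ≃ Fin (Fintype.card (Option V)),
      ∀ i, (crossSet (subdivideEdge G u v) g i).ncard ≤ k := by
  classical
  have ho : Fintype.card (Option V) = Fintype.card V + 1 := Fintype.card_option
  set p : Fin (Fintype.card V + 1) := (f u).succ with hp
  refine ⟨(f.optionCongr.trans (finSuccEquiv' p).symm).trans (finCongr ho.symm), fun i => ?_⟩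
  set g : Option V ≃ Fin (Fintype.card (Option V)) :=
    (f.optionCongr.trans (finSuccEquiv' p).symm).trans (finCongr ho.symm) with hg
  have hgs : ∀ x : V, (g (some x)).val =
      if (f x).val < (f u).val + 1 then (f x).val else (f x).val + 1 := by
    intro x
    have h1 : g (some x) = finCongr ho.symm (p.succAbove (f x)) := by
      simp [hg, Equiv.optionCongr_apply, finSuccEquiv'_symm_some]
    rw [h1]
    simp only [finCongr_apply, Fin.coe_cast]
    rw [succAbove_val, hp, Fin.val_succ]
  have hgn : (g none).val = (f u).val + 1 := by
    have h1 : g none = finCongr ho.symm p := by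
      simp [hg, Equiv.optionCongr_apply, finSuccEquiv'_symm_none]
    rw [h1]
    simp only [finCongr_apply, Fin.coe_cast]
    rw [hp, Fin.val_succ]
  have hiv : i.val < Fintype.card V + 1 := ho ▸ i.isLt
  have hfu : (f u).val < Fintype.card V := (f u).isLt
  have hfv : (f v).val < Fintype.card V := (f v).isLt
  have hlt : (f u).val < (f v).val := huv
  set j : Fin (Fintype.card V) := ⟨if i.val ≤ (f u).val then i.val else i.val - 1, by split <;> omega⟩ with hj
  have hjv : j.val = if i.val ≤ (f u).val then i.val else i.val - 1 := rfl
  have key : ∀ z : V, ((g (some z)).val ≤ i.val ↔ (f z).val ≤ j.val) := by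
    intro z
    have hz := (f z).isLt
    rw [hgs, hjv]
    split_ifs <;> omega
  have cu : ∀ a b : Option V, s(a,b) = s(none, some u) → g a ≤ i → i < g b →
      i.val = (f u).val := by
    intro a b hab h1 h2
    rw [Fin.le_def] at h1; rw [Fin.lt_def] at h2
    rcases Sym2.eq_iff.mp hab with ⟨rfl, rfl⟩ | ⟨rfl, rfl⟩
    · rw [hgn] at h1; rw [hgs, if_pos (by omega)] at h2; omega
    · rw [hgs, if_pos (by omega)] at h1; rw [hgn] at h2; omega
  have cv : ∀ a b : Option V, s(a,b) = s(none, some v) → g a ≤ i → i < g b →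
      (f u).val + 1 ≤ i.val ∧ i.val ≤ (f v).val := by
    intro a b hab h1 h2
    rw [Fin.le_def] at h1; rw [Fin.lt_def] at h2
    rcases Sym2.eq_iff.mp hab with ⟨rfl, rfl⟩ | ⟨rfl, rfl⟩
    · rw [hgn] at h1; rw [hgs, if_neg (by omega)] at h2; omega
    · rw [hgs, if_neg (by omega)] at h1; rw [hgn] at h2; omega
  have hmain : (crossSet (subdivideEdge G u v) g i).ncard ≤ (crossSet G f j).ncard := by
    set F : Sym2 (Option V) → Sym2 V :=
      fun e => if none ∈ e then s(u,v) else Sym2.map (fun o => o.getD u) e with hF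
    have hFss : ∀ x y : V, F s(some x, some y) = s(x, y) := by
      intro x y
      rw [hF]
      simp only [Sym2.mem_iff]
      rw [if_neg (by simp), Sym2.map_pair_eq]
      rfl
    have hFn : ∀ b : Option V, F s(none, b) = s(u,v) := by
      intro b
      rw [hF]
      exact if_pos (Sym2.mem_iff.2 (Or.inl rfl))
    apply Set.ncard_le_ncard_of_injOn F ?_ ?_ (Set.toFinite _)
    · rintro e ⟨heE, a, b, hab, h1, h2⟩
      rcases edge_forms heE with ⟨x, y, rfl, hxy, hne⟩ | rfl | rfl
      · rw [hFss]
        have k1 := key x; have k2 := key y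
        rw [Fin.le_def] at h1; rw [Fin.lt_def] at h2
        rcases Sym2.eq_iff.mp hab with ⟨rfl, rfl⟩ | ⟨rfl, rfl⟩
        · exact ⟨(SimpleGraph.mem_edgeSet _).2 hxy, x, y, rfl,
            Fin.le_def.2 (by omega), Fin.lt_def.2 (by omega)⟩
        · exact ⟨(SimpleGraph.mem_edgeSet _).2 hxy, y, x, Sym2.eq_swap,
            Fin.le_def.2 (by omega), Fin.lt_def.2 (by omega)⟩
      · have hi := cu a b hab.symm h1 h2
        have hjv' : j.val = (f u).val := by rw [hjv, if_pos (by omega)]; omega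
        rw [hFn]
        exact ⟨(SimpleGraph.mem_edgeSet _).2 h, u, v, rfl,
          Fin.le_def.2 (by omega), Fin.lt_def.2 (by omega)⟩
      · have hi := cv a b hab.symm h1 h2
        have hjv' : j.val = i.val - 1 := by rw [hjv, if_neg (by omega)]
        rw [hFn]
        exact ⟨(SimpleGraph.mem_edgeSet _).2 h, u, v, rfl,
          Fin.le_def.2 (by omega), Fin.lt_def.2 (by omega)⟩
    · rintro e1 ⟨h1E, a1, b1, hab1, p1, q1⟩ e2 ⟨h2E, a2, b2, hab2, p2, q2⟩ heq
      rcases edge_forms h1E with ⟨x1, y1, rfl, hxy1, hne1⟩ | rfl | rfl <;>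
        rcases edge_forms h2E with ⟨x2, y2, rfl, hxy2, hne2⟩ | rfl | rfl
      · rw [hFss, hFss] at heq
        rcases Sym2.eq_iff.mp heq with ⟨rfl, rfl⟩ | ⟨rfl, rfl⟩
        · rfl
        · exact Sym2.eq_swap
      · rw [hFss, hFn] at heq; exact absurd heq hne1
      · rw [hFss, hFn] at heq; exact absurd heq hne1
      · rw [hFn, hFss] at heq; exact absurd heq.symm hne2
      · rfl
      · have c1 := cu a1 b1 hab1.symm p1 q1
        have c2 := cv a2 b2 hab2.symm p2 q2
        omega
      · rw [hFn, hFss] at heq; exact absurd heq.symm hne2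
      · have c1 := cv a1 b1 hab1.symm p1 q1
        have c2 := cu a2 b2 hab2.symm p2 q2
        omega
      · rfl
  exact le_trans hmain (hf j)

private lemma backward_aux (h : G.Adj u v) (k : ℕ)
    (g : Option V ≃ Fin (Fintype.card (Option V)))
    (hg : ∀ i, (crossSet (subdivideEdge G u v) g i).ncard ≤ k) :
    ∃ f : V ≃ Fin (Fintype.card V), ∀ j, (crossSet G f j).ncard ≤ k := by
  classical
  have ho : Fintype.card (Option V) = Fintype.card V + 1 := Fintype.card_option
  set g' : Option V ≃ Fin (Fintype.card V + 1) := g.trans (finCongr ho) with hg'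
  set q : Fin (Fintype.card V + 1) := g' none with hq
  set e2 : Option V ≃ Option (Fin (Fintype.card V)) := g'.trans (finSuccEquiv' q) with he2
  have he2n : e2 none = none := by
    show finSuccEquiv' q (g' none) = none
    rw [← hq]
    exact finSuccEquiv'_at q
  set f : V ≃ Fin (Fintype.card V) := e2.removeNone with hfdef
  have hsome : ∀ x : V, e2 (some x) = some (f x) := by
    intro x
    have hex : ∃ x', e2 (some x) = some x' := by
      rcases hc : e2 (some x) with _ | b
      · exact absurd (e2.injective (hc.trans he2n.symm)) (by simp)
      · exact ⟨b, rfl⟩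
    exact (Equiv.removeNone_some e2 hex).symm
  have hgq : (g none).val = q.val := rfl
  have hgs : ∀ x : V, (g (some x)).val =
      if (f x).val < q.val then (f x).val else (f x).val + 1 := by
    intro x
    have h1 : g' (some x) = q.succAbove (f x) := by
      have h2 := congrArg (finSuccEquiv' q).symm (hsome x)
      rw [show (finSuccEquiv' q).symm (e2 (some x)) = g' (some x) from
        Equiv.symm_apply_apply _ _, finSuccEquiv'_symm_some] at h2
      exact h2
    have h3 : (g (some x)).val = (g' (some x)).val := rfl
    rw [h3, h1, succAbove_val]
  refine ⟨f, fun j => ?_⟩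
  have hjn : j.val < Fintype.card V := j.isLt
  have hqn : q.val < Fintype.card V + 1 := q.isLt
  set i : Fin (Fintype.card (Option V)) :=
    ⟨if j.val < q.val then j.val else j.val + 1, by rw [ho]; split <;> omega⟩ with hi
  have hiv : i.val = if j.val < q.val then j.val else j.val + 1 := rfl
  have key : ∀ z : V, ((f z).val ≤ j.val ↔ (g (some z)).val ≤ i.val) := by
    intro z
    have hz := (f z).isLt
    rw [hgs, hiv]
    split_ifs <;> omega
  have hmain : (crossSet G f j).ncard ≤ (crossSet (subdivideEdge G u v) g i).ncard := by
    set F : Sym2 V → Sym2 (Option V) := fun e =>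
      if e = s(u,v) then
        (if (g none).val ≤ i.val then
          (if i.val < (g (some u)).val then s(none, some u) else s(none, some v))
        else
          (if (g (some u)).val ≤ i.val then s(some u, none) else s(some v, none)))
      else Sym2.map some e with hF
    apply Set.ncard_le_ncard_of_injOn F ?_ ?_ (Set.toFinite _)
    · rintro e ⟨heE, a, b, hab, hle, hlt⟩
      have ha1 : (g (some a)).val ≤ i.val := (key a).1 (Fin.le_def.1 hle)
      have hb1 : i.val < (g (some b)).val := by
        have k1 := key b
        have k2 := Fin.lt_def.1 hlt
        omega
      by_cases hcase : e = s(u,v)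
      · have horient : (a = u ∧ b = v) ∨ (a = v ∧ b = u) :=
          Sym2.eq_iff.mp (hab.symm.trans hcase)
        have hFe : F e = (if (g none).val ≤ i.val then
            (if i.val < (g (some u)).val then s(none, some u) else s(none, some v))
          else
            (if (g (some u)).val ≤ i.val then s(some u, none) else s(some v, none))) := by
          rw [hF]; exact if_pos hcase
        rw [hFe]
        split_ifs with hg1 hg2 hg3
        · exact ⟨mem_nu, none, some u, rfl, Fin.le_def.2 hg1, Fin.lt_def.2 hg2⟩
        · have hv : i.val < (g (some v)).val := by
            rcases horient with ⟨rfl, rfl⟩ | ⟨rfl, rfl⟩ <;> omega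
          exact ⟨mem_nv, none, some v, rfl, Fin.le_def.2 hg1, Fin.lt_def.2 hv⟩
        · exact ⟨(Sym2.eq_swap (a := (none : Option V)) (b := some u)) ▸ mem_nu,
            some u, none, rfl, Fin.le_def.2 hg3, Fin.lt_def.2 (by omega)⟩
        · have hv : (g (some v)).val ≤ i.val := by
            rcases horient with ⟨rfl, rfl⟩ | ⟨rfl, rfl⟩ <;> omega
          exact ⟨(Sym2.eq_swap (a := (none : Option V)) (b := some v)) ▸ mem_nv,
            some v, none, rfl, Fin.le_def.2 hv, Fin.lt_def.2 (by omega)⟩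
      · have hFe : F e = Sym2.map some e := by rw [hF]; exact if_neg hcase
        rw [hFe, hab, Sym2.map_pair_eq]
        refine ⟨(SimpleGraph.mem_edgeSet _).2 (adj_ss.2 ⟨?_, ?_⟩),
          some a, some b, rfl, Fin.le_def.2 ha1, Fin.lt_def.2 hb1⟩
        · exact (SimpleGraph.mem_edgeSet _).1 (hab ▸ heE)
        · exact fun hh => hcase (hab.trans hh)
    · intro e1 he1 e2' he2' heq
      by_cases h1 : e1 = s(u,v) <;> by_cases h2 : e2' = s(u,v)
      · rw [h1, h2]
      · exfalso
        have hFe2 : F e2' = Sym2.map some e2' := by rw [hF]; exact if_neg h2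
        have hnone : none ∈ F e1 := by
          rw [hF]
          simp only [if_pos h1]
          split_ifs <;> simp [Sym2.mem_iff]
        rw [heq, hFe2] at hnone
        exact none_notin_map_some e2' hnone
      · exfalso
        have hFe1 : F e1 = Sym2.map some e1 := by rw [hF]; exact if_neg h1
        have hnone : none ∈ F e2' := by
          rw [hF]
          simp only [if_pos h2]
          split_ifs <;> simp [Sym2.mem_iff]
        rw [← heq, hFe1] at hnone
        exact none_notin_map_some e1 hnone
      · have hFe1 : F e1 = Sym2.map some e1 := by rw [hF]; exact if_neg h1
        have hFe2 : F e2' = Sym2.map some e2' := by rw [hF]; exact if_neg h2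
        exact map_some_inj ((hFe1.symm.trans heq).trans hFe2)
  exact le_trans hmain (hg i)

end Main

/-- Subdividing an edge of a finite graph does not change the cutwidth. -/
theorem cutwidth_subdivideEdge {V : Type} [Fintype V] (G : SimpleGraph V)
    (u v : V) (h : G.Adj u v) :
    cutwidth (subdivideEdge G u v) = cutwidth G := by
  have heq : { k : ℕ | ∃ g : Option V ≃ Fin (Fintype.card (Option V)),
      ∀ i, (crossSet (subdivideEdge G u v) g i).ncard ≤ k } =
      { k : ℕ | ∃ f : V ≃ Fin (Fintype.card V), ∀ i, (crossSet G f i).ncard ≤ k } := by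
    ext k
    simp only [Set.mem_setOf_eq]
    constructor
    · rintro ⟨g, hgk⟩
      exact backward_aux h k g hgk
    · rintro ⟨f, hfk⟩
      have hne : f u ≠ f v := fun e => h.ne (f.injective e)
      rcases lt_or_gt_of_ne hne with hlt | hgt
      · exact forward_aux h k f hlt hfk
      · rw [subdivideEdge_comm]
        exact forward_aux h.symm k f hgt hfk
  exact congrArg sInf heq
end

section
/- Let G be a finite simple graph with tw(G) ≥ 3, let v be a vertex of G of degree at most 2 with at least one neighbour u, and let G' be the simple graph obtained from G by contracting v into u (identifying v with u and removing any resulting parallel edges and loops). Then tw(G') = tw(G). -/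
open SimpleGraph

/-- The graph obtained from `G` by contracting the vertex `v` into the vertex `u`:
the vertex `v` is removed, and `u` becomes additionally adjacent to all former
neighbours of `v` (other than `u` itself); parallel edges and loops are suppressed. -/
def contractInto {V : Type} (G : SimpleGraph V) (v u : V) :
    SimpleGraph {x : V // x ≠ v} :=
  SimpleGraph.fromRel (fun a b =>
    G.Adj a.val b.val ∨ ((a.val = u) ∧ G.Adj v b.val))


lemma induce_connected_of_subsingleton {V : Type} (G : SimpleGraph V) (s : Set V)
    (hne : s.Nonempty) (hss : s.Subsingleton) : (G.induce s).Connected := by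
  obtain ⟨a, ha⟩ := hne
  refine (connected_iff _).mpr ⟨fun x y => ?_, ⟨⟨a, ha⟩⟩⟩
  have : x = y := Subtype.ext (hss x.2 y.2)
  exact this ▸ Walk.nil.reachable

lemma induce_connected_pair {V : Type} {G : SimpleGraph V} {a b : V} (h : G.Adj a b) :
    (G.induce {a, b}).Connected := by
  have hadj : (G.induce {a, b}).Adj ⟨a, by simp⟩ ⟨b, by simp⟩ := h
  refine (connected_iff _).mpr ⟨fun x y => ?_, ⟨⟨a, by simp⟩⟩⟩
  have hx : x = ⟨a, by simp⟩ ∨ x = ⟨b, by simp⟩ := by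
    rcases x with ⟨x, hx | hx⟩ <;> [left; right] <;> exact Subtype.ext (by simpa using hx)
  have hy : y = ⟨a, by simp⟩ ∨ y = ⟨b, by simp⟩ := by
    rcases y with ⟨y, hy | hy⟩ <;> [left; right] <;> exact Subtype.ext (by simpa using hy)
  rcases hx with rfl | rfl <;> rcases hy with rfl | rfl
  · exact Walk.nil.reachable
  · exact hadj.reachable
  · exact hadj.symm.reachable
  · exact Walk.nil.reachable

/-- inclusion hom between induced subgraphs -/
def induceHomOfSubset {V : Type} (G : SimpleGraph V) {s t : Set V} (h : s ⊆ t) :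
    G.induce s →g G.induce t where
  toFun := fun x => ⟨x.1, h x.2⟩
  map_rel' := fun {a b} hab => hab

lemma induce_connected_union {V : Type} {G : SimpleGraph V} {A B : Set V}
    (hA : (G.induce A).Connected) (hB : (G.induce B).Connected)
    (hAB : (A ∩ B).Nonempty) : (G.induce (A ∪ B)).Connected := by
  obtain ⟨c, hcA, hcB⟩ := hAB
  refine (connected_iff _).mpr ⟨fun x y => ?_, ⟨⟨c, Or.inl hcA⟩⟩⟩
  have key : ∀ z : {w // w ∈ A ∪ B}, (G.induce (A ∪ B)).Reachable z ⟨c, Or.inl hcA⟩ := by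
    rintro ⟨z, hz | hz⟩
    · have := hA.preconnected ⟨z, hz⟩ ⟨c, hcA⟩
      have := this.map (induceHomOfSubset G (Set.subset_union_left : A ⊆ A ∪ B))
      exact this
    · have := hB.preconnected ⟨z, hz⟩ ⟨c, hcB⟩
      have := this.map (induceHomOfSubset G (Set.subset_union_right : B ⊆ A ∪ B))
      exact this
  exact (key x).trans (key y).symm

lemma induce_connected_image {ι ι' : Type} {T : SimpleGraph ι} {T' : SimpleGraph ι'}
    {f : ι → ι'}
    (hadj : ∀ a b, T.Adj a b → T'.Adj (f a) (f b)) (S : Set ι)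
    (hc : (T.induce S).Connected) : (T'.induce (f '' S)).Connected := by
  refine hc.map ⟨fun x => ⟨f x.1, ⟨x.1, x.2, rfl⟩⟩, fun {a b} hab => hadj _ _ hab⟩ ?_
  rintro ⟨y, x, hx, rfl⟩
  exact ⟨⟨x, hx⟩, rfl⟩

lemma bddAbove_ncard_sub {V ι : Type} [Fintype V] (β : ι → Set V) :
    BddAbove (Set.range fun x => ((β x).ncard - 1)) := by
  refine ⟨Fintype.card V, ?_⟩
  rintro n ⟨x, rfl⟩
  calc (β x).ncard - 1 ≤ (β x).ncard := Nat.sub_le _ _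
    _ ≤ (Set.univ : Set V).ncard := Set.ncard_le_ncard (Set.subset_univ _) Set.finite_univ
    _ = Fintype.card V := Set.ncard_univ V ▸ (Nat.card_eq_fintype_card)

def extendTree {ι : Type} (T : SimpleGraph ι) (x₀ : ι) : SimpleGraph (Option ι) where
  Adj a b := match a, b with
    | some a, some b => T.Adj a b
    | some a, none => a = x₀
    | none, some b => b = x₀
    | none, none => False
  symm := ⟨by rintro (_ | a) (_ | b) h <;> simp_all <;> exact h.symm⟩
  loopless := ⟨by rintro (_ | a) h <;> simp_all⟩

variable {ι : Type} {T : SimpleGraph ι} {x₀ : ι}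

@[simp] lemma extendTree_adj_some_some {a b : ι} :
    (extendTree T x₀).Adj (some a) (some b) ↔ T.Adj a b := Iff.rfl

@[simp] lemma extendTree_adj_none_some {b : ι} :
    (extendTree T x₀).Adj none (some b) ↔ b = x₀ := Iff.rfl

@[simp] lemma extendTree_adj_some_none {a : ι} :
    (extendTree T x₀).Adj (some a) none ↔ a = x₀ := Iff.rfl

@[simp] lemma extendTree_adj_none_none : ¬ (extendTree T x₀).Adj none none := fun h => h

def extendHom (T : SimpleGraph ι) (x₀ : ι) : T →g extendTree T x₀ :=
  ⟨some, fun {a b} h => h⟩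

lemma extendHom_injective : Function.Injective (extendHom T x₀) :=
  fun _ _ h => Option.some_injective _ h

lemma extendTree_pull {a' b' : Option ι} (c : (extendTree T x₀).Walk a' b')
    (hs : ∀ y ∈ c.support, y ≠ none) :
    ∀ {a b : ι} (ha : a' = some a) (hb : b' = some b),
      ∃ p : T.Walk a b, p.map (extendHom T x₀) = c.copy ha hb := by
  induction c with
  | nil =>
    rintro a b rfl h
    obtain rfl : a = b := Option.some_injective _ h
    exact ⟨Walk.nil, by simp; rfl⟩
  | @cons u m w h q ih =>
    rintro a b rfl rfl
    have hm : m ≠ none := hs m (by simp)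
    obtain ⟨mm, rfl⟩ := Option.ne_none_iff_exists'.mp hm
    have hq : ∀ y ∈ q.support, y ≠ none := fun y hy => hs y (by simp [hy])
    obtain ⟨p, hp⟩ := ih hq rfl rfl
    refine ⟨Walk.cons (show T.Adj a mm from h) p, ?_⟩
    simp only [Walk.copy_rfl_rfl] at hp ⊢
    simp [hp]
    rfl

lemma edge_into_none {b' : Option ι} (r : (extendTree T x₀).Walk none b') (hr : ¬ r.Nil) :
    s(none, some x₀) ∈ r.edges := by
  cases r with
  | nil => exact absurd Walk.Nil.nil hr
  | @cons _ m _ h q =>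
    cases m with
    | none => exact absurd h (by simp)
    | some m' =>
      obtain rfl : m' = x₀ := h
      exact List.mem_cons_self ..

lemma no_cycle_through_none (c : (extendTree T x₀).Walk none none) (hc : c.IsCycle) : False := by
  cases c with
  | nil => exact hc.ne_nil rfl
  | @cons _ m _ h q =>
    obtain ⟨m', rfl⟩ := Option.ne_none_iff_exists'.mp (fun he : m = none => by simp [he] at h)
    obtain rfl : x₀ = m' := (extendTree_adj_none_some.mp h).symm
    have hqrev : ¬ q.reverse.Nil := Walk.not_nil_of_ne (by simp)
    have hedge : s(none, some x₀) ∈ q.edges := by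
      have := edge_into_none q.reverse hqrev
      rw [Walk.edges_reverse, List.mem_reverse] at this
      exact this
    have hnodup := hc.edges_nodup
    simp only [Walk.edges_cons, List.nodup_cons] at hnodup
    exact hnodup.1 (by simpa [Sym2.eq_swap] using hedge)

lemma extendTree_isTree (hT : T.IsTree) : (extendTree T x₀).IsTree := by
  classical
  constructor
  · refine (connected_iff _).mpr ⟨fun x y => ?_, ⟨some x₀⟩⟩
    have key : ∀ z : Option ι, (extendTree T x₀).Reachable z (some x₀) := by
      rintro (_ | a)
      · exact (Adj.reachable (by simp : (extendTree T x₀).Adj none (some x₀)))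
      · exact (hT.1.preconnected a x₀).map (extendHom T x₀)
    exact (key x).trans (key y).symm
  · intro a c hc
    by_cases hn : (none : Option ι) ∈ c.support
    · exact no_cycle_through_none (c.rotate (u := none) hn) (hc.rotate hn)
    · obtain ⟨aa, rfl⟩ := Option.ne_none_iff_exists'.mp (fun he => hn (he ▸ c.start_mem_support))
      obtain ⟨p, hp⟩ := extendTree_pull c (fun y hy he => hn (he ▸ hy)) rfl rfl
      rw [Walk.copy_rfl_rfl] at hp
      have : p.IsCycle := by
        rw [← Walk.map_isCycle_iff_of_injective (extendHom_injective), hp]; exact hc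
      exact hT.2 p this

lemma trivial_decomp {W : Type} (G : SimpleGraph W) :
    IsTreeDecomposition G (⊥ : SimpleGraph PUnit) (fun _ => Set.univ) := by
  refine ⟨⟨?_, ?_⟩, fun a => ⟨PUnit.unit, trivial⟩, fun a b _ => ⟨PUnit.unit, trivial, trivial⟩,
    fun a => ?_⟩
  · exact (connected_iff _).mpr ⟨fun x y => by rw [Subsingleton.elim x y], ⟨PUnit.unit⟩⟩
  · intro x c hc
    cases c with
    | nil => exact hc.ne_nil rfl
    | cons h _ => exact h.elim
  · exact induce_connected_of_subsingleton _ _ ⟨PUnit.unit, trivial⟩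
      (fun x _ y _ => Subsingleton.elim x y)

lemma treewidth_set_nonempty {W : Type} (G : SimpleGraph W) :
    { k : ℕ | ∃ (ι : Type) (T : SimpleGraph ι) (β : ι → Set W),
      IsTreeDecomposition G T β ∧ decompWidth β = k }.Nonempty :=
  ⟨_, PUnit, ⊥, fun _ => Set.univ, trivial_decomp G, rfl⟩

lemma treewidth_le_of_decomp {W ι : Type} {G : SimpleGraph W} {T : SimpleGraph ι}
    {β : ι → Set W} (h : IsTreeDecomposition G T β) : treewidth G ≤ decompWidth β :=
  Nat.sInf_le ⟨ι, T, β, h, rfl⟩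

section Dir1

variable {V : Type} [Fintype V] [DecidableEq V] (G : SimpleGraph V) (v u : V)

lemma contractInto_adj {a b : {x : V // x ≠ v}} :
    (contractInto G v u).Adj a b ↔ a ≠ b ∧
      ((G.Adj a.val b.val ∨ (a.val = u ∧ G.Adj v b.val)) ∨
       (G.Adj b.val a.val ∨ (b.val = u ∧ G.Adj v a.val))) := by
  simp [contractInto, fromRel_adj]

/-- the contraction map -/
noncomputable def cmap (hadj : G.Adj v u) : V → {x : V // x ≠ v} :=
  fun z => if h : z = v then ⟨u, hadj.ne'⟩ else ⟨z, h⟩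

lemma cmap_mem_image (hadj : G.Adj v u) (s : Set V) (a : {x : V // x ≠ v}) :
    a ∈ cmap G v u hadj '' s ↔ a.val ∈ s ∨ (a.val = u ∧ v ∈ s) := by
  constructor
  · rintro ⟨z, hz, rfl⟩
    by_cases h : z = v
    · subst h
      exact Or.inr ⟨by simp [cmap], hz⟩
    · left; simpa [cmap, h] using hz
  · rintro (h | ⟨hu, hv⟩)
    · exact ⟨a.val, h, by simp [cmap, a.2]⟩
    · exact ⟨v, hv, by simp [cmap]; exact Subtype.ext hu.symm⟩

lemma dir1 (hadj : G.Adj v u) : treewidth (contractInto G v u) ≤ treewidth G := by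
  classical
  obtain ⟨ι, T, β, hdec, hw⟩ := Nat.sInf_mem (treewidth_set_nonempty G)
  obtain ⟨hT, hcov, hedge, hconn⟩ := hdec
  haveI : Nonempty ι := hT.1.nonempty
  set f := cmap G v u hadj with hf
  set β₁ : ι → Set {x : V // x ≠ v} := fun x => f '' β x with hβ₁
  have hmem : ∀ (x : ι) (a : {x : V // x ≠ v}),
      a ∈ β₁ x ↔ a.val ∈ β x ∨ (a.val = u ∧ v ∈ β x) := fun x a =>
    cmap_mem_image G v u hadj (β x) a
  have hdec1 : IsTreeDecomposition (contractInto G v u) T β₁ := by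
    refine ⟨hT, ?_, ?_, ?_⟩
    · intro a
      obtain ⟨x, hx⟩ := hcov a.val
      exact ⟨x, (hmem x a).mpr (Or.inl hx)⟩
    · intro a b hab
      rw [contractInto_adj] at hab
      rcases hab.2 with (h | ⟨hu, hv⟩) | (h | ⟨hu, hv⟩)
      · obtain ⟨x, h1, h2⟩ := hedge h
        exact ⟨x, (hmem x a).mpr (Or.inl h1), (hmem x b).mpr (Or.inl h2)⟩
      · obtain ⟨x, h1, h2⟩ := hedge hv
        exact ⟨x, (hmem x a).mpr (Or.inr ⟨hu, h1⟩), (hmem x b).mpr (Or.inl h2)⟩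
      · obtain ⟨x, h1, h2⟩ := hedge h
        exact ⟨x, (hmem x a).mpr (Or.inl h2), (hmem x b).mpr (Or.inl h1)⟩
      · obtain ⟨x, h1, h2⟩ := hedge hv
        exact ⟨x, (hmem x a).mpr (Or.inl h2), (hmem x b).mpr (Or.inr ⟨hu, h1⟩)⟩
    · intro a
      by_cases hau : a.val = u
      · have hset : {x : ι | a ∈ β₁ x} = {x | u ∈ β x} ∪ {x | v ∈ β x} := by
          ext x; simp only [Set.mem_setOf_eq, hmem, hau, Set.mem_union]; tauto
        rw [hset]
        obtain ⟨x, hx1, hx2⟩ := hedge hadj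
        exact induce_connected_union (hconn u) (hconn v) ⟨x, hx2, hx1⟩
      · have hset : {x : ι | a ∈ β₁ x} = {x | a.val ∈ β x} := by
          ext x; simp only [Set.mem_setOf_eq, hmem, hau]; tauto
        rw [hset]
        exact hconn a.val
  refine le_trans (treewidth_le_of_decomp hdec1) ?_
  have hw' : decompWidth β = treewidth G := hw
  rw [← hw']
  refine ciSup_le fun x => ?_
  refine le_trans (Nat.sub_le_sub_right (Set.ncard_image_le (β x).toFinite) 1) ?_
  exact le_ciSup (bddAbove_ncard_sub β) x

end Dir1

section Dir2

variable {V : Type} [Fintype V] [DecidableEq V] (G : SimpleGraph V) [DecidableRel G.Adj]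

lemma dir2 (v u : V) (hadj : G.Adj v u) (hdeg : G.degree v ≤ 2) :
    treewidth G ≤ max (treewidth (contractInto G v u)) 2 := by
  classical
  obtain ⟨ι, T, β', hdec, hw⟩ := Nat.sInf_mem (treewidth_set_nonempty (contractInto G v u))
  obtain ⟨hT, hcov, hedge, hconn⟩ := hdec
  haveI : Nonempty ι := hT.1.nonempty
  -- find w and x₀
  have key : ∃ (w : V) (hwv : w ≠ v) (x₀ : ι), G.Adj v w ∧
      (∀ z, G.Adj v z → z = u ∨ z = w) ∧
      (⟨u, hadj.ne'⟩ : {x : V // x ≠ v}) ∈ β' x₀ ∧ (⟨w, hwv⟩ : {x : V // x ≠ v}) ∈ β' x₀ := by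
    by_cases hW : ∃ w, G.Adj v w ∧ w ≠ u
    · obtain ⟨w, hvw, hwu⟩ := hW
      have hwv : w ≠ v := hvw.ne'
      have hGadj : (contractInto G v u).Adj ⟨u, hadj.ne'⟩ ⟨w, hwv⟩ := by
        rw [contractInto_adj]
        exact ⟨fun h => hwu (congrArg Subtype.val h).symm, Or.inl (Or.inr ⟨rfl, hvw⟩)⟩
      obtain ⟨x₀, hx1, hx2⟩ := hedge hGadj
      refine ⟨w, hwv, x₀, hvw, ?_, hx1, hx2⟩
      intro z hz
      by_contra hcon
      push_neg at hcon
      have hsub : ({z, u, w} : Finset V) ⊆ G.neighborFinset v := by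
        intro y hy
        simp only [Finset.mem_insert, Finset.mem_singleton] at hy
        rcases hy with rfl | rfl | rfl <;> rw [mem_neighborFinset] <;> assumption
      have hcard : ({z, u, w} : Finset V).card = 3 := by
        rw [Finset.card_insert_of_notMem (by simp [hcon.1, hcon.2]),
          Finset.card_insert_of_notMem (by simpa using hwu.symm), Finset.card_singleton]
      have := Finset.card_le_card hsub
      rw [hcard] at this
      exact absurd (this.trans hdeg) (by norm_num)
    · push_neg at hW
      obtain ⟨x₀, hx₀⟩ := hcov ⟨u, hadj.ne'⟩
      exact ⟨u, hadj.ne', x₀, hadj, fun z hz => Or.inl (hW z hz), hx₀, hx₀⟩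
  obtain ⟨w, hwv, x₀, hvw, hN, hux₀, hwx₀⟩ := key
  -- build decomposition of G on Option ι
  set T' := extendTree T x₀ with hT'
  set γ : Option ι → Set V := fun y => Option.rec ({v, u, w} : Set V)
      (fun x => Subtype.val '' β' x) y with hγ
  have hγnone : γ none = {v, u, w} := rfl
  have hγsome : ∀ x, γ (some x) = Subtype.val '' β' x := fun _ => rfl
  have hvnot : ∀ x, v ∉ γ (some x) := by
    rintro x ⟨⟨b, hb⟩, _, h⟩
    exact hb h
  have hmemsome : ∀ (x : ι) (a : V) (hav : a ≠ v), (a ∈ γ (some x) ↔ ⟨a, hav⟩ ∈ β' x) := by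
    intro x a hav
    constructor
    · rintro ⟨b, hb, rfl⟩
      convert hb using 2
    · intro h
      exact ⟨⟨a, hav⟩, h, rfl⟩
  have hdecG : IsTreeDecomposition G T' γ := by
    refine ⟨extendTree_isTree hT, ?_, ?_, ?_⟩
    · intro a
      by_cases hav : a = v
      · exact ⟨none, by simp [hγnone, hav]⟩
      · obtain ⟨x, hx⟩ := hcov ⟨a, hav⟩
        exact ⟨some x, (hmemsome x a hav).mpr hx⟩
    · intro a b hab
      by_cases hav : a = v
      · rcases hN b (hav ▸ hab) with hb | hb <;>
          exact ⟨none, by simp [hγnone, hav], by simp [hγnone, hb]⟩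
      · by_cases hbv : b = v
        · rcases hN a (hbv ▸ hab.symm) with ha | ha <;>
            exact ⟨none, by simp [hγnone, ha], by simp [hγnone, hbv]⟩
        · have hGadj : (contractInto G v u).Adj ⟨a, hav⟩ ⟨b, hbv⟩ := by
            rw [contractInto_adj]
            exact ⟨fun h => hab.ne (congrArg Subtype.val h), Or.inl (Or.inl hab)⟩
          obtain ⟨x, h1, h2⟩ := hedge hGadj
          exact ⟨some x, (hmemsome x a hav).mpr h1, (hmemsome x b hbv).mpr h2⟩
    · intro a
      by_cases hav : a = v
      · have hset : {y : Option ι | a ∈ γ y} = {none} := by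
          ext y
          cases y with
          | none => simp [hγnone, hav]
          | some x =>
            simp only [Set.mem_setOf_eq, Set.mem_singleton_iff, hav]
            exact iff_of_false (hvnot x) (by simp)
        rw [hset]
        exact induce_connected_of_subsingleton _ _ ⟨none, rfl⟩
          (fun p hp q hq => hp.trans hq.symm)
      · by_cases hauw : a = u ∨ a = w
        · have hax₀ : (⟨a, hav⟩ : {x : V // x ≠ v}) ∈ β' x₀ := by
            rcases hauw with rfl | rfl
            · exact hux₀
            · exact hwx₀
          have hset : {y : Option ι | a ∈ γ y} =
              (some '' {x : ι | (⟨a, hav⟩ : {x : V // x ≠ v}) ∈ β' x}) ∪ {none, some x₀} := by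
            ext y
            cases y with
            | none =>
              simp only [Set.mem_setOf_eq, hγnone, Set.mem_union, Set.mem_insert_iff,
                Set.mem_singleton_iff, Set.mem_image]
              refine iff_of_true ?_ (Or.inr (Or.inl trivial))
              rcases hauw with h | h <;> simp [hγnone, h]
            | some x =>
              simp only [Set.mem_setOf_eq, Set.mem_union, Set.mem_image, Set.mem_insert_iff,
                Set.mem_singleton_iff, hmemsome x a hav]
              constructor
              · intro h; exact Or.inl ⟨x, h, rfl⟩
              · rintro (⟨x', hx', he⟩ | (he | he))
                · obtain rfl : x' = x := Option.some_injective _ he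
                  exact hx'
                · exact absurd he (by simp)
                · exact (Option.some_injective _ he).symm ▸ hax₀
          rw [hset]
          refine induce_connected_union ?_ ?_ ⟨some x₀, ⟨x₀, hax₀, rfl⟩, by simp⟩
          · exact induce_connected_image (T' := T') (f := some) (fun p q h => h) _ (hconn ⟨a, hav⟩)
          · exact induce_connected_pair (show T'.Adj none (some x₀) from rfl)
        · push_neg at hauw
          have hset : {y : Option ι | a ∈ γ y} =
              some '' {x : ι | (⟨a, hav⟩ : {x : V // x ≠ v}) ∈ β' x} := by
            ext y
            cases y with
            | none => simp [hγnone, hav, hauw.1, hauw.2]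
            | some x =>
              simp only [Set.mem_setOf_eq, Set.mem_image, hmemsome x a hav]
              constructor
              · intro h; exact ⟨x, h, rfl⟩
              · rintro ⟨x', hx', he⟩
                obtain rfl : x' = x := Option.some_injective _ he
                exact hx'
          rw [hset]
          exact induce_connected_image (T' := T') (f := some) (fun p q h => h) _ (hconn ⟨a, hav⟩)
  refine le_trans (treewidth_le_of_decomp hdecG) ?_
  refine ciSup_le fun y => ?_
  cases y with
  | none =>
    refine le_trans ?_ (le_max_right _ 2)
    have h3 : ({v, u, w} : Set V).ncard ≤ 3 := by
      refine le_trans (Set.ncard_insert_le _ _) ?_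
      refine Nat.succ_le_succ ?_
      refine le_trans (Set.ncard_insert_le _ _) ?_
      simp
    calc (γ none).ncard - 1 ≤ 3 - 1 := Nat.sub_le_sub_right h3 1
      _ ≤ 2 := by norm_num
  | some x =>
    refine le_trans ?_ (le_max_left _ 2)
    have hw' : decompWidth β' = treewidth (contractInto G v u) := hw
    rw [← hw']
    have : (γ (some x)).ncard = (β' x).ncard :=
      Set.ncard_image_of_injective _ Subtype.val_injective
    rw [this]
    exact le_ciSup (bddAbove_ncard_sub β') x

end Dir2
/-- If `G` has treewidth at least `3` and `v` is a vertex of degree at most `2` having a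
neighbour `u`, then contracting `v` into `u` does not change the treewidth. -/
theorem treewidth_contract_low_degree {V : Type} [Fintype V] [DecidableEq V]
    (G : SimpleGraph V) [DecidableRel G.Adj]
    (htw : 3 ≤ treewidth G) (v u : V) (hadj : G.Adj v u) (hdeg : G.degree v ≤ 2) :
    treewidth (contractInto G v u) = treewidth G := by
  have h1 := dir1 G v u hadj
  have h2 := dir2 G v u hadj hdeg
  rcases max_cases (treewidth (contractInto G v u)) 2 with ⟨he, _⟩ | ⟨he, _⟩ <;>
    rw [he] at h2 <;> omega
end

section
/- Let d ≥ 3, let G be a finite simple graph with tw(G) ≥ d, and let v be a vertex of G. Let G' be the graph obtained from G by adding d + 1 new vertices forming a clique on d + 1 vertices with exactly one edge {x, y} removed, together with the two edges {v, x} and {v, y}. Then tw(G') = tw(G), and the degree of v in G' is its degree in G plus 2. -/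
open SimpleGraph

/-- The graph obtained from `G` by adding a gadget at the vertex `v`: `d + 1` new vertices
forming a clique on `d + 1` vertices with the single edge `{x, y}` removed (here `x` and
`y` are the new vertices with indices `0` and `1`), together with the two edges `{v, x}`
and `{v, y}`. -/
def addGadget {V : Type} (G : SimpleGraph V) (v : V) (d : ℕ) :
    SimpleGraph (V ⊕ Fin (d + 1)) :=
  SimpleGraph.fromRel (fun a b =>
    match a, b with
    | Sum.inl x, Sum.inl y => G.Adj x y
    | Sum.inr i, Sum.inr j => ¬(i = 0 ∧ j = 1) ∧ ¬(i = 1 ∧ j = 0)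
    | Sum.inl x, Sum.inr i => x = v ∧ (i = 0 ∨ i = 1)
    | Sum.inr i, Sum.inl x => x = v ∧ (i = 0 ∨ i = 1))


section TWHelpers

open SimpleGraph Walk


lemma walk_pull {ι : Type} {T : SimpleGraph ι} {T' : SimpleGraph (ι ⊕ Bool)}
    (hll : ∀ s t, T'.Adj (Sum.inl s) (Sum.inl t) → T.Adj s t) :
    ∀ {a b : ι ⊕ Bool} (p : T'.Walk a b)
      (_ : ∀ x ∈ p.support, ∃ t, x = Sum.inl t) (a' b' : ι)
      (_ : a = Sum.inl a') (_ : b = Sum.inl b'),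
      ∃ q : T.Walk a' b', p.support = q.support.map Sum.inl ∧
        p.edges = q.edges.map (Sym2.map Sum.inl) := by
  intro a b p
  induction p with
  | nil =>
    rintro hs a' b' rfl hb
    obtain rfl : a' = b' := Sum.inl_injective hb
    exact ⟨Walk.nil, by simp, by simp⟩
  | @cons a m b h p ih =>
    rintro hs a' b' rfl rfl
    obtain ⟨m', rfl⟩ := hs m (by simp)
    obtain ⟨q, hq1, hq2⟩ := ih (fun x hx => hs x (by simp [hx])) m' b' rfl rfl
    exact ⟨Walk.cons (hll _ _ h) q, by simp [hq1], by simp [hq2]⟩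

lemma induce_pair_connected {α : Type} {G : SimpleGraph α} {p q : α} (h : G.Adj p q) :
    (G.induce {p, q}).Connected := by
  rw [connected_iff]
  refine ⟨?_, ⟨⟨p, by simp⟩⟩⟩
  have hadj : (G.induce {p, q}).Adj ⟨p, by simp⟩ ⟨q, by simp⟩ := by
    simp [h]
  rintro ⟨a, ha⟩ ⟨b, hb⟩
  rcases ha with rfl | ha <;> rcases hb with rfl | hb
  · rfl
  · rw [Set.mem_singleton_iff] at hb; subst hb; exact hadj.reachable
  · rw [Set.mem_singleton_iff] at ha; subst ha; exact hadj.symm.reachable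
  · rw [Set.mem_singleton_iff] at ha hb; subst ha; subst hb; rfl

lemma induce_singleton_connected {α : Type} (G : SimpleGraph α) (p : α) :
    (G.induce {p}).Connected := by
  rw [connected_iff]
  refine ⟨?_, ⟨⟨p, rfl⟩⟩⟩
  rintro ⟨a, ha⟩ ⟨b, hb⟩
  rw [Set.mem_singleton_iff] at ha hb; subst ha; subst hb; rfl
lemma cycle_two_nbrs {α : Type} {G : SimpleGraph α} {u w : α} (p : G.Walk u u) (hp : p.IsCycle)
    (hw : w ∈ p.support) :
    ∃ b c, b ≠ c ∧ G.Adj w b ∧ G.Adj w c ∧ b ∈ p.support ∧ c ∈ p.support := by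
  classical
  have hqc : (p.rotate w hw).IsCycle := hp.rotate hw
  set q := p.rotate w hw with hqdef
  have hmem : ∀ x, x ∈ q.support → x ∈ p.support := by
    intro x hx
    rw [q.support_eq_cons] at hx
    rcases List.mem_cons.mp hx with rfl | hx
    · exact hw
    · have hr := p.support_rotate w hw
      rw [p.support_eq_cons]
      exact List.mem_cons.mpr (Or.inr (hr.mem_iff.mp hx))
  have hnn : ¬ q.Nil := by
    intro h
    exact hqc.ne_nil h.eq_nil
  obtain ⟨b, hab, r, hq⟩ := Walk.not_nil_iff.mp hnn
  have hnn2 : ¬ r.reverse.Nil := Walk.not_nil_of_ne hab.ne'.symm  -- w ≠ b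
  obtain ⟨c, hac, r2, hr2⟩ := Walk.not_nil_iff.mp hnn2
  have hcr : s(w, c) ∈ r.edges := by
    have : s(w, c) ∈ r.reverse.edges := by rw [hr2]; simp
    rwa [Walk.edges_reverse, List.mem_reverse] at this
  have hnodup : q.edges.Nodup := hqc.edges_nodup
  rw [hq] at hnodup
  simp only [Walk.edges_cons, List.nodup_cons] at hnodup
  have hbc : b ≠ c := by
    rintro rfl
    exact hnodup.1 hcr
  refine ⟨b, c, hbc, hab, hac, hmem b ?_, hmem c ?_⟩
  · rw [hq]; simp
  · rw [hq]
    simp only [Walk.support_cons, List.mem_cons]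
    right
    have : c ∈ r.reverse.support := by rw [hr2]; simp
    rwa [Walk.support_reverse, List.mem_reverse] at this

open SimpleGraph

lemma twSet_nonempty {V : Type} [Nonempty V] (G : SimpleGraph V) :
    { k : ℕ | ∃ (ι : Type) (T : SimpleGraph ι) (β : ι → Set V),
      IsTreeDecomposition G T β ∧ decompWidth β = k }.Nonempty := by
  refine ⟨decompWidth (fun _ : Unit => (Set.univ : Set V)), Unit, ⊥,
    fun _ => Set.univ, ⟨⟨?_, ?_⟩, ?_, ?_, ?_⟩, rfl⟩
  · rw [connected_iff]
    exact ⟨fun a b => by rw [Subsingleton.elim a b], ⟨()⟩⟩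
  · intro z c hc
    cases c with
    | nil => exact hc.ne_nil rfl
    | cons h _ => exact h.elim
  · exact fun v => ⟨(), trivial⟩
  · exact fun u v _ => ⟨(), trivial, trivial⟩
  · intro w
    rw [connected_iff]
    exact ⟨fun a b => by rw [Subsingleton.elim a b], ⟨⟨(), trivial⟩⟩⟩

lemma decompWidth_bddAbove {V ι : Type} [Fintype V] (β : ι → Set V) :
    BddAbove (Set.range fun x : ι => ((β x).ncard - 1)) := by
  refine ⟨Fintype.card V, ?_⟩
  rintro k ⟨x, rfl⟩
  calc (β x).ncard - 1 ≤ (β x).ncard := Nat.sub_le _ _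
    _ ≤ (Set.univ : Set V).ncard := Set.ncard_le_ncard (Set.subset_univ _) Set.finite_univ
    _ = Fintype.card V := by rw [Set.ncard_univ, Nat.card_eq_fintype_card]

lemma tw_le {V : Type} [Fintype V] (G : SimpleGraph V) (v : V) (d : ℕ) :
    treewidth G ≤ treewidth (addGadget G v d) := by
  have hne : Nonempty V := ⟨v⟩
  obtain ⟨ι, T, β, hdec, hw⟩ := Nat.sInf_mem (twSet_nonempty (addGadget G v d))
  have hι : Nonempty ι := ⟨(hdec.2.1 (Sum.inl v)).choose⟩
  set β₀ : ι → Set V := fun x => Sum.inl ⁻¹' β x with hβ₀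
  have hdec₀ : IsTreeDecomposition G T β₀ := by
    refine ⟨hdec.1, ?_, ?_, ?_⟩
    · intro u
      obtain ⟨x, hx⟩ := hdec.2.1 (Sum.inl u)
      exact ⟨x, hx⟩
    · intro a b hab
      have : (addGadget G v d).Adj (Sum.inl a) (Sum.inl b) := by
        rw [addGadget, fromRel_adj]
        exact ⟨by simp [hab.ne], Or.inl hab⟩
      obtain ⟨x, hx1, hx2⟩ := hdec.2.2.1 this
      exact ⟨x, hx1, hx2⟩
    · intro u
      exact hdec.2.2.2 (Sum.inl u)
  have hle : decompWidth β₀ ≤ decompWidth β := by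
    apply ciSup_mono (decompWidth_bddAbove β)
    intro x
    apply Nat.sub_le_sub_right
    calc (β₀ x).ncard = (Sum.inl '' (β₀ x)).ncard :=
          (Set.ncard_image_of_injective _ Sum.inl_injective).symm
      _ ≤ (β x).ncard :=
          Set.ncard_le_ncard (Set.image_preimage_subset _ _) (β x).toFinite
  calc treewidth G ≤ decompWidth β₀ := Nat.sInf_le ⟨ι, T, β₀, hdec₀, rfl⟩
    _ ≤ decompWidth β := hle
    _ = treewidth (addGadget G v d) := hw

lemma tw_ge {V : Type} [Fintype V] (G : SimpleGraph V) (d : ℕ) (hd : 3 ≤ d)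
    (htw : d ≤ treewidth G) (v : V) :
    treewidth (addGadget G v d) ≤ treewidth G := by
  classical
  have hne : Nonempty V := ⟨v⟩
  obtain ⟨ι, T, β, hdec, hwβ⟩ := Nat.sInf_mem (twSet_nonempty G)
  obtain ⟨x₀, hx₀⟩ := hdec.2.1 v
  set T' : SimpleGraph (ι ⊕ Bool) := SimpleGraph.fromRel (fun a b =>
    match a, b with
    | Sum.inl s, Sum.inl t => T.Adj s t
    | Sum.inl s, Sum.inr i => s = x₀ ∧ i = false
    | Sum.inr i, Sum.inr j => i = false ∧ j = true
    | Sum.inr _, Sum.inl _ => False) with hT'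
  set β' : ι ⊕ Bool → Set (V ⊕ Fin (d+1)) := Sum.elim (fun t => Sum.inl '' β t)
    (fun i => match i with
      | false => {Sum.inl v, Sum.inr 0, Sum.inr 1}
      | true => Set.range Sum.inr) with hβ'
  -- adjacency characterizations
  have hll : ∀ s t : ι, T'.Adj (Sum.inl s) (Sum.inl t) ↔ T.Adj s t := by
    intro s t
    rw [hT', fromRel_adj]
    constructor
    · rintro ⟨-, h | h⟩
      · exact h
      · exact h.symm
    · intro h
      exact ⟨by simp [h.ne], Or.inl h⟩
  have h0x : T'.Adj (Sum.inr false) (Sum.inl x₀) := by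
    rw [hT', fromRel_adj]
    exact ⟨by simp, Or.inr ⟨rfl, rfl⟩⟩
  have h01 : T'.Adj (Sum.inr false) (Sum.inr true) := by
    rw [hT', fromRel_adj]
    exact ⟨by simp, Or.inl ⟨rfl, rfl⟩⟩
  have hnbr_t : ∀ c, T'.Adj (Sum.inr true) c → c = Sum.inr false := by
    intro c h
    rw [hT', fromRel_adj] at h
    obtain ⟨hne2, h | h⟩ := h
    · cases c with
      | inl t => exact h.elim
      | inr i => exact absurd h.1 (by simp)
    · cases c with
      | inl t => exact absurd h.2 (by simp)
      | inr i => exact congrArg Sum.inr h.1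
  have hnbr_f : ∀ c, T'.Adj (Sum.inr false) c → c = Sum.inl x₀ ∨ c = Sum.inr true := by
    intro c h
    rw [hT', fromRel_adj] at h
    obtain ⟨hne2, h | h⟩ := h
    · cases c with
      | inl t => exact h.elim
      | inr i => exact Or.inr (congrArg Sum.inr h.2)
    · cases c with
      | inl t => exact Or.inl (congrArg Sum.inl h.1)
      | inr i => exact absurd h.2 (by simp)
  let f : T →g T' := ⟨Sum.inl, fun h => (hll _ _).mpr h⟩
  -- T' is a tree
  have htree : T'.IsTree := by
    constructor
    · rw [connected_iff]
      refine ⟨?_, ⟨Sum.inl x₀⟩⟩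
      have hbase : ∀ a, T'.Reachable a (Sum.inl x₀) := by
        intro a
        match a with
        | Sum.inl t => exact Reachable.map f (hdec.1.isConnected.preconnected t x₀)
        | Sum.inr false => exact h0x.reachable
        | Sum.inr true => exact ((hnbr_t _ (Adj.symm h01)).symm ▸ h01.symm.reachable).trans h0x.reachable
      exact fun a b => (hbase a).trans (hbase b).symm
    · intro z c hc
      have h1 : Sum.inr true ∉ c.support := by
        intro hmem
        obtain ⟨b, cc, hbc, hb, hcc, -, -⟩ := cycle_two_nbrs c hc hmem
        rw [hnbr_t _ hb, hnbr_t _ hcc] at hbc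
        exact hbc rfl
      have h0 : Sum.inr false ∉ c.support := by
        intro hmem
        obtain ⟨b, cc, hbc, hb, hcc, hbs, hcs⟩ := cycle_two_nbrs c hc hmem
        rcases hnbr_f _ hb with rfl | rfl
        · rcases hnbr_f _ hcc with rfl | rfl
          · exact hbc rfl
          · exact h1 hcs
        · exact h1 hbs
      have hrange : ∀ x ∈ c.support, ∃ t, x = Sum.inl t := by
        intro x hx
        match x with
        | Sum.inl t => exact ⟨t, rfl⟩
        | Sum.inr false => exact absurd hx h0
        | Sum.inr true => exact absurd hx h1
      obtain ⟨z', rfl⟩ := hrange z c.start_mem_support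
      obtain ⟨q, hq1, hq2⟩ := walk_pull (fun s t h => (hll s t).mp h) c hrange z' z' rfl rfl
      refine hdec.1.IsAcyclic q ⟨⟨⟨?_⟩, ?_⟩, ?_⟩
      · have := hc.edges_nodup
        rw [hq2] at this
        exact this.of_map _
      · intro hq
        apply hc.ne_nil
        rw [hq] at hq1
        simp only [Walk.support_nil, List.map_cons, List.map_nil] at hq1
        cases c with
        | nil => rfl
        | cons h p => simp at hq1
      · have := hc.support_nodup
        rw [hq1, ← List.map_tail] at this
        exact this.of_map _
  obtain ⟨xu0, hxu0⟩ := hdec.2.1 v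
  have hdec' : IsTreeDecomposition (addGadget G v d) T' β' := by
    refine ⟨htree, ?_, ?_, ?_⟩
    · intro w
      match w with
      | Sum.inl u =>
        obtain ⟨x, hx⟩ := hdec.2.1 u
        exact ⟨Sum.inl x, ⟨u, hx, rfl⟩⟩
      | Sum.inr i => exact ⟨Sum.inr true, ⟨i, rfl⟩⟩
    · intro a b hab
      rw [addGadget, fromRel_adj] at hab
      obtain ⟨hne2, hr⟩ := hab
      match a, b with
      | Sum.inl a, Sum.inl b =>
        have hadj : G.Adj a b := by
          rcases hr with h | h
          · exact h
          · exact h.symm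
        obtain ⟨x, hx1, hx2⟩ := hdec.2.2.1 hadj
        exact ⟨Sum.inl x, ⟨a, hx1, rfl⟩, ⟨b, hx2, rfl⟩⟩
      | Sum.inl a, Sum.inr i =>
        have h : a = v ∧ (i = 0 ∨ i = 1) := by rcases hr with h | h <;> exact h
        refine ⟨Sum.inr false, ?_, ?_⟩
        · show Sum.inl a ∈ ({Sum.inl v, Sum.inr 0, Sum.inr 1} : Set (V ⊕ Fin (d+1)))
          simp [h.1]
        · show Sum.inr i ∈ ({Sum.inl v, Sum.inr 0, Sum.inr 1} : Set (V ⊕ Fin (d+1)))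
          rcases h.2 with rfl | rfl <;> simp
      | Sum.inr i, Sum.inl a =>
        have h : a = v ∧ (i = 0 ∨ i = 1) := by rcases hr with h | h <;> exact h
        refine ⟨Sum.inr false, ?_, ?_⟩
        · show Sum.inr i ∈ ({Sum.inl v, Sum.inr 0, Sum.inr 1} : Set (V ⊕ Fin (d+1)))
          rcases h.2 with rfl | rfl <;> simp
        · show Sum.inl a ∈ ({Sum.inl v, Sum.inr 0, Sum.inr 1} : Set (V ⊕ Fin (d+1)))
          simp [h.1]
      | Sum.inr i, Sum.inr j => exact ⟨Sum.inr true, ⟨i, rfl⟩, ⟨j, rfl⟩⟩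
    · intro w
      match w with
      | Sum.inr i =>
        by_cases hi : i = 0 ∨ i = 1
        · have hS : {x : ι ⊕ Bool | Sum.inr i ∈ β' x} =
              {Sum.inr false, Sum.inr true} := by
            ext x
            match x with
            | Sum.inl t => simp [hβ']
            | Sum.inr false =>
              simp only [hβ', Sum.elim_inr, Set.mem_setOf_eq]
              rcases hi with rfl | rfl <;> simp
            | Sum.inr true => simp [hβ']
          rw [hS]
          exact induce_pair_connected h01
        · have hS : {x : ι ⊕ Bool | Sum.inr i ∈ β' x} = {Sum.inr true} := by
            ext x
            match x with
            | Sum.inl t => simp [hβ']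
            | Sum.inr false =>
              simp only [hβ', Sum.elim_inr, Set.mem_setOf_eq]
              push_neg at hi
              simp [Set.mem_insert_iff, hi.1, hi.2]
            | Sum.inr true => simp [hβ']
          rw [hS]
          exact induce_singleton_connected _ _
      | Sum.inl u =>
        have hmeml : ∀ t : ι, (Sum.inl u ∈ β' (Sum.inl t)) ↔ u ∈ β t := by
          intro t
          simp [hβ']
        have hmemf : Sum.inl u ∈ β' (Sum.inr false) ↔ u = v := by simp [hβ']
        have hmemt : ¬ (Sum.inl u ∈ β' (Sum.inr true)) := by simp [hβ']
        obtain ⟨xu, hxu⟩ := hdec.2.1 u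
        rw [connected_iff]
        refine ⟨?_, ⟨⟨Sum.inl xu, (hmeml xu).mpr hxu⟩⟩⟩
        let g : (T.induce {t : ι | u ∈ β t}) →g
            (T'.induce {x : ι ⊕ Bool | Sum.inl u ∈ β' x}) :=
          ⟨fun t => ⟨Sum.inl t.1, (hmeml t.1).mpr t.2⟩, fun hab => (hll _ _).mpr hab⟩
        have hreach : ∀ (s t : ι) (hs : u ∈ β s) (ht : u ∈ β t),
            (T'.induce {x : ι ⊕ Bool | Sum.inl u ∈ β' x}).Reachable
              ⟨Sum.inl s, (hmeml s).mpr hs⟩ ⟨Sum.inl t, (hmeml t).mpr ht⟩ := by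
          intro s t hs ht
          exact Reachable.map g ((hdec.2.2.2 u).preconnected ⟨s, hs⟩ ⟨t, ht⟩)
        have key : ∀ (a : ι ⊕ Bool) (ha : Sum.inl u ∈ β' a),
            (T'.induce {x : ι ⊕ Bool | Sum.inl u ∈ β' x}).Reachable
              ⟨a, ha⟩ ⟨Sum.inl xu, (hmeml xu).mpr hxu⟩ := by
          intro a ha
          match a with
          | Sum.inl t => exact hreach t xu ((hmeml t).mp ha) hxu
          | Sum.inr true => exact absurd ha hmemt
          | Sum.inr false =>
            have huv : u = v := hmemf.mp ha
            have hx0mem : Sum.inl u ∈ β' (Sum.inl x₀) := (hmeml x₀).mpr (huv ▸ hx₀)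
            have hadj : (T'.induce {x : ι ⊕ Bool | Sum.inl u ∈ β' x}).Adj
                ⟨Sum.inr false, ha⟩ ⟨Sum.inl x₀, hx0mem⟩ := h0x
            exact hadj.reachable.trans (hreach x₀ xu (huv ▸ hx₀) hxu)
        rintro ⟨a, ha⟩ ⟨b, hb⟩
        exact (key a ha).trans (key b hb).symm
  have hwβ' : decompWidth β = treewidth G := hwβ
  have hwid : decompWidth β' ≤ treewidth G := by
    have hιne : Nonempty (ι ⊕ Bool) := ⟨Sum.inl x₀⟩
    rw [decompWidth]
    apply ciSup_le
    intro x
    match x with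
    | Sum.inl t =>
      have he : β' (Sum.inl t) = Sum.inl '' β t := rfl
      rw [he, Set.ncard_image_of_injective _ Sum.inl_injective]
      calc (β t).ncard - 1 ≤ decompWidth β := le_ciSup (decompWidth_bddAbove β) t
        _ = treewidth G := hwβ'
    | Sum.inr false =>
      have he : β' (Sum.inr false) = {Sum.inl v, Sum.inr 0, Sum.inr 1} := rfl
      have hb : (β' (Sum.inr false)).ncard ≤ 3 := by
        rw [he]
        calc ({Sum.inl v, Sum.inr 0, Sum.inr 1} : Set (V ⊕ Fin (d+1))).ncard
            ≤ ({Sum.inr 0, Sum.inr 1} : Set (V ⊕ Fin (d+1))).ncard + 1 :=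
              Set.ncard_insert_le _ _
          _ ≤ (({Sum.inr 1} : Set (V ⊕ Fin (d+1))).ncard + 1) + 1 := by
              exact Nat.add_le_add_right (Set.ncard_insert_le _ _) 1
          _ = 3 := by rw [Set.ncard_singleton]
      have : (β' (Sum.inr false)).ncard - 1 ≤ d := by omega
      exact le_trans this htw
    | Sum.inr true =>
      have he : β' (Sum.inr true) = Set.range (Sum.inr : Fin (d+1) → V ⊕ Fin (d+1)) := rfl
      rw [he, ← Set.image_univ, Set.ncard_image_of_injective _ Sum.inr_injective,
        Set.ncard_univ, Nat.card_eq_fintype_card, Fintype.card_fin]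
      simp only [Nat.add_sub_cancel]
      exact htw
  exact le_trans (Nat.sInf_le ⟨ι ⊕ Bool, T', β', hdec', rfl⟩) hwid

end TWHelpers

/-- For `d ≥ 3` and a finite graph `G` with `tw(G) ≥ d`, attaching to a vertex `v` a clique
on `d + 1` new vertices minus one edge `{x, y}` together with the edges `{v, x}` and
`{v, y}` does not change the treewidth, while it increases the degree of `v` by `2`. -/
theorem treewidth_addGadget {V : Type} [Fintype V] (G : SimpleGraph V)
    (d : ℕ) (hd : 3 ≤ d) (htw : d ≤ treewidth G) (v : V) :
    treewidth (addGadget G v d) = treewidth G ∧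
    ((addGadget G v d).neighborSet (Sum.inl v)).ncard = (G.neighborSet v).ncard + 2 := by
  constructor
  · exact le_antisymm (tw_ge G d hd htw v) (tw_le G v d)
  · have h01 : (0 : Fin (d+1)) ≠ 1 := by
      intro h
      have h2 := congrArg Fin.val h
      rw [Fin.val_one'] at h2
      rw [Nat.mod_eq_of_lt (by omega)] at h2
      exact one_ne_zero h2.symm
    have hN : (addGadget G v d).neighborSet (Sum.inl v) =
        (Sum.inl '' G.neighborSet v) ∪ {Sum.inr 0, Sum.inr 1} := by
      ext a
      rw [mem_neighborSet, Set.mem_union, addGadget, fromRel_adj]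
      match a with
      | Sum.inl u =>
        constructor
        · rintro ⟨hne, h | h⟩
          · exact Or.inl ⟨u, h, rfl⟩
          · exact Or.inl ⟨u, h.symm, rfl⟩
        · rintro (⟨w, hw, hwe⟩ | h)
          · obtain rfl : w = u := Sum.inl_injective hwe
            exact ⟨by simp [Adj.ne hw], Or.inl hw⟩
          · simp at h
      | Sum.inr i =>
        constructor
        · rintro ⟨hne, h | h⟩ <;>
          · rcases h.2 with rfl | rfl
            · exact Or.inr (by simp)
            · exact Or.inr (by simp)
        · rintro (⟨w, hw, hwe⟩ | h)
          · simp at hwe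
          · have hi : i = 0 ∨ i = 1 := by simpa using h
            exact ⟨by simp, Or.inl ⟨rfl, hi⟩⟩
    have hdisj : Disjoint (Sum.inl '' G.neighborSet v)
        ({Sum.inr 0, Sum.inr 1} : Set (V ⊕ Fin (d+1))) := by
      rw [Set.disjoint_left]
      rintro a ⟨w, hw, rfl⟩ h
      simp at h
    rw [hN, Set.ncard_union_eq hdisj (Set.toFinite _) (Set.toFinite _),
      Set.ncard_image_of_injective _ Sum.inl_injective,
      Set.ncard_pair (fun h => h01 (Sum.inr_injective h))]
end
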